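/- arXiv:1102.1952 — 5 statements merged into one kernel-verified Lean document; each statement's English description precedes it below -/
import Mathlib

section
/- For every k ≥ 0, λ₁(G_k) = T(|G_k|) = Σ_{i>k} c_i (1 − |G_k|/|G_i|); moreover σ(k)/2 < λ₁(G_k) < σ(k). -/
open scoped BigOperators Classical

/-- The bottom of the Dirichlet spectrum of `I - P` on a finite set `U`:
`λ₁(U) = inf { ((I-P)f, f)/‖f‖² : f ≠ 0, supp f ⊆ U }`. -/
noncomputable def lamOne {G : Type*} [Group G]
    (P : (G → ℝ) → G → ℝ) (U : Finset G) : ℝ :=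
  sInf {r : ℝ | ∃ f : G → ℝ, (∀ x ∉ U, f x = 0) ∧ f ≠ 0 ∧
    r = (∑' x : G, (f x - P f x) * f x) / ∑' x : G, (f x) ^ 2}

/-- Auxiliary quadratic form: `A(f,i) = ∑_{x,y ∈ U, y⁻¹x ∈ H i} f x f y / |H i|`. -/
noncomputable def auxA {G : Type*} [Group G] (H : ℕ → Subgroup G) (U : Finset G)
    (f : G → ℝ) (i : ℕ) : ℝ :=
  ∑ x ∈ U, ∑ y ∈ U, f x * f y *
    (if y⁻¹ * x ∈ H i then ((Nat.card (H i) : ℝ))⁻¹ else 0)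

set_option maxHeartbeats 1000000 in
/-- Proposition 6.3: `λ₁(G_k) = T(|G_k|) = ∑_{i>k} c_i (1 - |G_k|/|G_i|)` and
`σ(k)/2 < λ₁(G_k) < σ(k)`. -/
theorem stmt_14 {G : Type*} [Group G]
    (H : ℕ → Subgroup G) (hfin : ∀ k, (H k : Set G).Finite)
    (hlt : ∀ k, H k < H (k + 1)) (hunion : ∀ x : G, ∃ k, x ∈ H k)
    (c : ℕ → ℝ) (hc : ∀ k, 0 < c k) (hcsum : ∑' k : ℕ, c k = 1)
    (m : ℕ → G → ℝ)
    (hm : ∀ (k : ℕ) (x : G),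
      m k x = if x ∈ H k then ((Nat.card (H k) : ℝ))⁻¹ else 0)
    (μ : G → ℝ) (hμ : ∀ x : G, μ x = ∑' k : ℕ, c k * m k x)
    (σ : ℕ → ℝ) (hσ : ∀ k, σ k = ∑' i : ℕ, c (k + 1 + i))
    (P : (G → ℝ) → G → ℝ)
    (hP : ∀ (g : G → ℝ) (x : G), P g x = ∑' y : G, g y * μ (y⁻¹ * x))
    (T : ℝ → ℝ)
    (hT : ∀ u : ℝ, T u = 1 - ∑' k : ℕ, c k * min 1 (u / (Nat.card (H k) : ℝ))) :
    ∀ k : ℕ,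
      lamOne P (hfin k).toFinset = T (Nat.card (H k) : ℝ) ∧
      T (Nat.card (H k) : ℝ) =
        ∑' i : ℕ, c (k + 1 + i) *
          (1 - (Nat.card (H k) : ℝ) / (Nat.card (H (k + 1 + i)) : ℝ)) ∧
      σ k / 2 < lamOne P (hfin k).toFinset ∧
      lamOne P (hfin k).toFinset < σ k := by
  classical
  have hsumc : Summable c := by
    by_contra h
    rw [tsum_eq_zero_of_not_summable h] at hcsum
    norm_num at hcsum
  have hc0 : ∀ i, (0:ℝ) ≤ c i := fun i => (hc i).le
  have hFin : ∀ i, Finite (H i) := fun i => (hfin i).to_subtype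
  have hcard_pos : ∀ i, 0 < Nat.card (H i) := by
    intro i; haveI := hFin i; exact Nat.card_pos
  have hcardT : ∀ i, ((hfin i).toFinset).card = Nat.card (H i) := by
    intro i
    rw [← Set.ncard_eq_toFinset_card _ (hfin i), ← Nat.card_coe_set_eq]
    rfl
  have hmonoH : Monotone H := monotone_nat_of_le_succ fun i => (hlt i).le
  have hmono_card : ∀ {i j : ℕ}, i ≤ j → Nat.card (H i) ≤ Nat.card (H j) := by
    intro i j hij
    exact Nat.le_of_dvd (hcard_pos j) (Subgroup.card_dvd_of_le (hmonoH hij))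
  have hstep : ∀ i, 2 * Nat.card (H i) ≤ Nat.card (H (i+1)) := by
    intro i
    obtain ⟨d, hd⟩ := Subgroup.card_dvd_of_le (hlt i).le
    have hlt' : Nat.card (H i) < Nat.card (H (i+1)) := by
      have h1 : ((H i : Set G)).ncard < ((H (i+1) : Set G)).ncard :=
        Set.ncard_lt_ncard (SetLike.coe_ssubset_coe.mpr (hlt i)) (hfin (i+1))
      rwa [← Nat.card_coe_set_eq, ← Nat.card_coe_set_eq] at h1
    have hposk := hcard_pos i
    have hposk1 := hcard_pos (i+1)
    have h2 : 2 ≤ d := by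
      rcases d with _ | _ | d
      · simp at hd; omega
      · simp at hd; omega
      · omega
    calc 2 * Nat.card (H i) = Nat.card (H i) * 2 := by ring
      _ ≤ Nat.card (H i) * d := Nat.mul_le_mul_left _ h2
      _ = Nat.card (H (i+1)) := hd.symm
  have hNpos : ∀ i, (0:ℝ) < (Nat.card (H i) : ℝ) := fun i => by exact_mod_cast hcard_pos i
  have hNne : ∀ i, ((Nat.card (H i) : ℝ)) ≠ 0 := fun i => (hNpos i).ne'
  intro k
  set U := (hfin k).toFinset with hUdef
  have hU : ∀ x : G, x ∈ U ↔ x ∈ H k := fun x => (hfin k).mem_toFinset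
  -- min computations
  have hmin1 : ∀ i, i ≤ k →
      min 1 ((Nat.card (H k) : ℝ) / (Nat.card (H i) : ℝ)) = 1 := by
    intro i hik
    refine min_eq_left ((one_le_div (hNpos i)).mpr ?_)
    exact_mod_cast hmono_card hik
  have hdivle : ∀ i, k ≤ i → (Nat.card (H k) : ℝ) / (Nat.card (H i) : ℝ) ≤ 1 := by
    intro i hik
    rw [div_le_one (hNpos i)]
    exact_mod_cast hmono_card hik
  have hmin2 : ∀ i, k < i →
      min 1 ((Nat.card (H k) : ℝ) / (Nat.card (H i) : ℝ))
        = (Nat.card (H k) : ℝ) / (Nat.card (H i) : ℝ) :=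
    fun i hik => min_eq_right (hdivle i hik.le)
  have hmin0 : ∀ i, 0 ≤ min 1 ((Nat.card (H k) : ℝ) / (Nat.card (H i) : ℝ)) :=
    fun i => le_min zero_le_one (div_nonneg (hNpos k).le (hNpos i).le)
  have hsum_cmin : Summable fun i =>
      c i * min 1 ((Nat.card (H k) : ℝ) / (Nat.card (H i) : ℝ)) :=
    hsumc.of_nonneg_of_le (fun i => mul_nonneg (hc0 i) (hmin0 i))
      (fun i => mul_le_of_le_one_right (hc0 i) (min_le_left _ _))
  have hT' : ∑' i : ℕ, c i * min 1 ((Nat.card (H k) : ℝ) / (Nat.card (H i) : ℝ))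
      = 1 - T (Nat.card (H k) : ℝ) := by rw [hT]; ring
  -- counting lemma
  have hcount : ∀ i, i ≤ k → ∀ x, x ∈ U →
      ((U.filter (fun y => y⁻¹ * x ∈ H i)).card : ℝ) = (Nat.card (H i) : ℝ) := by
    intro i hik x hx
    have himg : U.filter (fun y => y⁻¹ * x ∈ H i)
        = (hfin i).toFinset.image (fun h => x * h⁻¹) := by
      ext y
      simp only [Finset.mem_filter, Finset.mem_image, Set.Finite.mem_toFinset, hUdef,
        SetLike.mem_coe]
      constructor
      · rintro ⟨hyU, hyx⟩
        exact ⟨y⁻¹ * x, hyx, by group⟩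
      · rintro ⟨h, hh, rfl⟩
        have hxk : x ∈ H k := (hU x).mp hx
        have hh' : (x * h⁻¹)⁻¹ * x = h := by group
        refine ⟨mul_mem hxk (inv_mem (hmonoH hik hh)), ?_⟩
        rw [hh']; exact hh
    have hinj : Function.Injective (fun h : G => x * h⁻¹) :=
      (mul_right_injective x).comp inv_injective
    rw [himg, Finset.card_image_of_injective _ hinj, hcardT i]
  have hinner1 : ∀ i, i ≤ k → ∀ x, x ∈ U →
      ∑ y ∈ U, (if y⁻¹ * x ∈ H i then ((Nat.card (H i) : ℝ))⁻¹ else 0) = 1 := by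
    intro i hik x hx
    rw [← Finset.sum_filter, Finset.sum_const, nsmul_eq_mul, hcount i hik x hx]
    exact mul_inv_cancel₀ (hNne i)
  have hinner2 : ∀ i, i ≤ k → ∀ y, y ∈ U →
      ∑ x ∈ U, (if y⁻¹ * x ∈ H i then ((Nat.card (H i) : ℝ))⁻¹ else 0) = 1 := by
    intro i hik y hy
    have hcongr : ∀ x ∈ U, (if y⁻¹ * x ∈ H i then ((Nat.card (H i) : ℝ))⁻¹ else 0)
        = (if x⁻¹ * y ∈ H i then ((Nat.card (H i) : ℝ))⁻¹ else 0) := by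
      intro x _
      have hiff : y⁻¹ * x ∈ H i ↔ x⁻¹ * y ∈ H i := by
        constructor
        · intro h; have := inv_mem h
          rwa [show (y⁻¹ * x)⁻¹ = x⁻¹ * y by group] at this
        · intro h; have := inv_mem h
          rwa [show (x⁻¹ * y)⁻¹ = y⁻¹ * x by group] at this
      by_cases h : y⁻¹ * x ∈ H i
      · rw [if_pos h, if_pos (hiff.mp h)]
      · rw [if_neg h, if_neg (fun hh => h (hiff.mpr hh))]
    rw [Finset.sum_congr rfl hcongr]
    exact hinner1 i hik y hy
  have hAdef : ∀ (f : G → ℝ) (i : ℕ), auxA H U f i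
      = ∑ x ∈ U, ∑ y ∈ U, f x * f y *
          (if y⁻¹ * x ∈ H i then ((Nat.card (H i) : ℝ))⁻¹ else 0) := fun f i => rfl
  -- the "averaging mass one" identity
  have hhalf : ∀ (f : G → ℝ) (i : ℕ), i ≤ k →
      ∑ x ∈ U, ∑ y ∈ U, (f x ^ 2 / 2 + f y ^ 2 / 2) *
          (if y⁻¹ * x ∈ H i then ((Nat.card (H i) : ℝ))⁻¹ else 0)
        = ∑ x ∈ U, f x ^ 2 := by
    intro f i hik
    have e0 : ∑ x ∈ U, ∑ y ∈ U, (f x ^ 2 / 2 + f y ^ 2 / 2) *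
          (if y⁻¹ * x ∈ H i then ((Nat.card (H i) : ℝ))⁻¹ else 0)
        = (∑ x ∈ U, ∑ y ∈ U, (f x ^ 2 / 2) *
            (if y⁻¹ * x ∈ H i then ((Nat.card (H i) : ℝ))⁻¹ else 0))
          + ∑ x ∈ U, ∑ y ∈ U, (f y ^ 2 / 2) *
            (if y⁻¹ * x ∈ H i then ((Nat.card (H i) : ℝ))⁻¹ else 0) := by
      rw [← Finset.sum_add_distrib]
      refine Finset.sum_congr rfl fun x _ => ?_
      rw [← Finset.sum_add_distrib]
      exact Finset.sum_congr rfl fun y _ => by ring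
    have e1 : ∑ x ∈ U, ∑ y ∈ U, (f x ^ 2 / 2) *
          (if y⁻¹ * x ∈ H i then ((Nat.card (H i) : ℝ))⁻¹ else 0)
        = (∑ x ∈ U, f x ^ 2) / 2 := by
      rw [Finset.sum_div]
      refine Finset.sum_congr rfl fun x hx => ?_
      rw [← Finset.mul_sum, hinner1 i hik x hx, mul_one]
    have e2 : ∑ x ∈ U, ∑ y ∈ U, (f y ^ 2 / 2) *
          (if y⁻¹ * x ∈ H i then ((Nat.card (H i) : ℝ))⁻¹ else 0)
        = (∑ x ∈ U, f x ^ 2) / 2 := by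
      rw [Finset.sum_comm, Finset.sum_div]
      refine Finset.sum_congr rfl fun y hy => ?_
      rw [← Finset.mul_sum, hinner2 i hik y hy, mul_one]
    rw [e0, e1, e2]; ring
  have hite0 : ∀ (i : ℕ) (x y : G),
      0 ≤ (if y⁻¹ * x ∈ H i then ((Nat.card (H i) : ℝ))⁻¹ else 0) := by
    intro i x y
    split
    · exact inv_nonneg.mpr (hNpos i).le
    · exact le_rfl
  have hA_le : ∀ (f : G → ℝ) (i : ℕ), i ≤ k → auxA H U f i ≤ ∑ x ∈ U, f x ^ 2 := by
    intro f i hik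
    rw [hAdef, ← hhalf f i hik]
    refine Finset.sum_le_sum fun x _ => Finset.sum_le_sum fun y _ => ?_
    refine mul_le_mul_of_nonneg_right ?_ (hite0 i x y)
    nlinarith [sq_nonneg (f x - f y)]
  have hA_ge : ∀ (f : G → ℝ) (i : ℕ), i ≤ k → -(∑ x ∈ U, f x ^ 2) ≤ auxA H U f i := by
    intro f i hik
    rw [hAdef, ← hhalf f i hik]
    have : -(∑ x ∈ U, ∑ y ∈ U, (f x ^ 2 / 2 + f y ^ 2 / 2) *
          (if y⁻¹ * x ∈ H i then ((Nat.card (H i) : ℝ))⁻¹ else 0))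
        = ∑ x ∈ U, ∑ y ∈ U, (-(f x ^ 2 / 2 + f y ^ 2 / 2)) *
          (if y⁻¹ * x ∈ H i then ((Nat.card (H i) : ℝ))⁻¹ else 0) := by
      rw [← Finset.sum_neg_distrib]
      refine Finset.sum_congr rfl fun x _ => ?_
      rw [← Finset.sum_neg_distrib]
      exact Finset.sum_congr rfl fun y _ => by ring
    rw [this]
    refine Finset.sum_le_sum fun x _ => Finset.sum_le_sum fun y _ => ?_
    refine mul_le_mul_of_nonneg_right ?_ (hite0 i x y)
    nlinarith [sq_nonneg (f x + f y)]
  have hA_gt : ∀ (f : G → ℝ) (i : ℕ), k < i →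
      auxA H U f i = (∑ x ∈ U, f x) ^ 2 * ((Nat.card (H i) : ℝ))⁻¹ := by
    intro f i hik
    have hcond : ∀ x ∈ U, ∀ y ∈ U, y⁻¹ * x ∈ H i := fun x hx y hy =>
      mul_mem (inv_mem (hmonoH hik.le ((hU y).mp hy))) (hmonoH hik.le ((hU x).mp hx))
    have e1 : auxA H U f i = ∑ x ∈ U, ∑ y ∈ U, f x * f y * ((Nat.card (H i) : ℝ))⁻¹ := by
      rw [hAdef]
      exact Finset.sum_congr rfl fun x hx => Finset.sum_congr rfl fun y hy => by
        rw [if_pos (hcond x hx y hy)]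
    have e2 : (∑ x ∈ U, f x) * (∑ y ∈ U, f y) * ((Nat.card (H i) : ℝ))⁻¹
        = ∑ x ∈ U, ∑ y ∈ U, f x * f y * ((Nat.card (H i) : ℝ))⁻¹ := by
      rw [Finset.sum_mul_sum, Finset.sum_mul]
      exact Finset.sum_congr rfl fun x _ => Finset.sum_mul _ _ _
    rw [e1, ← e2]; ring
  have hB_nonneg : ∀ f : G → ℝ, (0:ℝ) ≤ ∑ x ∈ U, f x ^ 2 :=
    fun f => Finset.sum_nonneg fun x _ => sq_nonneg _
  have hCS : ∀ f : G → ℝ, (∑ x ∈ U, f x) ^ 2 ≤ (Nat.card (H k) : ℝ) * ∑ x ∈ U, f x ^ 2 := by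
    intro f
    have h := Finset.sum_mul_sq_le_sq_mul_sq U f (fun _ => (1:ℝ))
    simp only [mul_one, one_pow, Finset.sum_const, nsmul_eq_mul] at h
    have hcard : ((U.card : ℝ)) = (Nat.card (H k) : ℝ) := by exact_mod_cast hcardT k
    calc (∑ x ∈ U, f x) ^ 2 ≤ (∑ x ∈ U, f x ^ 2) * (U.card : ℝ) := h
      _ = (Nat.card (H k) : ℝ) * ∑ x ∈ U, f x ^ 2 := by rw [hcard]; ring
  have hA_min : ∀ (f : G → ℝ) (i : ℕ),
      auxA H U f i ≤ min 1 ((Nat.card (H k) : ℝ) / (Nat.card (H i) : ℝ)) *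
        ∑ x ∈ U, f x ^ 2 := by
    intro f i
    rcases le_or_gt i k with h | h
    · rw [hmin1 i h, one_mul]; exact hA_le f i h
    · rw [hmin2 i h, hA_gt f i h]
      calc (∑ x ∈ U, f x) ^ 2 * ((Nat.card (H i) : ℝ))⁻¹
          ≤ ((Nat.card (H k) : ℝ) * ∑ x ∈ U, f x ^ 2) * ((Nat.card (H i) : ℝ))⁻¹ :=
            mul_le_mul_of_nonneg_right (hCS f) (inv_nonneg.mpr (hNpos i).le)
        _ = (Nat.card (H k) : ℝ) / (Nat.card (H i) : ℝ) * ∑ x ∈ U, f x ^ 2 := by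
            rw [div_eq_mul_inv]; ring
  have hA_abs : ∀ (f : G → ℝ) (i : ℕ), |auxA H U f i| ≤ ∑ x ∈ U, f x ^ 2 := by
    intro f i
    rcases le_or_gt i k with h | h
    · exact abs_le.mpr ⟨hA_ge f i h, hA_le f i h⟩
    · rw [hA_gt f i h, abs_of_nonneg (mul_nonneg (sq_nonneg _) (inv_nonneg.mpr (hNpos i).le))]
      calc (∑ x ∈ U, f x) ^ 2 * ((Nat.card (H i) : ℝ))⁻¹
          ≤ min 1 ((Nat.card (H k) : ℝ) / (Nat.card (H i) : ℝ)) * ∑ x ∈ U, f x ^ 2 := by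
            rw [← hA_gt f i h]; exact hA_min f i
        _ ≤ 1 * ∑ x ∈ U, f x ^ 2 :=
            mul_le_mul_of_nonneg_right (min_le_left _ _) (hB_nonneg f)
        _ = ∑ x ∈ U, f x ^ 2 := one_mul _
  -- key tsum identity
  have hkey : ∀ f : G → ℝ, (∀ x ∉ U, f x = 0) →
      ∑' x : G, (f x - P f x) * f x
        = (∑ x ∈ U, f x ^ 2) - ∑' i : ℕ, c i * auxA H U f i := by
    intro f hf
    have hm01 : ∀ (i : ℕ) (z : G), 0 ≤ m i z ∧ m i z ≤ 1 := by
      intro i z; rw [hm]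
      split
      · refine ⟨inv_nonneg.mpr (hNpos i).le, ?_⟩
        rw [inv_le_one_iff₀]
        right
        exact_mod_cast hcard_pos i
      · exact ⟨le_rfl, zero_le_one⟩
    have hsum_cm : ∀ z : G, Summable fun i => c i * m i z := fun z =>
      hsumc.of_nonneg_of_le (fun i => mul_nonneg (hc0 i) (hm01 i z).1)
        (fun i => mul_le_of_le_one_right (hc0 i) (hm01 i z).2)
    have h1 : ∑' x : G, (f x - P f x) * f x = ∑ x ∈ U, (f x - P f x) * f x :=
      tsum_eq_sum fun x hx => by rw [hf x hx, mul_zero]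
    have h2 : ∀ x : G, P f x = ∑ y ∈ U, f y * μ (y⁻¹ * x) := fun x => by
      rw [hP]; exact tsum_eq_sum fun y hy => by rw [hf y hy, zero_mul]
    have h3 : ∑ x ∈ U, (f x - P f x) * f x
        = (∑ x ∈ U, f x ^ 2) - ∑ x ∈ U, ∑ y ∈ U, (f x * f y) * μ (y⁻¹ * x) := by
      rw [← Finset.sum_sub_distrib]
      refine Finset.sum_congr rfl fun x hx => ?_
      rw [h2 x, sub_mul, Finset.sum_mul]
      congr 1
      · ring
      · exact Finset.sum_congr rfl fun y hy => by ring
    have h5 : ∀ x y : G, (f x * f y) * μ (y⁻¹ * x)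
        = ∑' i : ℕ, (c i * m i (y⁻¹ * x)) * (f x * f y) := by
      intro x y
      calc (f x * f y) * μ (y⁻¹ * x) = μ (y⁻¹ * x) * (f x * f y) := by ring
        _ = (∑' i : ℕ, c i * m i (y⁻¹ * x)) * (f x * f y) := by rw [hμ]
        _ = ∑' i : ℕ, (c i * m i (y⁻¹ * x)) * (f x * f y) := tsum_mul_right.symm
    have hs : ∀ x y : G, Summable fun i => (c i * m i (y⁻¹ * x)) * (f x * f y) :=
      fun x y => (hsum_cm _).mul_right _
    have h6 : ∑ x ∈ U, ∑ y ∈ U, (f x * f y) * μ (y⁻¹ * x)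
        = ∑' i : ℕ, c i * auxA H U f i := by
      calc ∑ x ∈ U, ∑ y ∈ U, (f x * f y) * μ (y⁻¹ * x)
          = ∑ x ∈ U, ∑ y ∈ U, ∑' i : ℕ, (c i * m i (y⁻¹ * x)) * (f x * f y) :=
            Finset.sum_congr rfl fun x _ => Finset.sum_congr rfl fun y _ => h5 x y
        _ = ∑ x ∈ U, ∑' i : ℕ, ∑ y ∈ U, (c i * m i (y⁻¹ * x)) * (f x * f y) :=
            Finset.sum_congr rfl fun x _ => (Summable.tsum_finsetSum fun y _ => hs x y).symm
        _ = ∑' i : ℕ, ∑ x ∈ U, ∑ y ∈ U, (c i * m i (y⁻¹ * x)) * (f x * f y) :=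
            (Summable.tsum_finsetSum fun x _ => summable_sum fun y _ => hs x y).symm
        _ = ∑' i : ℕ, c i * auxA H U f i := by
            refine tsum_congr fun i => ?_
            rw [hAdef, Finset.mul_sum]
            refine Finset.sum_congr rfl fun x _ => ?_
            rw [Finset.mul_sum]
            refine Finset.sum_congr rfl fun y _ => ?_
            rw [hm]
            ring
    rw [h1, h3, h6]
  have hden : ∀ f : G → ℝ, (∀ x ∉ U, f x = 0) →
      ∑' x : G, (f x) ^ 2 = ∑ x ∈ U, f x ^ 2 :=
    fun f hf => tsum_eq_sum fun x hx => by rw [hf x hx]; ring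
  have hsumA : ∀ f : G → ℝ, Summable fun i => c i * auxA H U f i := by
    intro f
    refine Summable.of_norm_bounded (g := fun i => c i * ∑ x ∈ U, f x ^ 2)
      (hsumc.mul_right (∑ x ∈ U, f x ^ 2)) fun i => ?_
    rw [Real.norm_eq_abs, abs_mul, abs_of_nonneg (hc0 i)]
    exact mul_le_mul_of_nonneg_left (hA_abs f i) (hc0 i)
  have hNum_ge : ∀ f : G → ℝ,
      T (Nat.card (H k) : ℝ) * (∑ x ∈ U, f x ^ 2)
        ≤ (∑ x ∈ U, f x ^ 2) - ∑' i : ℕ, c i * auxA H U f i := by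
    intro f
    have hb : ∀ i, c i * auxA H U f i
        ≤ c i * min 1 ((Nat.card (H k) : ℝ) / (Nat.card (H i) : ℝ)) * ∑ x ∈ U, f x ^ 2 := by
      intro i
      rw [mul_assoc]
      exact mul_le_mul_of_nonneg_left (hA_min f i) (hc0 i)
    have hle := Summable.tsum_le_tsum hb (hsumA f) (hsum_cmin.mul_right _)
    have heq : ∑' i : ℕ, c i * min 1 ((Nat.card (H k) : ℝ) / (Nat.card (H i) : ℝ)) *
        (∑ x ∈ U, f x ^ 2) = (1 - T (Nat.card (H k) : ℝ)) * ∑ x ∈ U, f x ^ 2 := by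
      rw [tsum_mul_right, hT']
    rw [heq] at hle
    nlinarith [hB_nonneg f]
  -- the minimizing function
  set f₀ : G → ℝ := fun x => if x ∈ H k then (1:ℝ) else 0 with hf₀def
  have hf₀supp : ∀ x ∉ U, f₀ x = 0 := fun x hx => if_neg fun h => hx ((hU x).mpr h)
  have hf₀ne : f₀ ≠ 0 := by
    intro h0
    have h1 : f₀ 1 = 0 := by rw [h0]; rfl
    rw [hf₀def] at h1
    simp only [one_mem, if_true] at h1
    norm_num at h1
  have hB₀ : ∑ x ∈ U, f₀ x ^ 2 = (Nat.card (H k) : ℝ) := by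
    have : ∀ x ∈ U, f₀ x ^ 2 = 1 := fun x hx => by
      rw [hf₀def]; simp only [if_pos ((hU x).mp hx)]; norm_num
    rw [Finset.sum_congr rfl this, Finset.sum_const, nsmul_eq_mul, mul_one]
    exact_mod_cast hcardT k
  have hS₀ : ∑ x ∈ U, f₀ x = (Nat.card (H k) : ℝ) := by
    have : ∀ x ∈ U, f₀ x = 1 := fun x hx => by
      rw [hf₀def]; simp only [if_pos ((hU x).mp hx)]
    rw [Finset.sum_congr rfl this, Finset.sum_const, nsmul_eq_mul, mul_one]
    exact_mod_cast hcardT k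
  have hAeq : ∀ i : ℕ, auxA H U f₀ i
      = min 1 ((Nat.card (H k) : ℝ) / (Nat.card (H i) : ℝ)) * (Nat.card (H k) : ℝ) := by
    intro i
    rcases le_or_gt i k with h | h
    · rw [hmin1 i h, one_mul, hAdef]
      have e1 : ∀ x ∈ U, ∑ y ∈ U, f₀ x * f₀ y *
          (if y⁻¹ * x ∈ H i then ((Nat.card (H i) : ℝ))⁻¹ else 0) = 1 := by
        intro x hx
        have : ∀ y ∈ U, f₀ x * f₀ y *
            (if y⁻¹ * x ∈ H i then ((Nat.card (H i) : ℝ))⁻¹ else 0)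
            = (if y⁻¹ * x ∈ H i then ((Nat.card (H i) : ℝ))⁻¹ else 0) := by
          intro y hy
          rw [hf₀def]
          simp only [if_pos ((hU x).mp hx), if_pos ((hU y).mp hy)]
          ring
        rw [Finset.sum_congr rfl this]
        exact hinner1 i h x hx
      rw [Finset.sum_congr rfl e1, Finset.sum_const, nsmul_eq_mul, mul_one]
      exact_mod_cast hcardT k
    · rw [hmin2 i h, hA_gt f₀ i h, hS₀, div_eq_mul_inv]
      ring
  have hD₀ : ∑' i : ℕ, c i * auxA H U f₀ i
      = (1 - T (Nat.card (H k) : ℝ)) * (Nat.card (H k) : ℝ) := by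
    calc ∑' i : ℕ, c i * auxA H U f₀ i
        = ∑' i : ℕ, (c i * min 1 ((Nat.card (H k) : ℝ) / (Nat.card (H i) : ℝ)))
            * (Nat.card (H k) : ℝ) := tsum_congr fun i => by rw [hAeq i]; ring
      _ = (∑' i : ℕ, c i * min 1 ((Nat.card (H k) : ℝ) / (Nat.card (H i) : ℝ)))
            * (Nat.card (H k) : ℝ) := tsum_mul_right
      _ = (1 - T (Nat.card (H k) : ℝ)) * (Nat.card (H k) : ℝ) := by rw [hT']
  -- λ₁ = T
  have hlam : lamOne P U = T (Nat.card (H k) : ℝ) := by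
    rw [lamOne]
    refine IsLeast.csInf_eq ⟨⟨f₀, hf₀supp, hf₀ne, ?_⟩, ?_⟩
    · rw [hkey f₀ hf₀supp, hden f₀ hf₀supp, hB₀, hD₀, eq_div_iff (hNne k)]
      ring
    · rintro r ⟨f, hf, hfne, rfl⟩
      have hBpos : 0 < ∑ x ∈ U, f x ^ 2 := by
        obtain ⟨x, hx⟩ : ∃ x, f x ≠ 0 := Function.ne_iff.mp hfne
        have hxU : x ∈ U := by
          by_contra hxU
          exact hx (hf x hxU)
        have h1 : 0 < f x ^ 2 := by positivity
        have h2 : f x ^ 2 ≤ ∑ x ∈ U, f x ^ 2 :=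
          Finset.single_le_sum (fun y _ => sq_nonneg (f y)) hxU
        linarith
      rw [hkey f hf, hden f hf, le_div_iff₀ hBpos]
      exact hNum_ge f
  -- T = tail sum
  have hs1 : Summable fun j => c (j + (k+1)) := (summable_nat_add_iff (k+1)).mpr hsumc
  have hs2 : Summable fun j => c (j + (k+1)) *
      ((Nat.card (H k) : ℝ) / (Nat.card (H (j + (k+1))) : ℝ)) := by
    have h := (summable_nat_add_iff (k+1)).mpr hsum_cmin
    refine h.congr fun j => ?_
    rw [hmin2 (j + (k+1)) (by omega)]
  have hTsh : T (Nat.card (H k) : ℝ)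
      = ∑' j : ℕ, c (j + (k+1)) *
          (1 - (Nat.card (H k) : ℝ) / (Nat.card (H (j + (k+1))) : ℝ)) := by
    have h1 := Summable.sum_add_tsum_nat_add (f := fun i => c i *
      min 1 ((Nat.card (H k) : ℝ) / (Nat.card (H i) : ℝ))) (k+1) hsum_cmin
    have h2 := Summable.sum_add_tsum_nat_add (f := c) (k+1) hsumc
    have h3 : ∑ i ∈ Finset.range (k+1), c i *
        min 1 ((Nat.card (H k) : ℝ) / (Nat.card (H i) : ℝ))
        = ∑ i ∈ Finset.range (k+1), c i := by
      refine Finset.sum_congr rfl fun i hi => ?_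
      rw [hmin1 i (Nat.lt_succ_iff.mp (Finset.mem_range.mp hi)), mul_one]
    have h4 : ∑' j : ℕ, c (j + (k+1)) *
        min 1 ((Nat.card (H k) : ℝ) / (Nat.card (H (j + (k+1))) : ℝ))
        = ∑' j : ℕ, c (j + (k+1)) *
          ((Nat.card (H k) : ℝ) / (Nat.card (H (j + (k+1))) : ℝ)) := by
      refine tsum_congr fun j => ?_
      rw [hmin2 (j + (k+1)) (by omega)]
    rw [hcsum] at h2
    rw [hT]
    have h5 : ∑' (i : ℕ), c i * min 1 ((Nat.card (H k) : ℝ) / (Nat.card (H i) : ℝ))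
        = ∑ i ∈ Finset.range (k+1), c i
          + ∑' j : ℕ, c (j + (k+1)) *
            ((Nat.card (H k) : ℝ) / (Nat.card (H (j + (k+1))) : ℝ)) := by
      rw [← h1, h3, h4]
    rw [h5]
    have h6 : ∑' j : ℕ, c (j + (k+1)) *
        (1 - (Nat.card (H k) : ℝ) / (Nat.card (H (j + (k+1))) : ℝ))
        = ∑' j : ℕ, c (j + (k+1))
          - ∑' j : ℕ, c (j + (k+1)) *
            ((Nat.card (H k) : ℝ) / (Nat.card (H (j + (k+1))) : ℝ)) := by
      rw [← Summable.tsum_sub hs1 hs2]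
      exact tsum_congr fun j => by ring
    rw [h6]
    linarith
  have hT2 : T (Nat.card (H k) : ℝ)
      = ∑' i : ℕ, c (k + 1 + i) *
          (1 - (Nat.card (H k) : ℝ) / (Nat.card (H (k + 1 + i)) : ℝ)) := by
    rw [hTsh]
    exact tsum_congr fun j => by rw [add_comm j (k+1)]
  -- bounds
  have hσ' : σ k = ∑' j : ℕ, c (j + (k+1)) := by
    rw [hσ]
    exact tsum_congr fun i => by rw [add_comm (k+1) i]
  have h2N : ∀ j : ℕ, 2 * (Nat.card (H k) : ℝ) ≤ (Nat.card (H (j + (k+1))) : ℝ) := by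
    intro j
    have : 2 * Nat.card (H k) ≤ Nat.card (H (j + (k+1))) :=
      le_trans (hstep k) (hmono_card (show k+1 ≤ j+(k+1) by omega))
    exact_mod_cast this
  have h4N : 4 * (Nat.card (H k) : ℝ) ≤ (Nat.card (H (1 + (k+1))) : ℝ) := by
    have e : 1 + (k+1) = (k+1) + 1 := by omega
    have h1 : 2 * (2 * Nat.card (H k)) ≤ 2 * Nat.card (H (k+1)) :=
      Nat.mul_le_mul_left 2 (hstep k)
    have h2 : 2 * Nat.card (H (k+1)) ≤ Nat.card (H ((k+1)+1)) := hstep (k+1)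
    have : 4 * Nat.card (H k) ≤ Nat.card (H (1 + (k+1))) := by
      rw [e]; omega
    exact_mod_cast this
  have hρhalf : ∀ j : ℕ,
      (Nat.card (H k) : ℝ) / (Nat.card (H (j + (k+1))) : ℝ) ≤ 1/2 := by
    intro j
    rw [div_le_iff₀ (hNpos _)]
    linarith [h2N j]
  have hρpos : ∀ j : ℕ,
      0 < (Nat.card (H k) : ℝ) / (Nat.card (H (j + (k+1))) : ℝ) :=
    fun j => div_pos (hNpos k) (hNpos _)
  have hρ1 : (Nat.card (H k) : ℝ) / (Nat.card (H (1 + (k+1))) : ℝ) ≤ 1/4 := by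
    rw [div_le_iff₀ (hNpos _)]
    linarith [h4N]
  have hsumt : Summable fun j => c (j + (k+1)) *
      (1 - (Nat.card (H k) : ℝ) / (Nat.card (H (j + (k+1))) : ℝ)) :=
    hs1.of_nonneg_of_le
      (fun j => mul_nonneg (hc0 _) (by linarith [hρhalf j]))
      (fun j => mul_le_of_le_one_right (hc0 _) (by linarith [hρpos j]))
  have hupper : T (Nat.card (H k) : ℝ) < σ k := by
    rw [hTsh, hσ']
    refine Summable.tsum_lt_tsum (i := 0) (fun j => ?_) ?_ hsumt hs1
    · exact mul_le_of_le_one_right (hc0 _) (by linarith [hρpos j])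
    · nlinarith [hc (0 + (k+1)), hρpos 0]
  have hlower : σ k / 2 < T (Nat.card (H k) : ℝ) := by
    have hhalfσ : σ k / 2 = ∑' j : ℕ, c (j + (k+1)) * 2⁻¹ := by
      rw [hσ', div_eq_mul_inv, ← tsum_mul_right]
    rw [hTsh, hhalfσ]
    refine Summable.tsum_lt_tsum (i := 1) (fun j => ?_) ?_ (hs1.mul_right _) hsumt
    · exact mul_le_mul_of_nonneg_left (by linarith [hρhalf j]) (hc0 _)
    · have h1 : (2⁻¹ : ℝ) < 1 - (Nat.card (H k) : ℝ) / (Nat.card (H (1 + (k+1))) : ℝ) := by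
        have := hρ1
        norm_num
        linarith
      exact mul_lt_mul_of_pos_left h1 (hc _)
  exact ⟨hlam, hT2, by rw [hlam]; exact hlower, by rw [hlam]; exact hupper⟩
end

section
/- Assume Condition (A): there exists λ > 0 such that c_k ≤ λ·σ(k) for all k ≥ 0. Let s : [0,∞) → (0,∞) be any continuous nonincreasing function with s(k) = σ(k) for every integer k ≥ 0. Then the function x ↦ s(log x) is doubling on (1,∞): there exists a constant c > 0 (one may take c = (1+λ)^{−3}) such that for all x > 1, c · s(log x) ≤ s(log(2x)) ≤ s(log x). -/
open scoped BigOperators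

/-- Proposition 6.5: under Condition (A) (`c_k ≤ λ·σ(k)` for all `k`), any
continuous nonincreasing positive extension `s` of `σ` makes `x ↦ s(log x)`
doubling on `(1,∞)`: there is `a > 0` with
`a·s(log x) ≤ s(log 2x) ≤ s(log x)` for all `x > 1`. -/
theorem stmt_15 (c : ℕ → ℝ) (hc : ∀ k, 0 < c k) (hcsum : ∑' k : ℕ, c k = 1)
    (σ : ℕ → ℝ) (hσ : ∀ k, σ k = ∑' i : ℕ, c (k + 1 + i))
    (lam : ℝ) (hlam : 0 < lam) (hA : ∀ k, c k ≤ lam * σ k)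
    (s : ℝ → ℝ) (hspos : ∀ x ≥ (0 : ℝ), 0 < s x)
    (hscont : ContinuousOn s (Set.Ici 0))
    (hsanti : AntitoneOn s (Set.Ici 0))
    (hsval : ∀ k : ℕ, s k = σ k) :
    ∃ a > (0 : ℝ), ∀ x : ℝ, 1 < x →
      a * s (Real.log x) ≤ s (Real.log (2 * x)) ∧
      s (Real.log (2 * x)) ≤ s (Real.log x) := by
  have hsum : Summable c := by
    by_contra h
    rw [tsum_eq_zero_of_not_summable h] at hcsum
    norm_num at hcsum
  have hsumk : ∀ k : ℕ, Summable fun i => c (k + i) := fun k => by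
    have := (summable_nat_add_iff k).2 hsum
    simpa [add_comm] using this
  have hσpos : ∀ k, 0 < σ k := by
    intro k
    rw [hσ]
    exact Summable.tsum_pos (hsumk (k + 1)) (fun i => (hc _).le) 0 (hc _)
  have hstep : ∀ k, σ k = c (k + 1) + σ (k + 1) := by
    intro k
    rw [hσ, hσ, Summable.tsum_eq_zero_add (hsumk (k + 1))]
    congr 1
    exact tsum_congr fun b => by congr 1; ring
  have hσle : ∀ k, σ k ≤ (1 + lam) * σ (k + 1) := by
    intro k
    rw [hstep k]
    have := hA (k + 1)
    nlinarith [hσpos (k + 1)]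
  have hpow : (0:ℝ) < (1 + lam) ^ 2 := by positivity
  refine ⟨((1 + lam) ^ 2)⁻¹, by positivity, fun x hx => ?_⟩
  have hx0 : (0:ℝ) < x := lt_trans one_pos hx
  have hy : 0 < Real.log x := Real.log_pos hx
  have hlog2 : Real.log (2 * x) = Real.log x + Real.log 2 := by
    rw [Real.log_mul (by norm_num) (ne_of_gt hx0), add_comm]
  set y := Real.log x with hy_def
  set n : ℕ := ⌊y⌋₊ with hn
  have hny : (n : ℝ) ≤ y := Nat.floor_le hy.le
  have hyn : y < n + 1 := Nat.lt_floor_add_one y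
  have hmemy : y ∈ Set.Ici (0:ℝ) := hy.le
  have hmemn : (n : ℝ) ∈ Set.Ici (0:ℝ) := by simp only [Set.mem_Ici]; positivity
  have hmems : y + Real.log 2 ∈ Set.Ici (0:ℝ) := by
    have : (0:ℝ) < Real.log 2 := Real.log_pos (by norm_num)
    simp only [Set.mem_Ici]; linarith
  have hmemn2 : ((n:ℝ) + 2) ∈ Set.Ici (0:ℝ) := by simp only [Set.mem_Ici]; positivity
  constructor
  · -- lower bound
    have h1 : y + Real.log 2 ≤ (n : ℝ) + 2 := by
      have h2 : Real.log 2 < 1 := by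
        have := Real.log_lt_sub_one_of_pos (x := 2) (by norm_num) (by norm_num)
        linarith
      linarith
    have hA1 : s ((n:ℝ) + 2) ≤ s (y + Real.log 2) := hsanti hmems hmemn2 h1
    have hs2 : s ((n:ℝ) + 2) = σ (n + 2) := by
      have := hsval (n + 2); push_cast at this; exact this
    have hA2 : s y ≤ s (n : ℝ) := hsanti hmemn hmemy hny
    have hsn : s (n : ℝ) = σ n := hsval n
    have hσ2 : σ n ≤ (1 + lam) ^ 2 * σ (n + 2) := by
      have h1 := hσle n
      have h2 := hσle (n + 1)
      have h3 : (0:ℝ) < 1 + lam := by linarith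
      calc σ n ≤ (1 + lam) * σ (n + 1) := h1
        _ ≤ (1 + lam) * ((1 + lam) * σ (n + 1 + 1)) := by nlinarith
        _ = (1 + lam) ^ 2 * σ (n + 2) := by ring_nf
    rw [hlog2, inv_mul_le_iff₀ hpow]
    calc s y ≤ σ n := by rw [← hsn]; exact hA2
      _ ≤ (1 + lam) ^ 2 * σ (n + 2) := hσ2
      _ ≤ (1 + lam) ^ 2 * s (y + Real.log 2) := by
          rw [← hs2]; nlinarith
  · rw [hlog2]
    apply hsanti hmemy hmems
    have : (0:ℝ) < Real.log 2 := Real.log_pos (by norm_num)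
    linarith
end

section
/- Assume Condition (A): there exists λ > 0 such that c_k ≤ λ·σ(k) for all k ≥ 0. Then there exists a constant c > 0 such that for all u > 1, T(u) ≤ Λ(u) ≤ c · T(u); that is, the isospectral profile Λ and the function T are factor-equivalent at infinity. -/
open scoped BigOperators Classical

/-- The `L²`-isospectral profile `Λ(v) = inf { λ₁(U) : U finite nonempty, |U| ≤ v }`. -/
noncomputable def isoProfile {G : Type*} [Group G]
    (P : (G → ℝ) → G → ℝ) (v : ℝ) : ℝ :=
  sInf {r : ℝ | ∃ U : Finset G, U.Nonempty ∧ ((U.card : ℝ)) ≤ v ∧ r = lamOne P U}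

open scoped Classical

lemma card_natCard {G : Type*} [Group G] (K : Subgroup G) (hK : (K : Set G).Finite) :
    hK.toFinset.card = Nat.card K := by
  rw [← Set.ncard_eq_toFinset_card _ hK, ← Nat.card_coe_set_eq]
  rfl

lemma coset_card_le {G : Type*} [Group G] (K : Subgroup G) (hK : (K : Set G).Finite)
    (U : Finset G) (q : G ⧸ K) :
    (U.filter (fun y => (QuotientGroup.mk y : G ⧸ K) = q)).card ≤ Nat.card K := by
  rcases (U.filter (fun y => (QuotientGroup.mk y : G ⧸ K) = q)).eq_empty_or_nonempty with h | h
  · simp [h]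
  · obtain ⟨x0, hx0⟩ := h
    rw [Finset.mem_filter] at hx0
    rw [← card_natCard K hK]
    refine Finset.card_le_card_of_injOn (fun y => x0⁻¹ * y) ?_ ?_
    · intro y hy
      rw [Finset.mem_coe, Finset.mem_filter] at hy
      rw [Finset.mem_coe, Set.Finite.mem_toFinset]
      have : (QuotientGroup.mk x0 : G ⧸ K) = QuotientGroup.mk y := by rw [hx0.2, hy.2]
      exact QuotientGroup.eq.mp this
    · intro a _ b _ hab
      exact mul_left_cancel hab

lemma quad_bounds {G : Type*} [Group G] (K : Subgroup G) (hK : (K : Set G).Finite)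
    (U : Finset G) (f : G → ℝ) :
    0 ≤ ∑ x ∈ U, ∑ y ∈ U, f x * f y * (if y⁻¹ * x ∈ K then ((Nat.card K : ℝ))⁻¹ else 0) ∧
    ∑ x ∈ U, ∑ y ∈ U, f x * f y * (if y⁻¹ * x ∈ K then ((Nat.card K : ℝ))⁻¹ else 0)
      ≤ min 1 ((U.card : ℝ) / (Nat.card K : ℝ)) * ∑ x ∈ U, (f x)^2 := by
  haveI := hK.to_subtype
  haveI : Nonempty K := ⟨1⟩
  set n : ℕ := Nat.card K with hn_def
  have hn : 0 < n := Nat.card_pos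
  have hnR : (0:ℝ) < (n:ℝ) := by exact_mod_cast hn
  have hite : ∀ x y : G, (if y⁻¹ * x ∈ K then ((n:ℝ))⁻¹ else 0)
      = (if (QuotientGroup.mk y : G ⧸ K) = QuotientGroup.mk x then 1 else 0) * (n:ℝ)⁻¹ := by
    intro x y
    by_cases h : y⁻¹ * x ∈ K
    · rw [if_pos h, if_pos (QuotientGroup.eq.mpr h), one_mul]
    · rw [if_neg h, if_neg (fun hq => h (QuotientGroup.eq.mp hq)), zero_mul]
  have hD : ∑ x ∈ U, ∑ y ∈ U, f x * f y * (if y⁻¹ * x ∈ K then ((n:ℝ))⁻¹ else 0)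
      = (∑ q ∈ U.image (QuotientGroup.mk : G → G ⧸ K),
          (∑ y ∈ U.filter (fun y => (QuotientGroup.mk y : G ⧸ K) = q), f y)^2) * (n:ℝ)⁻¹ := by
    rw [Finset.sum_mul]
    have inner : ∀ x ∈ U, ∑ y ∈ U, f x * f y * (if y⁻¹ * x ∈ K then ((n:ℝ))⁻¹ else 0)
        = (f x * ∑ y ∈ U.filter (fun y => (QuotientGroup.mk y : G ⧸ K) = QuotientGroup.mk x), f y)
          * (n:ℝ)⁻¹ := by
      intro x _
      rw [Finset.mul_sum, Finset.sum_mul, Finset.sum_filter]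
      refine Finset.sum_congr rfl (fun y _ => ?_)
      rw [hite x y]
      by_cases h : (QuotientGroup.mk y : G ⧸ K) = QuotientGroup.mk x
      · rw [if_pos h, if_pos h]; ring
      · rw [if_neg h, if_neg h]; ring
    have hfib : ∑ q ∈ U.image (QuotientGroup.mk : G → G ⧸ K),
        ∑ x ∈ U.filter (fun x => (QuotientGroup.mk x : G ⧸ K) = q),
          (f x * ∑ y ∈ U.filter (fun y => (QuotientGroup.mk y : G ⧸ K) = QuotientGroup.mk x), f y)
        = ∑ x ∈ U,
          (f x * ∑ y ∈ U.filter (fun y => (QuotientGroup.mk y : G ⧸ K) = QuotientGroup.mk x), f y) :=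
      Finset.sum_fiberwise_of_maps_to (fun x hx => Finset.mem_image_of_mem _ hx) _
    have hmain : ∑ x ∈ U,
        (f x * ∑ y ∈ U.filter (fun y => (QuotientGroup.mk y : G ⧸ K) = QuotientGroup.mk x), f y)
        = ∑ q ∈ U.image (QuotientGroup.mk : G → G ⧸ K),
          (∑ y ∈ U.filter (fun y => (QuotientGroup.mk y : G ⧸ K) = q), f y)^2 := by
      rw [← hfib]
      refine Finset.sum_congr rfl (fun q _ => ?_)
      have hcst : ∀ x ∈ U.filter (fun x => (QuotientGroup.mk x : G ⧸ K) = q),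
          f x * (∑ y ∈ U.filter (fun y => (QuotientGroup.mk y : G ⧸ K) = QuotientGroup.mk x), f y)
          = f x * (∑ y ∈ U.filter (fun y => (QuotientGroup.mk y : G ⧸ K) = q), f y) := by
        intro x hx
        rw [(Finset.mem_filter.mp hx).2]
      rw [Finset.sum_congr rfl hcst, ← Finset.sum_mul, sq]
    rw [Finset.sum_congr rfl inner, ← Finset.sum_mul, hmain, Finset.sum_mul]
  constructor
  · rw [hD]
    apply mul_nonneg (Finset.sum_nonneg (fun q _ => sq_nonneg _)) (le_of_lt (inv_pos.mpr hnR))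
  · rw [hD]
    have hbound : ∑ q ∈ U.image (QuotientGroup.mk : G → G ⧸ K),
        (∑ y ∈ U.filter (fun y => (QuotientGroup.mk y : G ⧸ K) = q), f y)^2
        ≤ (min (n:ℝ) (U.card : ℝ)) * ∑ x ∈ U, (f x)^2 := by
      have step : ∀ q ∈ U.image (QuotientGroup.mk : G → G ⧸ K),
          (∑ y ∈ U.filter (fun y => (QuotientGroup.mk y : G ⧸ K) = q), f y)^2
          ≤ (min (n:ℝ) (U.card : ℝ)) *
            ∑ y ∈ U.filter (fun y => (QuotientGroup.mk y : G ⧸ K) = q), (f y)^2 := by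
        intro q _
        have h1 := sq_sum_le_card_mul_sum_sq
          (s := U.filter (fun y => (QuotientGroup.mk y : G ⧸ K) = q)) (f := f)
        refine h1.trans (mul_le_mul_of_nonneg_right ?_
          (Finset.sum_nonneg (fun y _ => sq_nonneg _)))
        have h2 := coset_card_le K hK U q
        have h3 := Finset.card_le_card (Finset.filter_subset
          (fun y => (QuotientGroup.mk y : G ⧸ K) = q) U)
        apply le_min
        · exact_mod_cast h2
        · exact_mod_cast h3
      refine (Finset.sum_le_sum step).trans ?_
      rw [← Finset.mul_sum]
      apply mul_le_mul_of_nonneg_left _ (le_min (le_of_lt hnR) (by positivity))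
      rw [Finset.sum_fiberwise_of_maps_to (fun x hx => Finset.mem_image_of_mem _ hx)]
    calc (∑ q ∈ U.image (QuotientGroup.mk : G → G ⧸ K),
          (∑ y ∈ U.filter (fun y => (QuotientGroup.mk y : G ⧸ K) = q), f y)^2) * (n:ℝ)⁻¹
        ≤ ((min (n:ℝ) (U.card : ℝ)) * ∑ x ∈ U, (f x)^2) * (n:ℝ)⁻¹ := by
          apply mul_le_mul_of_nonneg_right hbound (le_of_lt (inv_pos.mpr hnR))
      _ = min 1 ((U.card : ℝ) / (n:ℝ)) * ∑ x ∈ U, (f x)^2 := by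
          have key : min ((n:ℝ)) ((U.card:ℝ)) / (n:ℝ) = min 1 ((U.card:ℝ)/(n:ℝ)) := by
            rw [← min_div_div_right hnR.le, div_self hnR.ne']
          rw [mul_comm (min (n:ℝ) (U.card:ℝ)) _, mul_assoc, ← div_eq_mul_inv, key, mul_comm]

lemma indicator_inner {G : Type*} [Group G] (K L : Subgroup G) (hK : (K : Set G).Finite)
    (hL : (L : Set G).Finite) (hKL : K ≤ L) :
    ∑ x ∈ hL.toFinset, ∑ y ∈ hL.toFinset, (if y⁻¹ * x ∈ K then ((Nat.card K : ℝ))⁻¹ else 0)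
      = (Nat.card L : ℝ) := by
  haveI := hK.to_subtype
  haveI : Nonempty K := ⟨1⟩
  have hnK : (0:ℝ) < (Nat.card K : ℝ) := by exact_mod_cast Nat.card_pos
  have inner : ∀ x ∈ hL.toFinset,
      ∑ y ∈ hL.toFinset, (if y⁻¹ * x ∈ K then ((Nat.card K : ℝ))⁻¹ else 0) = 1 := by
    intro x hx
    rw [Set.Finite.mem_toFinset] at hx
    have hfilter : hL.toFinset.filter (fun y => y⁻¹ * x ∈ K)
        = hK.toFinset.image (fun k => x * k⁻¹) := by
      ext y
      simp only [Finset.mem_filter, Finset.mem_image, Set.Finite.mem_toFinset, SetLike.mem_coe]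
      constructor
      · rintro ⟨hyL, hyK⟩
        exact ⟨y⁻¹ * x, hyK, by group⟩
      · rintro ⟨k, hk, rfl⟩
        constructor
        · exact L.mul_mem hx (L.inv_mem (hKL hk))
        · have : (x * k⁻¹)⁻¹ * x = k := by group
          rw [this]; exact hk
    have hcard : (hL.toFinset.filter (fun y => y⁻¹ * x ∈ K)).card = Nat.card K := by
      rw [hfilter, Finset.card_image_of_injective _ (fun a b hab => by
        simpa using mul_left_cancel hab), card_natCard K hK]
    rw [← Finset.sum_filter, Finset.sum_const, nsmul_eq_mul, hcard, mul_inv_cancel₀ hnK.ne']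
  rw [Finset.sum_congr rfl inner, Finset.sum_const, nsmul_eq_mul, mul_one, card_natCard L hL]

lemma key_identity {G : Type*} [Group G] (H : ℕ → Subgroup G)
    (c : ℕ → ℝ) (hc0 : ∀ k, 0 ≤ c k) (hcs : Summable c)
    (m : ℕ → G → ℝ)
    (hm : ∀ (k : ℕ) (x : G), m k x = if x ∈ H k then ((Nat.card (H k) : ℝ))⁻¹ else 0)
    (μ : G → ℝ) (hμ : ∀ x : G, μ x = ∑' k : ℕ, c k * m k x)
    (P : (G → ℝ) → G → ℝ)
    (hP : ∀ (g : G → ℝ) (x : G), P g x = ∑' y : G, g y * μ (y⁻¹ * x))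
    (U : Finset G) (f : G → ℝ) (hf : ∀ x ∉ U, f x = 0) :
    ∑' x : G, (f x - P f x) * f x
      = ∑ x ∈ U, (f x)^2 - ∑' k : ℕ,
          c k * ∑ x ∈ U, ∑ y ∈ U, f x * f y *
            (if y⁻¹ * x ∈ H k then ((Nat.card (H k) : ℝ))⁻¹ else 0) := by
  classical
  have hm01 : ∀ k z, 0 ≤ m k z ∧ m k z ≤ 1 := by
    intro k z
    rw [hm]
    by_cases h : z ∈ H k
    · rw [if_pos h]
      constructor
      · positivity
      · rcases Nat.eq_zero_or_pos (Nat.card (H k)) with h0 | h0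
        · rw [h0]; norm_num
        · rw [inv_le_one_iff₀]
          right
          exact_mod_cast h0
    · rw [if_neg h]; norm_num
  have hμs : ∀ z : G, Summable (fun k => c k * m k z) := by
    intro z
    apply Summable.of_nonneg_of_le (fun k => mul_nonneg (hc0 k) (hm01 k z).1)
      (fun k => ?_) hcs
    calc c k * m k z ≤ c k * 1 := mul_le_mul_of_nonneg_left (hm01 k z).2 (hc0 k)
      _ = c k := mul_one _
  have h1 : ∑' x : G, (f x - P f x) * f x = ∑ x ∈ U, (f x - P f x) * f x := by
    apply tsum_eq_sum
    intro x hx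
    rw [hf x hx, mul_zero]
  have h2 : ∀ x : G, P f x = ∑ y ∈ U, f y * μ (y⁻¹ * x) := by
    intro x
    rw [hP]
    apply tsum_eq_sum
    intro y hy
    rw [hf y hy, zero_mul]
  have h3 : ∑ x ∈ U, (f x - P f x) * f x
      = ∑ x ∈ U, (f x)^2 - ∑ x ∈ U, P f x * f x := by
    rw [← Finset.sum_sub_distrib]
    exact Finset.sum_congr rfl (fun x _ => by ring)
  rw [h1, h3]
  congr 1
  -- ∑ x ∈ U, P f x * f x = ∑' k, c k * B k
  have h4 : ∀ x ∈ U, P f x * f x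
      = ∑' k : ℕ, ∑ y ∈ U, f x * f y * (c k * m k (y⁻¹ * x)) := by
    intro x _
    rw [h2 x, Finset.sum_mul]
    have : ∀ y ∈ U, f y * μ (y⁻¹ * x) * f x
        = ∑' k : ℕ, f x * f y * (c k * m k (y⁻¹ * x)) := by
      intro y _
      rw [hμ (y⁻¹ * x)]
      rw [tsum_mul_left (a := f x * f y)]
      ring
    rw [Finset.sum_congr rfl this]
    rw [Summable.tsum_finsetSum (fun y _ => ((hμs (y⁻¹ * x)).mul_left (f x * f y)))]
  rw [Finset.sum_congr rfl h4]
  rw [← Summable.tsum_finsetSum (fun x _ => ?_)]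
  · apply tsum_congr
    intro k
    rw [Finset.mul_sum]
    refine Finset.sum_congr rfl (fun x _ => ?_)
    rw [Finset.mul_sum]
    refine Finset.sum_congr rfl (fun y _ => ?_)
    rw [hm]
    ring
  · exact summable_sum (fun y _ => ((hμs (y⁻¹ * x)).mul_left (f x * f y)))

lemma rayleigh_lower {G : Type*} [Group G] (H : ℕ → Subgroup G)
    (hfin : ∀ k, (H k : Set G).Finite)
    (c : ℕ → ℝ) (hc : ∀ k, 0 < c k) (hcsum : ∑' k : ℕ, c k = 1)
    (m : ℕ → G → ℝ)
    (hm : ∀ (k : ℕ) (x : G), m k x = if x ∈ H k then ((Nat.card (H k) : ℝ))⁻¹ else 0)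
    (μ : G → ℝ) (hμ : ∀ x : G, μ x = ∑' k : ℕ, c k * m k x)
    (P : (G → ℝ) → G → ℝ)
    (hP : ∀ (g : G → ℝ) (x : G), P g x = ∑' y : G, g y * μ (y⁻¹ * x))
    (T : ℝ → ℝ)
    (hT : ∀ u : ℝ, T u = 1 - ∑' k : ℕ, c k * min 1 (u / (Nat.card (H k) : ℝ)))
    (U : Finset G) (f : G → ℝ) (hf : ∀ x ∉ U, f x = 0) (hfne : f ≠ 0)
    (u : ℝ) (hu : (U.card : ℝ) ≤ u) :
    0 < ∑' x : G, (f x)^2 ∧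
      T u * ∑' x : G, (f x)^2 ≤ ∑' x : G, (f x - P f x) * f x := by
  classical
  have hc0 : ∀ k, 0 ≤ c k := fun k => (hc k).le
  have hcs : Summable c := by
    by_contra h
    rw [tsum_eq_zero_of_not_summable h] at hcsum
    norm_num at hcsum
  have hnR : ∀ k, (0:ℝ) < (Nat.card (H k) : ℝ) := by
    intro k
    haveI := (hfin k).to_subtype
    haveI : Nonempty (H k) := ⟨1⟩
    exact_mod_cast Nat.card_pos (α := H k)
  set S := ∑ x ∈ U, (f x)^2 with hS_def
  have hden : ∑' x : G, (f x)^2 = S := by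
    apply tsum_eq_sum
    intro x hx
    rw [hf x hx]
    ring
  have hS : 0 < S := by
    obtain ⟨x0, hx0⟩ := Function.ne_iff.mp hfne
    have hx0U : x0 ∈ U := by
      by_contra h
      exact hx0 (hf x0 h)
    have : (f x0)^2 ≤ S := Finset.single_le_sum (fun i _ => sq_nonneg (f i)) hx0U
    have h0 : 0 < (f x0)^2 := lt_of_le_of_ne (sq_nonneg _) (Ne.symm (pow_ne_zero 2 hx0))
    linarith
  have hmin0 : ∀ (v : ℝ) k, 0 ≤ v → 0 ≤ min 1 (v / (Nat.card (H k) : ℝ)) := by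
    intro v k hv
    exact le_min zero_le_one (div_nonneg hv (hnR k).le)
  have hminS : ∀ v : ℝ, 0 ≤ v → Summable (fun k => c k * min 1 (v / (Nat.card (H k) : ℝ))) := by
    intro v hv
    apply Summable.of_nonneg_of_le (fun k => mul_nonneg (hc0 k) (hmin0 v k hv)) (fun k => ?_) hcs
    calc c k * min 1 (v / (Nat.card (H k) : ℝ)) ≤ c k * 1 :=
          mul_le_mul_of_nonneg_left (min_le_left _ _) (hc0 k)
      _ = c k := mul_one _
  have hcard0 : (0:ℝ) ≤ (U.card : ℝ) := Nat.cast_nonneg _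
  have hu0 : (0:ℝ) ≤ u := le_trans hcard0 hu
  -- quadratic form bounds
  set B := fun k => ∑ x ∈ U, ∑ y ∈ U, f x * f y *
    (if y⁻¹ * x ∈ H k then ((Nat.card (H k) : ℝ))⁻¹ else 0) with hB_def
  have hB := fun k => quad_bounds (H k) (hfin k) U f
  have hsumB : Summable (fun k => c k * B k) := by
    apply Summable.of_nonneg_of_le (fun k => mul_nonneg (hc0 k) (hB k).1) (fun k => ?_)
      ((hminS (U.card : ℝ) hcard0).mul_right S)
    calc c k * B k ≤ c k * (min 1 ((U.card:ℝ) / (Nat.card (H k) : ℝ)) * S) :=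
          mul_le_mul_of_nonneg_left (hB k).2 (hc0 k)
      _ = c k * min 1 ((U.card:ℝ) / (Nat.card (H k) : ℝ)) * S := by ring
  have htsum_le : ∑' k : ℕ, c k * B k
      ≤ (∑' k : ℕ, c k * min 1 ((U.card:ℝ) / (Nat.card (H k) : ℝ))) * S := by
    rw [← tsum_mul_right]
    apply Summable.tsum_le_tsum (fun k => ?_) hsumB ((hminS (U.card : ℝ) hcard0).mul_right S)
    calc c k * B k ≤ c k * (min 1 ((U.card:ℝ) / (Nat.card (H k) : ℝ)) * S) :=
          mul_le_mul_of_nonneg_left (hB k).2 (hc0 k)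
      _ = c k * min 1 ((U.card:ℝ) / (Nat.card (H k) : ℝ)) * S := by ring
  have hTmono : ∑' k : ℕ, c k * min 1 ((U.card:ℝ) / (Nat.card (H k) : ℝ))
      ≤ ∑' k : ℕ, c k * min 1 (u / (Nat.card (H k) : ℝ)) := by
    apply Summable.tsum_le_tsum (fun k => ?_) (hminS _ hcard0) (hminS _ hu0)
    apply mul_le_mul_of_nonneg_left _ (hc0 k)
    exact min_le_min le_rfl (by gcongr)
  have hkey := key_identity H c hc0 hcs m hm μ hμ P hP U f hf
  rw [hkey, hden]
  refine ⟨hS, ?_⟩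
  have h1 : T u ≤ 1 - ∑' k : ℕ, c k * min 1 ((U.card:ℝ) / (Nat.card (H k) : ℝ)) := by
    rw [hT u]
    linarith
  calc T u * S ≤ (1 - ∑' k : ℕ, c k * min 1 ((U.card:ℝ) / (Nat.card (H k) : ℝ))) * S :=
        mul_le_mul_of_nonneg_right h1 hS.le
    _ = S - (∑' k : ℕ, c k * min 1 ((U.card:ℝ) / (Nat.card (H k) : ℝ))) * S := by ring
    _ ≤ S - ∑' k : ℕ, c k * B k := by linarith

lemma rayleigh_group {G : Type*} [Group G] (H : ℕ → Subgroup G)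
    (hfin : ∀ k, (H k : Set G).Finite)
    (hmono : ∀ j k : ℕ, j ≤ k → H j ≤ H k)
    (c : ℕ → ℝ) (hc : ∀ k, 0 < c k) (hcsum : ∑' k : ℕ, c k = 1)
    (m : ℕ → G → ℝ)
    (hm : ∀ (k : ℕ) (x : G), m k x = if x ∈ H k then ((Nat.card (H k) : ℝ))⁻¹ else 0)
    (μ : G → ℝ) (hμ : ∀ x : G, μ x = ∑' k : ℕ, c k * m k x)
    (P : (G → ℝ) → G → ℝ)
    (hP : ∀ (g : G → ℝ) (x : G), P g x = ∑' y : G, g y * μ (y⁻¹ * x))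
    (σ : ℕ → ℝ) (hσ : ∀ k, σ k = ∑' i : ℕ, c (k + 1 + i)) (k : ℕ) :
    (∑' x : G, ((fun x => if x ∈ H k then (1:ℝ) else 0) x
        - P (fun x => if x ∈ H k then (1:ℝ) else 0) x)
        * (fun x => if x ∈ H k then (1:ℝ) else 0) x)
      / (∑' x : G, ((fun x => if x ∈ H k then (1:ℝ) else 0) x)^2) ≤ σ k := by
  classical
  have hc0 : ∀ j, 0 ≤ c j := fun j => (hc j).le
  have hcs : Summable c := by
    by_contra h
    rw [tsum_eq_zero_of_not_summable h] at hcsum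
    norm_num at hcsum
  set U := (hfin k).toFinset with hU_def
  set f : G → ℝ := fun x => if x ∈ H k then (1:ℝ) else 0 with hf_def
  have hf : ∀ x ∉ U, f x = 0 := by
    intro x hx
    rw [Set.Finite.mem_toFinset] at hx
    exact if_neg hx
  have hnR : (0:ℝ) < (Nat.card (H k) : ℝ) := by
    haveI := (hfin k).to_subtype
    haveI : Nonempty (H k) := ⟨1⟩
    exact_mod_cast Nat.card_pos (α := H k)
  have hfU : ∀ x ∈ U, f x = 1 := by
    intro x hx
    rw [Set.Finite.mem_toFinset] at hx
    exact if_pos hx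
  have hSval : ∑ x ∈ U, (f x)^2 = (Nat.card (H k) : ℝ) := by
    calc ∑ x ∈ U, (f x)^2 = ∑ _x ∈ U, (1:ℝ) :=
          Finset.sum_congr rfl (fun x hx => by rw [hfU x hx]; norm_num)
      _ = (U.card : ℝ) := by rw [Finset.sum_const, nsmul_eq_mul, mul_one]
      _ = (Nat.card (H k) : ℝ) := by rw [card_natCard _ (hfin k)]
  have hden : ∑' x : G, (f x)^2 = (Nat.card (H k) : ℝ) := by
    rw [tsum_eq_sum (s := U) (fun x hx => by rw [hf x hx]; ring), hSval]
  set B := fun j => ∑ x ∈ U, ∑ y ∈ U, f x * f y *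
    (if y⁻¹ * x ∈ H j then ((Nat.card (H j) : ℝ))⁻¹ else 0) with hB_def
  have hBj : ∀ j, B j = ∑ x ∈ U, ∑ y ∈ U,
      (if y⁻¹ * x ∈ H j then ((Nat.card (H j) : ℝ))⁻¹ else 0) := by
    intro j
    refine Finset.sum_congr rfl (fun x hx => Finset.sum_congr rfl (fun y hy => ?_))
    rw [hfU x hx, hfU y hy, one_mul, one_mul]
  have hBle : ∀ j, j ≤ k → B j = (Nat.card (H k) : ℝ) := by
    intro j hj
    rw [hBj j]
    exact indicator_inner (H j) (H k) (hfin j) (hfin k) (hmono j k hj)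
  have hquad := fun j => quad_bounds (H j) (hfin j) U f
  have hBbound : ∀ j, B j ≤ (Nat.card (H k) : ℝ) := by
    intro j
    refine (hquad j).2.trans ?_
    rw [hSval]
    calc min 1 ((U.card:ℝ) / (Nat.card (H j) : ℝ)) * (Nat.card (H k) : ℝ)
        ≤ 1 * (Nat.card (H k) : ℝ) :=
          mul_le_mul_of_nonneg_right (min_le_left _ _) hnR.le
      _ = (Nat.card (H k) : ℝ) := one_mul _
  have hsumB : Summable (fun j => c j * B j) := by
    apply Summable.of_nonneg_of_le (fun j => mul_nonneg (hc0 j) (hquad j).1) (fun j => ?_)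
      (hcs.mul_right (Nat.card (H k) : ℝ))
    exact mul_le_mul_of_nonneg_left (hBbound j) (hc0 j)
  have htail : ∑ j ∈ Finset.range (k+1), c j * B j ≤ ∑' j : ℕ, c j * B j :=
    Summable.sum_le_tsum _ (fun j _ => mul_nonneg (hc0 j) (hquad j).1) hsumB
  have hrange : ∑ j ∈ Finset.range (k+1), c j * B j
      = (∑ j ∈ Finset.range (k+1), c j) * (Nat.card (H k) : ℝ) := by
    rw [Finset.sum_mul]
    refine Finset.sum_congr rfl (fun j hj => ?_)
    rw [hBle j (Nat.lt_succ_iff.mp (Finset.mem_range.mp hj))]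
  have hσr : σ k = 1 - ∑ j ∈ Finset.range (k+1), c j := by
    have h := Summable.sum_add_tsum_nat_add (f := c) (k+1) hcs
    rw [hcsum] at h
    rw [hσ k]
    rw [tsum_congr (fun i => by rw [Nat.add_comm (k+1) i] : ∀ i, c (k+1+i) = c (i+(k+1)))]
    linarith
  have hkey := key_identity H c hc0 hcs m hm μ hμ P hP U f hf
  rw [hkey, hden, hSval]
  rw [div_le_iff₀ hnR]
  have : (∑ j ∈ Finset.range (k+1), c j) * (Nat.card (H k) : ℝ) ≤ ∑' j : ℕ, c j * B j :=
    hrange ▸ htail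
  calc (Nat.card (H k) : ℝ) - ∑' j : ℕ, c j * B j
      ≤ (Nat.card (H k) : ℝ) - (∑ j ∈ Finset.range (k+1), c j) * (Nat.card (H k) : ℝ) := by
        linarith
    _ = (1 - ∑ j ∈ Finset.range (k+1), c j) * (Nat.card (H k) : ℝ) := by ring
    _ = σ k * (Nat.card (H k) : ℝ) := by rw [hσr]

/-- Theorem 6.7: under Condition (A), `T(u) ≤ Λ(u) ≤ a·T(u)` for all `u > 1`
and some constant `a > 0`, where `T(u) = 1 - ∑_k c_k min(1, u/|G_k|)`. -/
theorem stmt_16 {G : Type*} [Group G]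
    (H : ℕ → Subgroup G) (hfin : ∀ k, (H k : Set G).Finite)
    (hlt : ∀ k, H k < H (k + 1)) (hunion : ∀ x : G, ∃ k, x ∈ H k)
    (c : ℕ → ℝ) (hc : ∀ k, 0 < c k) (hcsum : ∑' k : ℕ, c k = 1)
    (m : ℕ → G → ℝ)
    (hm : ∀ (k : ℕ) (x : G),
      m k x = if x ∈ H k then ((Nat.card (H k) : ℝ))⁻¹ else 0)
    (μ : G → ℝ) (hμ : ∀ x : G, μ x = ∑' k : ℕ, c k * m k x)
    (σ : ℕ → ℝ) (hσ : ∀ k, σ k = ∑' i : ℕ, c (k + 1 + i))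
    (lam : ℝ) (hlam : 0 < lam) (hA : ∀ k, c k ≤ lam * σ k)
    (P : (G → ℝ) → G → ℝ)
    (hP : ∀ (g : G → ℝ) (x : G), P g x = ∑' y : G, g y * μ (y⁻¹ * x))
    (T : ℝ → ℝ)
    (hT : ∀ u : ℝ, T u = 1 - ∑' k : ℕ, c k * min 1 (u / (Nat.card (H k) : ℝ))) :
    ∃ a > (0 : ℝ), ∀ u : ℝ, 1 < u →
      T u ≤ isoProfile P u ∧ isoProfile P u ≤ a * T u := by
  classical
  have hc0 : ∀ k, 0 ≤ c k := fun k => (hc k).le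
  have hcs : Summable c := by
    by_contra h
    rw [tsum_eq_zero_of_not_summable h] at hcsum
    norm_num at hcsum
  have hnpos : ∀ k, 0 < Nat.card (H k) := by
    intro k
    haveI := (hfin k).to_subtype
    haveI : Nonempty (H k) := ⟨1⟩
    exact Nat.card_pos
  have hnR : ∀ k, (0:ℝ) < (Nat.card (H k) : ℝ) := fun k => by exact_mod_cast hnpos k
  have hmono : ∀ j k : ℕ, j ≤ k → H j ≤ H k := fun j k h =>
    ((strictMono_nat_of_lt_succ hlt).monotone h : _)
  have hcardlt : ∀ k, Nat.card (H k) < Nat.card (H (k+1)) := by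
    intro k
    rw [← card_natCard _ (hfin k), ← card_natCard _ (hfin (k+1))]
    apply Finset.card_lt_card
    rw [Set.Finite.toFinset_ssubset_toFinset]
    exact SetLike.coe_ssubset_coe.mpr (hlt k)
  have hdouble : ∀ k, 2 * Nat.card (H k) ≤ Nat.card (H (k+1)) := by
    intro k
    obtain ⟨t, ht⟩ := Subgroup.card_dvd_of_le (hlt k).le
    have h2t : 2 ≤ t := by
      by_contra h
      push_neg at h
      have : Nat.card (H (k+1)) ≤ Nat.card (H k) * 1 := by
        rw [ht]
        exact Nat.mul_le_mul_left _ (Nat.lt_succ_iff.mp h)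
      rw [Nat.mul_one] at this
      exact absurd this (not_le.mpr (hcardlt k))
    calc 2 * Nat.card (H k) = Nat.card (H k) * 2 := Nat.mul_comm _ _
      _ ≤ Nat.card (H k) * t := Nat.mul_le_mul_left _ h2t
      _ = Nat.card (H (k+1)) := ht.symm
  have hmonoN : Monotone (fun k => Nat.card (H k)) :=
    (strictMono_nat_of_lt_succ hcardlt).monotone
  have hcard_ge : ∀ k, k + 1 ≤ Nat.card (H k) := by
    intro k
    induction k with
    | zero => exact hnpos 0
    | succ n ih => exact Nat.lt_of_le_of_lt ih (hcardlt n)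
  have hσ' : ∀ k, σ k = ∑' i : ℕ, c (i + (k+1)) := fun k =>
    (hσ k).trans (tsum_congr fun i => by rw [Nat.add_comm])
  have hσs : ∀ k : ℕ, Summable (fun i => c (i + (k+1))) := fun k =>
    (summable_nat_add_iff (k+1)).mpr hcs
  have hσpos : ∀ k, 0 < σ k := by
    intro k
    rw [hσ' k]
    have h1 : c (0 + (k+1)) ≤ ∑' i : ℕ, c (i + (k+1)) :=
      Summable.le_tsum (hσs k) 0 (fun i _ => hc0 _)
    have := hc (0 + (k+1))
    linarith
  have hσrec : ∀ k, σ k = c (k+1) + σ (k+1) := by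
    intro k
    rw [hσ' k, Summable.tsum_eq_zero_add (hσs k)]
    congr 1
    · norm_num
    · rw [hσ' (k+1)]
      exact tsum_congr fun i => congrArg c (by omega)
  -- min facts
  have hmin0 : ∀ (v : ℝ) (k : ℕ), 0 ≤ v → 0 ≤ min 1 (v / (Nat.card (H k) : ℝ)) :=
    fun v k hv => le_min zero_le_one (div_nonneg hv (hnR k).le)
  have hminS : ∀ v : ℝ, 0 ≤ v →
      Summable (fun k => c k * min 1 (v / (Nat.card (H k) : ℝ))) := by
    intro v hv
    apply Summable.of_nonneg_of_le (fun k => mul_nonneg (hc0 k) (hmin0 v k hv))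
      (fun k => ?_) hcs
    calc c k * min 1 (v / (Nat.card (H k) : ℝ)) ≤ c k * 1 :=
          mul_le_mul_of_nonneg_left (min_le_left _ _) (hc0 k)
      _ = c k := mul_one _
  have hTnonneg : ∀ v : ℝ, 0 ≤ v → 0 ≤ T v := by
    intro v hv
    rw [hT]
    have hle : ∑' k : ℕ, c k * min 1 (v / (Nat.card (H k) : ℝ)) ≤ ∑' k : ℕ, c k := by
      apply Summable.tsum_le_tsum (fun k => ?_) (hminS v hv) hcs
      calc c k * min 1 (v / (Nat.card (H k) : ℝ)) ≤ c k * 1 :=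
            mul_le_mul_of_nonneg_left (min_le_left _ _) (hc0 k)
        _ = c k := mul_one _
    rw [hcsum] at hle
    linarith
  -- T lower bound by tails
  have hTge : ∀ (v : ℝ) (j : ℕ), 0 ≤ v →
      (∀ i : ℕ, 2 * v ≤ (Nat.card (H (i + (j+1))) : ℝ)) → σ j / 2 ≤ T v := by
    intro v j hv hbig
    set D := fun k => c k * (1 - min 1 (v / (Nat.card (H k) : ℝ))) with hD_def
    have hD0 : ∀ k, 0 ≤ D k := by
      intro k
      apply mul_nonneg (hc0 k)
      have := min_le_left (1:ℝ) (v / (Nat.card (H k) : ℝ))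
      linarith
    have hDle : ∀ k, D k ≤ c k := by
      intro k
      have h1 : 1 - min 1 (v / (Nat.card (H k) : ℝ)) ≤ 1 := by
        have := hmin0 v k hv
        linarith
      calc D k ≤ c k * 1 := mul_le_mul_of_nonneg_left h1 (hc0 k)
        _ = c k := mul_one _
    have hDs : Summable D := Summable.of_nonneg_of_le hD0 hDle hcs
    have hTD : T v = ∑' k : ℕ, D k := by
      have : ∀ k, D k = c k - c k * min 1 (v / (Nat.card (H k) : ℝ)) := fun k => by
        rw [hD_def]; ring
      rw [hT, tsum_congr this, Summable.tsum_sub hcs (hminS v hv), hcsum]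
    have hsplit := Summable.sum_add_tsum_nat_add (f := D) (j+1) hDs
    have hpart : 0 ≤ ∑ i ∈ Finset.range (j+1), D i :=
      Finset.sum_nonneg (fun i _ => hD0 i)
    have htail_le : ∑' i : ℕ, D (i + (j+1)) ≤ T v := by
      rw [hTD]
      linarith
    have hterm : ∀ i : ℕ, c (i + (j+1)) * (1/2) ≤ D (i + (j+1)) := by
      intro i
      apply mul_le_mul_of_nonneg_left _ (hc0 _)
      have hn := hnR (i + (j+1))
      have hdiv : v / (Nat.card (H (i + (j+1))) : ℝ) ≤ 1/2 := by
        rw [div_le_iff₀ hn]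
        have := hbig i
        linarith
      have : min 1 (v / (Nat.card (H (i + (j+1))) : ℝ)) ≤ 1/2 :=
        le_trans (min_le_right _ _) hdiv
      linarith
    have hsum_half : ∑' i : ℕ, c (i + (j+1)) * (1/2) ≤ ∑' i : ℕ, D (i + (j+1)) :=
      Summable.tsum_le_tsum hterm ((hσs j).mul_right _) ((summable_nat_add_iff (j+1)).mpr hDs)
    have : σ j / 2 = ∑' i : ℕ, c (i + (j+1)) * (1/2) := by
      rw [tsum_mul_right, ← hσ' j]
      ring
    linarith
  -- Rayleigh machinery
  have hray := fun (U : Finset G) (f : G → ℝ) hf hfne u' hu' =>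
    rayleigh_lower H hfin c hc hcsum m hm μ hμ P hP T hT U f hf hfne u' hu'
  have hlamset_ge : ∀ (U : Finset G) (u' : ℝ), (U.card : ℝ) ≤ u' →
      ∀ r ∈ {r : ℝ | ∃ f : G → ℝ, (∀ x ∉ U, f x = 0) ∧ f ≠ 0 ∧
        r = (∑' x : G, (f x - P f x) * f x) / ∑' x : G, (f x) ^ 2}, T u' ≤ r := by
    rintro U u' hu' r ⟨f, hf, hfne, rfl⟩
    obtain ⟨hden, hnum⟩ := hray U f hf hfne u' hu'
    rw [le_div_iff₀ hden]
    exact hnum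
  have hbddlam : ∀ U : Finset G, BddBelow {r : ℝ | ∃ f : G → ℝ, (∀ x ∉ U, f x = 0) ∧ f ≠ 0 ∧
      r = (∑' x : G, (f x - P f x) * f x) / ∑' x : G, (f x) ^ 2} := by
    intro U
    refine ⟨0, fun r hr => ?_⟩
    exact le_trans (hTnonneg _ (Nat.cast_nonneg _)) (hlamset_ge U (U.card:ℝ) le_rfl r hr)
  have hlam_ge : ∀ (U : Finset G) (u' : ℝ), U.Nonempty → (U.card:ℝ) ≤ u' →
      T u' ≤ lamOne P U := by
    intro U u' hU hcard
    apply le_csInf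
    · obtain ⟨x₀, hx₀⟩ := hU
      refine ⟨_, ⟨fun x => if x = x₀ then (1:ℝ) else 0,
        fun x hx => if_neg (fun h => hx (by rw [h]; exact hx₀)), ?_, rfl⟩⟩
      intro h0
      have := congrFun h0 x₀
      simp at this
    · exact hlamset_ge U u' hcard
  have hlam_nonneg : ∀ U : Finset G, U.Nonempty → 0 ≤ lamOne P U := fun U hU =>
    le_trans (hTnonneg _ (Nat.cast_nonneg _)) (hlam_ge U _ hU le_rfl)
  have hlamone_le : ∀ (U : Finset G) (f : G → ℝ), (∀ x ∉ U, f x = 0) → f ≠ 0 →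
      lamOne P U ≤ (∑' x : G, (f x - P f x) * f x) / ∑' x : G, (f x) ^ 2 :=
    fun U f hf hfne => csInf_le (hbddlam U) ⟨f, hf, hfne, rfl⟩
  -- the constant
  have hσ0 : 0 < σ 0 := hσpos 0
  refine ⟨2*(lam+1) + 2/σ 0, by positivity, ?_⟩
  intro u hu
  have hu0 : (0:ℝ) < u := lt_trans zero_lt_one hu
  have hbddiso : BddBelow {r : ℝ | ∃ U : Finset G, U.Nonempty ∧ ((U.card : ℝ)) ≤ u ∧
      r = lamOne P U} := by
    refine ⟨0, ?_⟩
    rintro r ⟨U, hU, _, rfl⟩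
    exact hlam_nonneg U hU
  have hisone : ({r : ℝ | ∃ U : Finset G, U.Nonempty ∧ ((U.card : ℝ)) ≤ u ∧
      r = lamOne P U}).Nonempty := by
    refine ⟨lamOne P {(1:G)}, ⟨{(1:G)}, ⟨1, Finset.mem_singleton_self 1⟩, ?_, rfl⟩⟩
    rw [Finset.card_singleton]
    exact_mod_cast hu.le
  have hiso_le : ∀ U : Finset G, U.Nonempty → (U.card : ℝ) ≤ u →
      isoProfile P u ≤ lamOne P U :=
    fun U hU hcard => csInf_le hbddiso ⟨U, hU, hcard, rfl⟩
  constructor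
  · -- lower bound
    apply le_csInf hisone
    rintro r ⟨U, hU, hcard, rfl⟩
    exact hlam_ge U u hU hcard
  · -- upper bound
    by_cases hcase : (Nat.card (H 0) : ℝ) ≤ u
    · -- group case: find the largest k with |H k| ≤ u
      set M := ⌊u⌋₊ with hM_def
      have hP0 : Nat.card (H 0) ≤ M := Nat.le_floor hcase
      set k₀ := Nat.findGreatest (fun j => Nat.card (H j) ≤ M) M with hk0_def
      have hspec : Nat.card (H k₀) ≤ M :=
        Nat.findGreatest_spec (P := fun j => Nat.card (H j) ≤ M) (n := M) (Nat.zero_le M) hP0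
      have hk0u : (Nat.card (H k₀) : ℝ) ≤ u :=
        le_trans (Nat.cast_le.mpr hspec) (Nat.floor_le hu0.le)
      have hnot : ¬ (Nat.card (H (k₀+1)) ≤ M) := by
        by_cases hle : k₀ + 1 ≤ M
        · exact Nat.findGreatest_is_greatest (P := fun j => Nat.card (H j) ≤ M) (n := M)
            (Nat.lt_succ_self k₀) hle
        · intro hcon
          push_neg at hle
          have h1 : k₀ + 2 ≤ Nat.card (H (k₀+1)) := hcard_ge (k₀+1)
          omega
      have hk1u : u < (Nat.card (H (k₀+1)) : ℝ) := by
        push_neg at hnot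
        calc u < (M + 1 : ℕ) := by
              rw [hM_def]
              exact_mod_cast Nat.lt_floor_add_one u
          _ ≤ (Nat.card (H (k₀+1)) : ℝ) := by exact_mod_cast hnot
      -- Λ(u) ≤ σ k₀
      set U := (hfin k₀).toFinset with hU_def
      have hUne : U.Nonempty := ⟨1, by rw [hU_def, Set.Finite.mem_toFinset]; exact (H k₀).one_mem⟩
      have hUcard : (U.card : ℝ) ≤ u := by
        rw [hU_def, card_natCard _ (hfin k₀)]
        exact hk0u
      set f : G → ℝ := fun x => if x ∈ H k₀ then (1:ℝ) else 0 with hf_def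
      have hf : ∀ x ∉ U, f x = 0 := by
        intro x hx
        rw [hU_def, Set.Finite.mem_toFinset] at hx
        exact if_neg hx
      have hfne : f ≠ 0 := by
        intro h0
        have := congrFun h0 1
        simp [hf_def, (H k₀).one_mem] at this
      have hstep1 : isoProfile P u ≤ lamOne P U := hiso_le U hUne hUcard
      have hstep2 : lamOne P U ≤ σ k₀ := by
        refine le_trans (hlamone_le U f hf hfne) ?_
        exact rayleigh_group H hfin hmono c hc hcsum m hm μ hμ P hP σ hσ k₀
      -- T u ≥ σ (k₀+1) / 2
      have hbig : ∀ i : ℕ, 2 * u ≤ (Nat.card (H (i + (k₀+1+1))) : ℝ) := by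
        intro i
        have h1 : 2 * Nat.card (H (k₀+1)) ≤ Nat.card (H (k₀+2)) := hdouble (k₀+1)
        have h2 : Nat.card (H (k₀+2)) ≤ Nat.card (H (i + (k₀+2))) := hmonoN (by omega)
        have h1R : 2 * (Nat.card (H (k₀+1)) : ℝ) ≤ (Nat.card (H (i + (k₀+2))) : ℝ) := by
          exact_mod_cast le_trans h1 h2
        have : (i + (k₀+1+1)) = (i + (k₀+2)) := by omega
        rw [this]
        linarith
      have hTbig : σ (k₀+1) / 2 ≤ T u := hTge u (k₀+1) hu0.le hbig
      have hσk : σ k₀ ≤ (lam + 1) * σ (k₀+1) := by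
        have := hA (k₀+1)
        have := hσrec k₀
        nlinarith [hσpos (k₀+1)]
      have hTu0 : 0 ≤ T u := hTnonneg u hu0.le
      calc isoProfile P u ≤ σ k₀ := le_trans hstep1 hstep2
        _ ≤ (lam + 1) * σ (k₀+1) := hσk
        _ ≤ (lam + 1) * (2 * T u) := by
            apply mul_le_mul_of_nonneg_left _ (by linarith)
            linarith
        _ = 2*(lam+1) * T u := by ring
        _ ≤ (2*(lam+1) + 2/σ 0) * T u := by
            apply mul_le_mul_of_nonneg_right _ hTu0
            have : 0 < 2/σ 0 := by positivity
            linarith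
    · -- singleton case : u < |H 0|
      push_neg at hcase
      set f : G → ℝ := fun x => if x = (1:G) then (1:ℝ) else 0 with hf_def
      have hf : ∀ x ∉ ({(1:G)} : Finset G), f x = 0 := by
        intro x hx
        rw [Finset.mem_singleton] at hx
        exact if_neg hx
      have hfne : f ≠ 0 := by
        intro h0
        have := congrFun h0 1
        simp [hf_def] at this
      have hμ1 : 0 ≤ μ 1 := by
        rw [hμ]
        apply tsum_nonneg
        intro k
        apply mul_nonneg (hc0 k)
        rw [hm]
        by_cases h : (1:G) ∈ H k
        · rw [if_pos h]; positivity
        · rw [if_neg h]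
      have hden1 : ∑' x : G, (f x) ^ 2 = 1 := by
        rw [tsum_eq_sum (s := ({(1:G)} : Finset G)) (fun x hx => by rw [hf x hx]; ring)]
        rw [Finset.sum_singleton, hf_def]
        norm_num
      have hPf1 : P f 1 = μ 1 := by
        rw [hP]
        rw [tsum_eq_sum (s := ({(1:G)} : Finset G)) (fun y hy => by rw [hf y hy, zero_mul])]
        rw [Finset.sum_singleton, hf_def]
        norm_num
      have hnum1 : ∑' x : G, (f x - P f x) * f x = 1 - μ 1 := by
        rw [tsum_eq_sum (s := ({(1:G)} : Finset G)) (fun x hx => by rw [hf x hx, mul_zero])]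
        rw [Finset.sum_singleton, hPf1, hf_def]
        norm_num
      have hr1 : (∑' x : G, (f x - P f x) * f x) / ∑' x : G, (f x) ^ 2 ≤ 1 := by
        rw [hnum1, hden1, div_one]
        linarith
      have hs1 : isoProfile P u ≤ 1 := by
        refine le_trans (hiso_le {(1:G)} ⟨1, Finset.mem_singleton_self 1⟩ ?_) ?_
        · rw [Finset.card_singleton]
          exact_mod_cast hu.le
        · exact le_trans (hlamone_le {(1:G)} f hf hfne) hr1
      -- T u ≥ σ 0 / 2
      have hbig : ∀ i : ℕ, 2 * u ≤ (Nat.card (H (i + (0+1))) : ℝ) := by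
        intro i
        have h1 : 2 * Nat.card (H 0) ≤ Nat.card (H 1) := hdouble 0
        have h2 : Nat.card (H 1) ≤ Nat.card (H (i + 1)) := hmonoN (by omega)
        have h1R : 2 * (Nat.card (H 0) : ℝ) ≤ (Nat.card (H (i + 1)) : ℝ) := by
          exact_mod_cast le_trans h1 h2
        have : (i + (0+1)) = i + 1 := by omega
        rw [this]
        linarith
      have hTbig : σ 0 / 2 ≤ T u := hTge u 0 hu0.le hbig
      have hTu0 : 0 ≤ T u := hTnonneg u hu0.le
      calc isoProfile P u ≤ 1 := hs1
        _ = (2/σ 0) * (σ 0/2) := by field_simp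
        _ ≤ (2/σ 0) * T u := by
            apply mul_le_mul_of_nonneg_left hTbig (by positivity)
        _ ≤ (2*(lam+1) + 2/σ 0) * T u := by
            apply mul_le_mul_of_nonneg_right _ hTu0
            nlinarith
end

section
/- For x ∈ G let |x|_σ := 1/σ(n−1) − 1 where n := min{ k ≥ 0 : x ∈ G_k } (so |e|_σ = 0 since σ(−1) = 1), and for α > 0 and n ≥ 1 define the mean α-displacement M_X(α, n) := Σ_{y∈G} (|y|_σ)^α · μ^{*n}(y) ∈ [0,∞]. Then: (1) for every fixed n ≥ 1 and α > 0, M_X(α, n) < ∞ if and only if α < 1; (2) if moreover Condition (A) holds (there exists λ > 0 with c_k ≤ λ·σ(k) for all k ≥ 0), then there exist constants a₁, a₂ > 0 such that for all n ≥ 1 and all 0 < α < 1, a₁ · n^α/(1−α) ≤ M_X(α, n) ≤ a₂ · n^α/(1−α). -/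
open scoped BigOperators Classical

/-- Convolution of two real-valued functions on a group:
`(f * g)(x) = ∑_y f(y) g(y⁻¹ x)`. -/
noncomputable def gconv {G : Type*} [Group G] (f g : G → ℝ) : G → ℝ :=
  fun x => ∑' y : G, f y * g (y⁻¹ * x)

/-- `n`-fold convolution power, with `f^{*0} = δ_e` and `f^{*(n+1)} = f * f^{*n}`
(so `f^{*1} = f`). -/
noncomputable def gconvPow {G : Type*} [Group G] (f : G → ℝ) : ℕ → G → ℝ
  | 0 => fun x => if x = 1 then 1 else 0
  | n + 1 => gconv f (gconvPow f n)

open ENNReal Filter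

noncomputable def econv {G : Type*} [Group G] (f g : G → ℝ≥0∞) : G → ℝ≥0∞ :=
  fun x => ∑' y : G, f y * g (y⁻¹ * x)

noncomputable def econvPow {G : Type*} [Group G] (f : G → ℝ≥0∞) : ℕ → G → ℝ≥0∞
  | 0 => fun x => if x = 1 then 1 else 0
  | n + 1 => econv f (econvPow f n)

structure Setup (G : Type*) [Group G] where
  H : ℕ → Subgroup G
  hfin : ∀ k, ((H k : Set G)).Finite
  hlt : ∀ k, H k < H (k + 1)
  hunion : ∀ x : G, ∃ k, x ∈ H k
  c : ℕ → ℝ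
  hc : ∀ k, 0 < c k
  hcsum : ∑' k : ℕ, c k = 1
  m : ℕ → G → ℝ
  hm : ∀ k x, m k x = if x ∈ H k then ((Nat.card (H k) : ℝ))⁻¹ else 0
  mu : G → ℝ
  hmu : ∀ x, mu x = ∑' k : ℕ, c k * m k x
  sig : ℕ → ℝ
  hsig : ∀ k, sig k = ∑' i : ℕ, c (k + 1 + i)
  abs : G → ℝ
  habs : ∀ (x : G) (n : ℕ), x ∈ H n → (∀ j < n, x ∉ H j) →
      abs x = if n = 0 then 0 else (sig (n - 1))⁻¹ - 1

namespace Setup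

variable {G : Type*} [Group G] (S : Setup G)

lemma csummable : Summable S.c := by
  by_contra h
  have := tsum_eq_zero_of_not_summable h
  rw [S.hcsum] at this; norm_num at this

/-- tail sum from `k` on -/
noncomputable def t (k : ℕ) : ℝ := ∑' i : ℕ, S.c (k + i)

lemma summable_tail (k : ℕ) : Summable (fun i => S.c (k + i)) :=
  ((summable_nat_add_iff k).2 S.csummable).congr (by intro i; simp [Nat.add_comm])

lemma t_zero : S.t 0 = 1 := by
  have : S.t 0 = ∑' i : ℕ, S.c i := by unfold t; congr 1; ext i; simp
  rw [this, S.hcsum]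

lemma t_succ (k : ℕ) : S.t (k + 1) = S.sig k := by
  rw [S.hsig]; unfold t; rfl

lemma t_eq (k : ℕ) : S.t k = S.c k + S.t (k + 1) := by
  unfold t
  rw [Summable.tsum_eq_zero_add (S.summable_tail k)]
  have h1 : k + 0 = k := by omega
  rw [h1]
  congr 1
  exact tsum_congr (fun i => by congr 1; omega)

lemma t_pos (k : ℕ) : 0 < S.t k := by
  have := (S.summable_tail k)
  exact Summable.tsum_pos this (fun i => (S.hc _).le) 0 (S.hc _)

lemma t_succ_lt (k : ℕ) : S.t (k + 1) < S.t k := by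
  have := S.t_eq k; have := S.hc k; linarith

lemma t_anti : Antitone S.t := by
  apply antitone_nat_of_succ_le
  intro k; exact (S.t_succ_lt k).le

lemma t_le_one (k : ℕ) : S.t k ≤ 1 := by
  rw [← S.t_zero]; exact S.t_anti (Nat.zero_le k)

lemma t_eq_one_sub (k : ℕ) : S.t k = 1 - ∑ i ∈ Finset.range k, S.c i := by
  induction k with
  | zero => simp [S.t_zero]
  | succ k ih =>
    have := S.t_eq k
    rw [Finset.sum_range_succ]; linarith

lemma t_tendsto : Tendsto S.t atTop (nhds 0) := by
  have h1 : Tendsto (fun k => ∑ i ∈ Finset.range k, S.c i) atTop (nhds 1) := by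
    have := S.csummable.hasSum.tendsto_sum_nat
    rwa [S.hcsum] at this
  have : Tendsto (fun k => 1 - ∑ i ∈ Finset.range k, S.c i) atTop (nhds (1 - 1)) :=
    tendsto_const_nhds.sub h1
  simp only [sub_self] at this
  exact this.congr (fun k => (S.t_eq_one_sub k).symm)

lemma Hmono : Monotone (fun k => S.H k) := by
  apply monotone_nat_of_le_succ
  intro k; exact (S.hlt k).le

/-- minimal level -/
noncomputable def lev (x : G) : ℕ := Nat.find (S.hunion x)

lemma lev_mem (x : G) : x ∈ S.H (S.lev x) := Nat.find_spec (S.hunion x)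

lemma lev_min {x : G} {j : ℕ} (h : j < S.lev x) : x ∉ S.H j := Nat.find_min (S.hunion x) h

lemma lev_le {x : G} {k : ℕ} (h : x ∈ S.H k) : S.lev x ≤ k := Nat.find_le h

lemma abs_eq (x : G) : S.abs x = (S.t (S.lev x))⁻¹ - 1 := by
  have h := S.habs x (S.lev x) (S.lev_mem x) (fun j hj => S.lev_min hj)
  rcases Nat.eq_zero_or_pos (S.lev x) with h0 | h0
  · rw [h0] at h ⊢; simp at h; rw [h, S.t_zero]; norm_num
  · obtain ⟨n, hn⟩ := Nat.exists_eq_add_of_le h0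
    rw [h, if_neg (by omega), hn]
    have h1 : Nat.succ 0 + n - 1 = n := by omega
    have h2 : Nat.succ 0 + n = n + 1 := by omega
    rw [h1, h2, S.t_succ]

lemma abs_nonneg (x : G) : 0 ≤ S.abs x := by
  rw [S.abs_eq]
  have h1 : S.t (S.lev x) ≤ 1 := S.t_le_one _
  have h2 : 0 < S.t (S.lev x) := S.t_pos _
  have := one_le_inv_iff₀.2 ⟨h2, h1⟩
  linarith

lemma abs_le_of_mem {x : G} {k : ℕ} (h : x ∈ S.H k) : S.abs x ≤ (S.t k)⁻¹ - 1 := by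
  rw [S.abs_eq]
  have : S.t k ≤ S.t (S.lev x) := S.t_anti (S.lev_le h)
  have h2 : 0 < S.t k := S.t_pos _
  have := one_div_le_one_div_of_le h2 this
  simp only [one_div] at this
  linarith

lemma lev_eq_of {x : G} {k : ℕ} (hk : 1 ≤ k) (h1 : x ∈ S.H k) (h2 : x ∉ S.H (k - 1)) :
    S.lev x = k := by
  have hle := S.lev_le h1
  by_contra hne
  have : S.lev x ≤ k - 1 := by omega
  exact h2 (S.Hmono this (S.lev_mem x))

/-- card of H k -/
noncomputable def N (k : ℕ) : ℕ := Nat.card (S.H k)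

noncomputable def Fset (k : ℕ) : Finset G := (S.hfin k).toFinset

lemma mem_Fset {k : ℕ} {x : G} : x ∈ S.Fset k ↔ x ∈ S.H k := by
  unfold Fset; simp

lemma card_Fset (k : ℕ) : (S.Fset k).card = S.N k := by
  unfold Fset N
  have h1 : Nat.card (S.H k) = ((S.H k : Set G)).ncard := by
    rw [← Nat.card_coe_set_eq]; rfl
  rw [h1, Set.ncard_eq_toFinset_card _ (S.hfin k)]

lemma N_pos (k : ℕ) : 0 < S.N k := by
  unfold N
  have : Finite (S.H k) := (S.hfin k).to_subtype
  exact Nat.card_pos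

lemma N_lt (k : ℕ) : S.N k < S.N (k + 1) := by
  rw [← S.card_Fset, ← S.card_Fset]
  apply Finset.card_strictMono
  constructor
  · intro x hx; rw [S.mem_Fset] at *; exact (S.hlt k).le hx
  · intro hsub
    obtain ⟨x, hx1, hx2⟩ := SetLike.exists_of_lt (S.hlt k)
    have := hsub (S.mem_Fset.2 hx1)
    exact hx2 (S.mem_Fset.1 this)

lemma N_double (k : ℕ) : 2 * S.N k ≤ S.N (k + 1) := by
  have hdvd : S.N k ∣ S.N (k + 1) := Subgroup.card_dvd_of_le (S.hlt k).le
  obtain ⟨q, hq⟩ := hdvd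
  have hlt := S.N_lt k
  have hp := S.N_pos k
  rcases Nat.lt_or_ge q 2 with h | h
  · interval_cases q <;> omega
  · calc 2 * S.N k ≤ S.N k * q := by nlinarith
      _ = S.N (k+1) := hq.symm

/-- uniform density on H k with values in ℝ≥0∞ -/
noncomputable def Mk (k : ℕ) : G → ℝ≥0∞ :=
  fun x => if x ∈ S.H k then ((S.N k : ℝ≥0∞))⁻¹ else 0

lemma ofReal_m (k : ℕ) (x : G) : ENNReal.ofReal (S.m k x) = S.Mk k x := by
  rw [S.hm, Mk]
  split
  · rw [ENNReal.ofReal_inv_of_pos (by exact_mod_cast S.N_pos k), ENNReal.ofReal_natCast]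
    rfl
  · simp

lemma m_nonneg (k : ℕ) (x : G) : 0 ≤ S.m k x := by
  rw [S.hm]; split
  · positivity
  · exact le_refl 0

lemma Ncast_ne_zero (k : ℕ) : ((S.N k : ℝ≥0∞)) ≠ 0 := by
  exact_mod_cast (S.N_pos k).ne'

lemma Ncast_ne_top (k : ℕ) : ((S.N k : ℝ≥0∞)) ≠ ⊤ := ENNReal.natCast_ne_top _

lemma tsum_Mk (k : ℕ) : ∑' x : G, S.Mk k x = 1 := by
  rw [tsum_eq_sum (s := S.Fset k) (by intro b hb; rw [Mk, if_neg (fun h => hb (S.mem_Fset.2 h))])]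
  have : ∀ b ∈ S.Fset k, S.Mk k b = ((S.N k : ℝ≥0∞))⁻¹ := by
    intro b hb; rw [Mk, if_pos (S.mem_Fset.1 hb)]
  rw [Finset.sum_congr rfl this, Finset.sum_const, S.card_Fset, nsmul_eq_mul]
  exact ENNReal.mul_inv_cancel (S.Ncast_ne_zero k) (S.Ncast_ne_top k)

/-- translate-sum invariance: for any g and e, sum of Mk over y ↦ y⁻¹x etc. -/
lemma tsum_comp_mulright (f : G → ℝ≥0∞) (x : G) : ∑' y : G, f (y⁻¹ * x) = ∑' y : G, f y := by
  exact ((Equiv.inv G).trans (Equiv.mulRight x)).tsum_eq f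

lemma econv_Mk (j k : ℕ) (x : G) : econv (S.Mk j) (S.Mk k) x = S.Mk (max j k) x := by
  unfold econv
  rcases le_or_gt j k with hjk | hjk
  · rw [max_eq_right hjk]
    have hterm : ∀ y : G, S.Mk j y * S.Mk k (y⁻¹ * x) = S.Mk j y * S.Mk k x := by
      intro y
      by_cases hy : y ∈ S.H j
      · have hyk : y ∈ S.H k := S.Hmono hjk hy
        have : (y⁻¹ * x ∈ S.H k) ↔ (x ∈ S.H k) := by
          constructor
          · intro h; have := mul_mem hyk h; rwa [mul_inv_cancel_left] at this
          · intro h; exact mul_mem (inv_mem hyk) h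
        unfold Mk
        by_cases hx : x ∈ S.H k
        · rw [if_pos (this.2 hx), if_pos hx]
        · rw [if_neg (fun h => hx (this.1 h)), if_neg hx]
      · unfold Mk; rw [if_neg hy, zero_mul, zero_mul]
    rw [tsum_congr hterm, ENNReal.tsum_mul_right, S.tsum_Mk, one_mul]
  · rw [max_eq_left hjk.le]
    by_cases hx : x ∈ S.H j
    · have hterm : ∀ y : G, S.Mk j y * S.Mk k (y⁻¹ * x) = ((S.N j : ℝ≥0∞))⁻¹ * S.Mk k (y⁻¹ * x) := by
        intro y
        by_cases hz : y⁻¹ * x ∈ S.H k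
        · have hzj : y⁻¹ * x ∈ S.H j := S.Hmono hjk.le hz
          have hyj : y ∈ S.H j := by
            have := mul_mem hx (inv_mem hzj)
            rwa [mul_inv_rev, inv_inv, mul_inv_cancel_left] at this
          unfold Mk
          rw [if_pos hyj]
        · unfold Mk; rw [if_neg hz, mul_zero, mul_zero]
      rw [tsum_congr hterm, ENNReal.tsum_mul_left, tsum_comp_mulright (S.Mk k) x, S.tsum_Mk,
        mul_one, Mk, if_pos hx]
    · have hterm : ∀ y : G, S.Mk j y * S.Mk k (y⁻¹ * x) = 0 := by
        intro y
        by_cases hy : y ∈ S.H j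
        · by_cases hz : y⁻¹ * x ∈ S.H k
          · exfalso
            have : x ∈ S.H j := by
              have := mul_mem hy (S.Hmono hjk.le hz)
              rwa [mul_inv_cancel_left] at this
            exact hx this
          · unfold Mk; rw [if_neg hz, mul_zero]
        · unfold Mk; rw [if_neg hy, zero_mul]
      rw [tsum_congr hterm, tsum_zero, Mk, if_neg hx]

lemma pow_sub_pow_le_nmul {a b : ℝ} (h0 : 0 ≤ b) (hba : b ≤ a) (ha : a ≤ 1) :
    ∀ n : ℕ, a ^ n - b ^ n ≤ n * (a - b)
  | 0 => by simp
  | (n+1) => by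
    have ih := pow_sub_pow_le_nmul h0 hba ha n
    have h1 : a ^ (n+1) - b ^ (n+1) = a * (a ^ n - b ^ n) + (a - b) * b ^ n := by ring
    have h2 : 0 ≤ a ^ n - b ^ n := by
      have := pow_le_pow_left₀ h0 hba n; linarith
    have h3 : b ^ n ≤ 1 := pow_le_one₀ h0 (le_trans hba ha)
    have h4 : a * (a ^ n - b ^ n) ≤ a ^ n - b ^ n := by nlinarith
    have h5 : (a - b) * b ^ n ≤ (a - b) := by nlinarith
    push_cast
    nlinarith

lemma nmul_le_pow_sub_pow {a b : ℝ} (h0 : 0 ≤ b) (hba : b ≤ a) :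
    ∀ n : ℕ, ((n:ℝ)+1) * b ^ n * (a - b) ≤ a ^ (n+1) - b ^ (n+1)
  | 0 => by simp
  | (n+1) => by
    have ih := nmul_le_pow_sub_pow h0 hba n
    have h2 : 0 ≤ a ^ (n+1) - b ^ (n+1) := by
      have := pow_le_pow_left₀ h0 hba (n+1); linarith
    have hb : 0 ≤ b ^ (n+1) := pow_nonneg h0 _
    have key : a * (a ^ (n+1) - b ^ (n+1)) ≥ b * (((n:ℝ)+1) * b ^ n * (a - b)) := by
      calc a * (a ^ (n+1) - b ^ (n+1)) ≥ b * (a ^ (n+1) - b ^ (n+1)) := by nlinarith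
        _ ≥ b * (((n:ℝ)+1) * b ^ n * (a - b)) := by
            apply mul_le_mul_of_nonneg_left ih h0
    have h1 : a ^ (n+2) - b ^ (n+2) = a * (a ^ (n+1) - b ^ (n+1)) + (a - b) * b ^ (n+1) := by
      ring
    have : b * (((n:ℝ)+1) * b ^ n * (a - b)) = ((n:ℝ)+1) * b ^ (n+1) * (a-b) := by ring
    push_cast
    nlinarith

noncomputable def Ck (k : ℕ) : ℝ≥0∞ := ENNReal.ofReal (S.c k)

noncomputable def U : G → ℝ≥0∞ := fun x => ∑' k, S.Ck k * S.Mk k x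

lemma mu_nonneg (x : G) : 0 ≤ S.mu x := by
  rw [S.hmu]
  exact tsum_nonneg (fun k => mul_nonneg (S.hc k).le (S.m_nonneg k x))

lemma summable_cm (x : G) : Summable (fun k => S.c k * S.m k x) := by
  apply S.csummable.of_nonneg_of_le
    (fun k => mul_nonneg (S.hc k).le (S.m_nonneg k x))
  intro k
  have hm1 : S.m k x ≤ 1 := by
    rw [S.hm]; split
    · rw [inv_le_one_iff₀]; right; exact_mod_cast S.N_pos k
    · norm_num
  nlinarith [S.hc k, S.m_nonneg k x]

lemma ofReal_mu (x : G) : ENNReal.ofReal (S.mu x) = S.U x := by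
  rw [S.hmu, ENNReal.ofReal_tsum_of_nonneg
    (fun k => mul_nonneg (S.hc k).le (S.m_nonneg k x)) (S.summable_cm x)]
  unfold U
  exact tsum_congr (fun k => by rw [ENNReal.ofReal_mul (S.hc k).le, S.ofReal_m]; rfl)

lemma tsum_U : ∑' x : G, S.U x = 1 := by
  unfold U
  rw [ENNReal.tsum_comm]
  have : ∀ k : ℕ, ∑' x : G, S.Ck k * S.Mk k x = S.Ck k := by
    intro k
    rw [ENNReal.tsum_mul_left, S.tsum_Mk, mul_one]
  rw [tsum_congr this]
  unfold Ck
  rw [← ENNReal.ofReal_tsum_of_nonneg (fun k => (S.hc k).le) S.csummable, S.hcsum,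
    ENNReal.ofReal_one]

noncomputable def Q (k : ℕ) : ℝ := 1 - S.t k

lemma Q_zero : S.Q 0 = 0 := by unfold Q; rw [S.t_zero]; ring

lemma Q_nonneg (k : ℕ) : 0 ≤ S.Q k := by unfold Q; have := S.t_le_one k; linarith

lemma Q_le_one (k : ℕ) : S.Q k ≤ 1 := by unfold Q; have := S.t_pos k; linarith

lemma Q_mono {j k : ℕ} (h : j ≤ k) : S.Q j ≤ S.Q k := by
  unfold Q; have := S.t_anti h; linarith

lemma Q_succ_sub (k : ℕ) : S.Q (k+1) - S.Q k = S.c k := by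
  unfold Q; have := S.t_eq k; linarith

noncomputable def w (n k : ℕ) : ℝ := S.Q (k+1) ^ n - S.Q k ^ n

lemma w_nonneg (n k : ℕ) : 0 ≤ S.w n k := by
  unfold w
  have := pow_le_pow_left₀ (S.Q_nonneg k) (S.Q_mono (Nat.le_succ k)) n
  linarith

lemma w_one (k : ℕ) : S.w 1 k = S.c k := by
  unfold w; rw [pow_one, pow_one]; exact S.Q_succ_sub k

lemma w_le (n k : ℕ) : S.w n k ≤ n * S.c k := by
  unfold w
  rw [← S.Q_succ_sub k]
  exact pow_sub_pow_le_nmul (S.Q_nonneg k) (S.Q_mono (Nat.le_succ k)) (S.Q_le_one _) n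

lemma w_ge (n k : ℕ) (hn : 1 ≤ n) : (n:ℝ) * S.Q k ^ (n-1) * S.c k ≤ S.w n k := by
  obtain ⟨p, rfl⟩ : ∃ p, n = p + 1 := ⟨n - 1, by omega⟩
  unfold w
  rw [← S.Q_succ_sub k]
  have := nmul_le_pow_sub_pow (S.Q_nonneg k) (S.Q_mono (Nat.le_succ k)) p
  simpa using this

noncomputable def W (n k : ℕ) : ℝ≥0∞ := ENNReal.ofReal (S.w n k)

lemma sum_range_w (n j : ℕ) (hn : 1 ≤ n) :
    ∑ k ∈ Finset.range j, S.w n k = S.Q j ^ n := by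
  unfold w
  rw [Finset.sum_range_sub (fun k => S.Q k ^ n), S.Q_zero, zero_pow (by omega), sub_zero]

lemma tsum_W_le (n : ℕ) : ∑' k, S.W n k ≤ 1 := by
  rw [ENNReal.tsum_eq_iSup_sum]
  apply iSup_le
  intro s
  obtain ⟨Nb, hNb⟩ := s.exists_nat_subset_range
  calc ∑ k ∈ s, S.W n k ≤ ∑ k ∈ Finset.range Nb, S.W n k :=
        Finset.sum_le_sum_of_subset hNb
    _ = ENNReal.ofReal (∑ k ∈ Finset.range Nb, S.w n k) := by
        rw [ENNReal.ofReal_sum_of_nonneg (fun i _ => S.w_nonneg n i)]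
        rfl
    _ ≤ 1 := by
        rcases Nat.eq_zero_or_pos n with rfl | hn
        · simp [w]
        · rw [S.sum_range_w n Nb hn]
          rw [← ENNReal.ofReal_one]
          exact ENNReal.ofReal_le_ofReal
            (pow_le_one₀ (S.Q_nonneg _) (S.Q_le_one _))

lemma econv_delta (f : G → ℝ≥0∞) (x : G) :
    econv f (fun z => if z = 1 then 1 else 0) x = f x := by
  unfold econv
  rw [tsum_eq_single x]
  · simp
  · intro y hy
    have : y⁻¹ * x ≠ 1 := by
      intro h
      apply hy
      have := congrArg (fun z => y * z) h
      simpa using this.symm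
    simp [this]

lemma sum_Ck_le (k : ℕ) : ∑' j, (if j ≤ k then S.Ck j else 0) = ENNReal.ofReal (S.Q (k+1)) := by
  rw [tsum_eq_sum (s := Finset.range (k+1))
    (by intro j hj; rw [if_neg]; simp at hj; omega)]
  have h1 : ∀ j ∈ Finset.range (k+1), (if j ≤ k then S.Ck j else 0) = ENNReal.ofReal (S.c j) := by
    intro j hj; simp at hj; rw [if_pos (by omega)]; rfl
  rw [Finset.sum_congr rfl h1, ← ENNReal.ofReal_sum_of_nonneg (fun i _ => (S.hc i).le)]
  congr 1
  have := S.t_eq_one_sub (k+1)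
  unfold Q
  linarith

lemma sum_W_lt (n j : ℕ) (hn : 1 ≤ n) :
    ∑' k, (if k < j then S.W n k else 0) = ENNReal.ofReal (S.Q j ^ n) := by
  rw [tsum_eq_sum (s := Finset.range j)
    (by intro i hi; rw [if_neg]; simp at hi; omega)]
  have h1 : ∀ i ∈ Finset.range j, (if i < j then S.W n i else 0) = ENNReal.ofReal (S.w n i) := by
    intro i hi; simp at hi; rw [if_pos hi]; rfl
  rw [Finset.sum_congr rfl h1, ← ENNReal.ofReal_sum_of_nonneg (fun i _ => S.w_nonneg n i),
    S.sum_range_w n j hn]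

lemma econv_U_Mk (k : ℕ) (x : G) :
    econv S.U (S.Mk k) x = ∑' j, S.Ck j * S.Mk (max j k) x := by
  unfold econv U
  calc ∑' y, (∑' j, S.Ck j * S.Mk j y) * S.Mk k (y⁻¹ * x)
      = ∑' y, ∑' j, S.Ck j * S.Mk j y * S.Mk k (y⁻¹ * x) := by
        exact tsum_congr fun y => ENNReal.tsum_mul_right.symm
    _ = ∑' j, ∑' y, S.Ck j * S.Mk j y * S.Mk k (y⁻¹ * x) := ENNReal.tsum_comm
    _ = ∑' j, S.Ck j * S.Mk (max j k) x := by
        refine tsum_congr fun j => ?_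
        rw [← S.econv_Mk j k x]
        unfold econv
        rw [← ENNReal.tsum_mul_left]
        exact tsum_congr fun y => by ring

lemma econvPow_eq (n : ℕ) (hn : 1 ≤ n) (x : G) :
    econvPow S.U n x = ∑' k, S.W n k * S.Mk k x := by
  induction n generalizing x with
  | zero => omega
  | succ n ih =>
    rcases Nat.eq_zero_or_pos n with rfl | hn1
    · show econv S.U (econvPow S.U 0) x = _
      have : econvPow S.U 0 = fun z : G => if z = 1 then (1:ℝ≥0∞) else 0 := rfl
      rw [this, econv_delta]
      unfold U
      refine tsum_congr fun k => ?_
      congr 1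
      unfold Ck W
      rw [S.w_one]
    · have key : econvPow S.U (n+1) x = ∑' k, ∑' j, S.W n k * (S.Ck j * S.Mk (max j k) x) := by
        show econv S.U (econvPow S.U n) x = _
        unfold econv
        calc ∑' y, S.U y * econvPow S.U n (y⁻¹ * x)
            = ∑' y, S.U y * ∑' k, S.W n k * S.Mk k (y⁻¹ * x) := by
              exact tsum_congr fun y => by rw [ih hn1]
          _ = ∑' y, ∑' k, S.W n k * (S.U y * S.Mk k (y⁻¹ * x)) := by
              refine tsum_congr fun y => ?_
              rw [← ENNReal.tsum_mul_left]
              exact tsum_congr fun k => by ring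
          _ = ∑' k, ∑' y, S.W n k * (S.U y * S.Mk k (y⁻¹ * x)) := ENNReal.tsum_comm
          _ = ∑' k, S.W n k * econv S.U (S.Mk k) x := by
              exact tsum_congr fun k => by rw [ENNReal.tsum_mul_left]; rfl
          _ = ∑' k, S.W n k * ∑' j, S.Ck j * S.Mk (max j k) x := by
              exact tsum_congr fun k => by rw [S.econv_U_Mk]
          _ = ∑' k, ∑' j, S.W n k * (S.Ck j * S.Mk (max j k) x) := by
              exact tsum_congr fun k => ENNReal.tsum_mul_left.symm
      rw [key]
      have hsplit : ∀ k j : ℕ, S.W n k * (S.Ck j * S.Mk (max j k) x) =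
          (if j ≤ k then (S.W n k * S.Mk k x) * (if j ≤ k then S.Ck j else 0) else 0) +
          (if k < j then (S.Ck j * S.Mk j x) * (if k < j then S.W n k else 0) else 0) := by
        intro k j
        rcases le_or_gt j k with h | h
        · rw [if_pos h, if_pos h, if_neg (by omega), max_eq_right h, add_zero]
          ring
        · rw [if_neg (by omega), if_pos h, if_pos h, max_eq_left h.le, zero_add]
          ring
      calc ∑' k, ∑' j, S.W n k * (S.Ck j * S.Mk (max j k) x)
          = (∑' k, ∑' j, (if j ≤ k then (S.W n k * S.Mk k x) * (if j ≤ k then S.Ck j else 0) else 0)) +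
            (∑' k, ∑' j, (if k < j then (S.Ck j * S.Mk j x) * (if k < j then S.W n k else 0) else 0)) := by
            rw [← ENNReal.tsum_add]
            refine tsum_congr fun k => ?_
            rw [← ENNReal.tsum_add]
            exact tsum_congr fun j => hsplit k j
        _ = ∑' k, S.W (n+1) k * S.Mk k x := by
            have e1 : ∀ k, ∑' j, (if j ≤ k then (S.W n k * S.Mk k x) * (if j ≤ k then S.Ck j else 0) else 0)
                = (S.W n k * S.Mk k x) * ENNReal.ofReal (S.Q (k+1)) := by
              intro k
              rw [← S.sum_Ck_le k, ← ENNReal.tsum_mul_left]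
              refine tsum_congr fun j => ?_
              rcases le_or_gt j k with h | h
              · rw [if_pos h]
              · rw [if_neg (by omega), if_neg (by omega), mul_zero]
            have e2 : (∑' k, ∑' j, (if k < j then (S.Ck j * S.Mk j x) * (if k < j then S.W n k else 0) else 0))
                = ∑' j, (S.Ck j * S.Mk j x) * ENNReal.ofReal (S.Q j ^ n) := by
              rw [ENNReal.tsum_comm]
              refine tsum_congr fun j => ?_
              rw [← S.sum_W_lt n j hn1, ← ENNReal.tsum_mul_left]
              refine tsum_congr fun k => ?_
              rcases lt_or_ge k j with h | h
              · rw [if_pos h]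
              · rw [if_neg (by omega), if_neg (by omega), mul_zero]
            rw [tsum_congr e1, e2, ← ENNReal.tsum_add]
            refine tsum_congr fun k => ?_
            have : S.W n k * S.Mk k x * ENNReal.ofReal (S.Q (k+1)) +
                S.Ck k * S.Mk k x * ENNReal.ofReal (S.Q k ^ n) =
                (S.W n k * ENNReal.ofReal (S.Q (k+1)) + S.Ck k * ENNReal.ofReal (S.Q k ^ n)) * S.Mk k x := by
              ring
            rw [this]
            congr 1
            unfold W Ck
            rw [← ENNReal.ofReal_mul (S.w_nonneg n k), ← ENNReal.ofReal_mul (S.hc k).le,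
              ← ENNReal.ofReal_add (mul_nonneg (S.w_nonneg n k) (S.Q_nonneg _))
                (mul_nonneg (S.hc k).le (pow_nonneg (S.Q_nonneg _) _))]
            congr 1
            have hc := S.Q_succ_sub k
            unfold w
            have : S.c k = S.Q (k+1) - S.Q k := hc.symm
            rw [this]
            ring

lemma tsum_econvPow_le (n : ℕ) : ∑' x : G, econvPow S.U n x ≤ 1 := by
  induction n with
  | zero =>
    show (∑' x : G, if x = 1 then (1:ℝ≥0∞) else 0) ≤ 1
    rw [tsum_eq_single 1 (by intro y hy; rw [if_neg hy])]
    simp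
  | succ n ih =>
    show (∑' x : G, econv S.U (econvPow S.U n) x) ≤ 1
    unfold econv
    rw [ENNReal.tsum_comm]
    calc ∑' y, ∑' x : G, S.U y * econvPow S.U n (y⁻¹ * x)
        = ∑' y, S.U y * ∑' x : G, econvPow S.U n (y⁻¹ * x) := by
          exact tsum_congr fun y => ENNReal.tsum_mul_left
      _ = ∑' y, S.U y * ∑' x : G, econvPow S.U n x := by
          refine tsum_congr fun y => ?_
          congr 1
          exact ((Equiv.mulLeft y⁻¹).tsum_eq (econvPow S.U n))
      _ ≤ ∑' y, S.U y * 1 := by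
          exact ENNReal.tsum_le_tsum fun y => mul_le_mul_right ih _
      _ = 1 := by
          simp only [mul_one]
          rw [S.tsum_U]

lemma econvPow_le_one (n : ℕ) (x : G) : econvPow S.U n x ≤ 1 :=
  le_trans (ENNReal.le_tsum x) (S.tsum_econvPow_le n)

lemma bridge (n : ℕ) : ∀ x : G, 0 ≤ gconvPow S.mu n x ∧
    ENNReal.ofReal (gconvPow S.mu n x) = econvPow S.U n x := by
  induction n with
  | zero =>
    intro x
    show (0 ≤ if x = 1 then (1:ℝ) else 0) ∧ _
    constructor
    · split <;> norm_num
    · show ENNReal.ofReal (if x = 1 then (1:ℝ) else 0) = if x = 1 then (1:ℝ≥0∞) else 0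
      split <;> simp
  | succ n ih =>
    intro x
    have hterm : ∀ y : G, S.mu y * gconvPow S.mu n (y⁻¹ * x) =
        (S.U y * econvPow S.U n (y⁻¹ * x)).toReal := by
      intro y
      rw [ENNReal.toReal_mul, ← S.ofReal_mu, ← (ih (y⁻¹ * x)).2,
        ENNReal.toReal_ofReal (S.mu_nonneg y), ENNReal.toReal_ofReal (ih (y⁻¹ * x)).1]
    have hne : ∀ y : G, S.U y * econvPow S.U n (y⁻¹ * x) ≠ ⊤ := by
      intro y
      apply ENNReal.mul_ne_top
      · rw [← S.ofReal_mu]; exact ENNReal.ofReal_ne_top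
      · exact ne_top_of_le_ne_top ENNReal.one_ne_top (S.econvPow_le_one n _)
    have hsum : ∑' y, S.U y * econvPow S.U n (y⁻¹ * x) = econvPow S.U (n+1) x := rfl
    have hfin : ∑' y, S.U y * econvPow S.U n (y⁻¹ * x) ≠ ⊤ := by
      rw [hsum]
      exact ne_top_of_le_ne_top ENNReal.one_ne_top (S.econvPow_le_one (n+1) x)
    have heq : gconvPow S.mu (n+1) x = (econvPow S.U (n+1) x).toReal := by
      show gconv S.mu (gconvPow S.mu n) x = _
      unfold gconv
      rw [tsum_congr hterm, ← ENNReal.tsum_toReal_eq hne, hsum]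
    constructor
    · rw [heq]; exact ENNReal.toReal_nonneg
    · rw [heq, ENNReal.ofReal_toReal (hsum ▸ hfin)]

/-- weighted AM-GM tangent inequalities for rpow -/
lemma rpow_tangent_hi {a b beta : ℝ} (hb : 0 < b) (hba : b ≤ a) (hb0 : 0 < beta)
    (hb1 : beta ≤ 1) : beta * ((a - b) * a ^ (beta - 1)) ≤ a ^ beta - b ^ beta := by
  have ha : 0 < a := lt_of_lt_of_le hb hba
  have key := Real.geom_mean_le_arith_mean2_weighted hb0.le (by linarith : (0:ℝ) ≤ 1 - beta)
    (by positivity : (0:ℝ) ≤ b / a) (zero_le_one) (by ring)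
  simp only [Real.one_rpow, mul_one] at key
  have hA : (0:ℝ) < a ^ beta := Real.rpow_pos_of_pos ha _
  have h1 : (b / a) ^ beta = b ^ beta / a ^ beta := Real.div_rpow hb.le ha.le _
  have h2 : a ^ (beta - 1) = a ^ beta / a := by
    rw [Real.rpow_sub ha, Real.rpow_one]
  have h3 : b ^ beta ≤ (beta * (b / a) + (1 - beta)) * a ^ beta := by
    calc b ^ beta = (b/a) ^ beta * a ^ beta := by rw [h1]; field_simp
      _ ≤ (beta * (b / a) + (1 - beta)) * a ^ beta := by
          apply mul_le_mul_of_nonneg_right key hA.le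
  have h4 : (beta * (b / a) + (1 - beta)) * a ^ beta
      = beta * b * (a ^ beta / a) + (1 - beta) * a ^ beta := by
    field_simp
  rw [h2]
  rw [h4] at h3
  have hD : a * (a ^ beta / a) = a ^ beta := by field_simp
  calc beta * ((a - b) * (a ^ beta / a))
      = beta * (a * (a ^ beta / a)) - beta * (b * (a ^ beta / a)) := by ring
    _ = beta * (a ^ beta) - beta * (b * (a ^ beta / a)) := by rw [hD]
    _ ≤ a ^ beta - b ^ beta := by nlinarith [h3]

lemma rpow_tangent_lo {a b beta : ℝ} (hb : 0 < b) (hba : b ≤ a) (hb0 : 0 < beta)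
    (hb1 : beta ≤ 1) : a ^ beta - b ^ beta ≤ beta * ((a - b) * b ^ (beta - 1)) := by
  have ha : 0 < a := lt_of_lt_of_le hb hba
  have key := Real.geom_mean_le_arith_mean2_weighted hb0.le (by linarith : (0:ℝ) ≤ 1 - beta)
    (by positivity : (0:ℝ) ≤ a / b) (zero_le_one) (by ring)
  simp only [Real.one_rpow, mul_one] at key
  have hB : (0:ℝ) < b ^ beta := Real.rpow_pos_of_pos hb _
  have h1 : (a / b) ^ beta = a ^ beta / b ^ beta := Real.div_rpow ha.le hb.le _
  have h2 : b ^ (beta - 1) = b ^ beta / b := by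
    rw [Real.rpow_sub hb, Real.rpow_one]
  have h3 : a ^ beta ≤ (beta * (a / b) + (1 - beta)) * b ^ beta := by
    calc a ^ beta = (a/b) ^ beta * b ^ beta := by rw [h1]; field_simp
      _ ≤ (beta * (a / b) + (1 - beta)) * b ^ beta := by
          apply mul_le_mul_of_nonneg_right key hB.le
  have h4 : (beta * (a / b) + (1 - beta)) * b ^ beta
      = beta * a * (b ^ beta / b) + (1 - beta) * b ^ beta := by
    field_simp
  rw [h2]
  rw [h4] at h3
  have hD : b * (b ^ beta / b) = b ^ beta := by field_simp
  calc a ^ beta - b ^ beta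
      ≤ beta * a * (b ^ beta / b) + (1 - beta) * b ^ beta - b ^ beta := by linarith
    _ = beta * (a * (b ^ beta / b)) - beta * (b * (b ^ beta / b)) := by rw [hD]; ring
    _ = beta * ((a - b) * (b ^ beta / b)) := by ring

lemma telescope_Ico {f : ℕ → ℝ} {K B : ℕ} (h : K ≤ B) :
    ∑ k ∈ Finset.Ico K B, (f k - f (k+1)) = f K - f B := by
  induction B with
  | zero => interval_cases K; simp
  | succ B ih =>
    rcases Nat.lt_or_ge K (B+1) with h1 | h1
    · have hKB : K ≤ B := by omega
      rw [Finset.sum_Ico_succ_top hKB, ih hKB]; ring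
    · have hKB : K = B + 1 := by omega
      subst hKB; simp

/-- telescoping gap bound over an arbitrary finset contained in [K,∞) -/
lemma sum_gaps_le {f : ℕ → ℝ} (hf : Antitone f) (h0 : ∀ k, 0 ≤ f k) (K : ℕ)
    (s : Finset ℕ) (hs : ∀ k ∈ s, K ≤ k) : ∑ k ∈ s, (f k - f (k+1)) ≤ f K := by
  obtain ⟨Nb, hNb⟩ := s.exists_nat_subset_range
  set B := max (Nb + 1) K with hB
  have hsub : s ⊆ Finset.Ico K B := by
    intro k hk
    simp only [Finset.mem_Ico]
    have := hs k hk
    have := hNb hk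
    simp at this
    omega
  calc ∑ k ∈ s, (f k - f (k+1)) ≤ ∑ k ∈ Finset.Ico K B, (f k - f (k+1)) := by
        apply Finset.sum_le_sum_of_subset_of_nonneg hsub
        intro i _ _
        have := hf (Nat.le_succ i)
        linarith
    _ = f K - f B := telescope_Ico (le_max_right _ _)
    _ ≤ f K := by have := h0 B; linarith

variable {S}

variable (S)

noncomputable def A (alpha : ℝ) (x : G) : ℝ≥0∞ := ENNReal.ofReal (S.abs x ^ alpha)

noncomputable def EE (alpha : ℝ) (k : ℕ) : ℝ≥0∞ := ∑' y : G, S.A alpha y * S.Mk k y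

noncomputable def T (alpha : ℝ) (n : ℕ) : ℝ≥0∞ := ∑' y : G, S.A alpha y * econvPow S.U n y

lemma target_eq (n : ℕ) (alpha : ℝ) (x : G) :
    S.abs x ^ alpha * gconvPow S.mu n x = (S.A alpha x * econvPow S.U n x).toReal := by
  rw [ENNReal.toReal_mul]
  unfold A
  rw [ENNReal.toReal_ofReal (Real.rpow_nonneg (S.abs_nonneg x) _)]
  congr 1
  have h := S.bridge n x
  rw [← h.2, ENNReal.toReal_ofReal h.1]

lemma A_ne_top (alpha : ℝ) (x : G) : S.A alpha x ≠ ⊤ := ENNReal.ofReal_ne_top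

lemma term_ne_top (n : ℕ) (alpha : ℝ) (x : G) : S.A alpha x * econvPow S.U n x ≠ ⊤ :=
  ENNReal.mul_ne_top (S.A_ne_top alpha x)
    (ne_top_of_le_ne_top ENNReal.one_ne_top (S.econvPow_le_one n x))

lemma summable_iff (n : ℕ) (alpha : ℝ) :
    Summable (fun y : G => S.abs y ^ alpha * gconvPow S.mu n y) ↔ S.T alpha n ≠ ⊤ := by
  constructor
  · intro hs
    have h1 : ENNReal.ofReal (∑' y : G, S.abs y ^ alpha * gconvPow S.mu n y) = S.T alpha n := by
      rw [ENNReal.ofReal_tsum_of_nonneg (fun y => by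
        rw [S.target_eq n alpha y]; exact ENNReal.toReal_nonneg) hs]
      unfold T
      refine tsum_congr fun y => ?_
      rw [S.target_eq n alpha y, ENNReal.ofReal_toReal (S.term_ne_top n alpha y)]
    rw [← h1]
    exact ENNReal.ofReal_ne_top
  · intro ht
    have := ENNReal.summable_toReal (f := fun y : G => S.A alpha y * econvPow S.U n y) ht
    exact this.congr fun y => (S.target_eq n alpha y).symm

lemma tsum_eq_toReal (n : ℕ) (alpha : ℝ) :
    ∑' y : G, S.abs y ^ alpha * gconvPow S.mu n y = (S.T alpha n).toReal := by
  unfold T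
  rw [ENNReal.tsum_toReal_eq (fun y => S.term_ne_top n alpha y)]
  exact tsum_congr fun y => S.target_eq n alpha y

lemma T_eq (n : ℕ) (hn : 1 ≤ n) (alpha : ℝ) :
    S.T alpha n = ∑' k, S.W n k * S.EE alpha k := by
  unfold T
  calc ∑' y : G, S.A alpha y * econvPow S.U n y
      = ∑' y : G, ∑' k, S.W n k * (S.A alpha y * S.Mk k y) := by
        refine tsum_congr fun y => ?_
        rw [S.econvPow_eq n hn y, ← ENNReal.tsum_mul_left]
        exact tsum_congr fun k => by ring
    _ = ∑' k, ∑' y : G, S.W n k * (S.A alpha y * S.Mk k y) := ENNReal.tsum_comm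
    _ = ∑' k, S.W n k * S.EE alpha k := by
        exact tsum_congr fun k => by rw [ENNReal.tsum_mul_left]; rfl

lemma EE_zero {alpha : ℝ} (halpha : 0 < alpha) : S.EE alpha 0 = 0 := by
  unfold EE
  have hz : ∀ y : G, S.A alpha y * S.Mk 0 y = 0 := ?_
  · calc ∑' y : G, S.A alpha y * S.Mk 0 y = ∑' _ : G, (0:ℝ≥0∞) := tsum_congr hz
      _ = 0 := tsum_zero
  intro y
  by_cases hy : y ∈ S.H 0
  · have hlev : S.lev y = 0 := Nat.le_zero.1 (S.lev_le hy)
    have : S.abs y = 0 := by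
      rw [S.abs_eq, hlev, S.t_zero]; norm_num
    unfold A
    rw [this, Real.zero_rpow halpha.ne', ENNReal.ofReal_zero, zero_mul]
  · unfold Mk
    rw [if_neg hy, mul_zero]

lemma EE_le {alpha : ℝ} (halpha : 0 < alpha) (k : ℕ) :
    S.EE alpha k ≤ ENNReal.ofReal (S.t k ^ (-alpha)) := by
  unfold EE
  have hbound : ∀ y : G, S.A alpha y * S.Mk k y ≤
      ENNReal.ofReal (S.t k ^ (-alpha)) * S.Mk k y := by
    intro y
    by_cases hy : y ∈ S.H k
    · apply mul_le_mul_left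
      unfold A
      apply ENNReal.ofReal_le_ofReal
      have h1 : S.abs y ≤ (S.t k)⁻¹ := by
        have := S.abs_le_of_mem hy
        have h2 := S.t_pos k
        have : (S.t k)⁻¹ - 1 ≤ (S.t k)⁻¹ := by linarith
        linarith [S.abs_le_of_mem hy]
      calc S.abs y ^ alpha ≤ ((S.t k)⁻¹) ^ alpha :=
            Real.rpow_le_rpow (S.abs_nonneg y) h1 halpha.le
        _ = S.t k ^ (-alpha) := by
            rw [Real.inv_rpow (S.t_pos k).le, ← Real.rpow_neg (S.t_pos k).le]
    · unfold Mk
      rw [if_neg hy, mul_zero, mul_zero]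
  calc ∑' y : G, S.A alpha y * S.Mk k y
      ≤ ∑' y : G, ENNReal.ofReal (S.t k ^ (-alpha)) * S.Mk k y := ENNReal.tsum_le_tsum hbound
    _ = ENNReal.ofReal (S.t k ^ (-alpha)) := by
        rw [ENNReal.tsum_mul_left, S.tsum_Mk, mul_one]

lemma EE_ge (alpha : ℝ) (k : ℕ) (hk : 1 ≤ k) :
    ENNReal.ofReal (((S.t k)⁻¹ - 1) ^ alpha) * 2⁻¹ ≤ S.EE alpha k := by
  set X := ENNReal.ofReal (((S.t k)⁻¹ - 1) ^ alpha) with hX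
  set D : Finset G := S.Fset k \ S.Fset (k-1) with hD
  have hsub : S.Fset (k-1) ⊆ S.Fset k := by
    intro y hy
    rw [S.mem_Fset] at *
    exact S.Hmono (by omega) hy
  have hcard : D.card = S.N k - S.N (k-1) := by
    rw [hD, Finset.card_sdiff_of_subset hsub, S.card_Fset, S.card_Fset]
  have hterm : ∀ y ∈ D, S.A alpha y * S.Mk k y = X * ((S.N k : ℝ≥0∞))⁻¹ := by
    intro y hy
    rw [hD, Finset.mem_sdiff, S.mem_Fset, S.mem_Fset] at hy
    have hlev : S.lev y = k := S.lev_eq_of hk hy.1 hy.2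
    have habs : S.abs y = (S.t k)⁻¹ - 1 := by rw [S.abs_eq, hlev]
    unfold A Mk
    rw [habs, if_pos hy.1, hX]
  have hge : ∑ y ∈ D, S.A alpha y * S.Mk k y ≤ S.EE alpha k := by
    unfold EE
    exact ENNReal.sum_le_tsum D
  rw [Finset.sum_congr rfl hterm, Finset.sum_const, hcard, nsmul_eq_mul] at hge
  refine le_trans ?_ hge
  have h2d : (S.N k : ℝ≥0∞) ≤ 2 * ((S.N k - S.N (k-1) : ℕ) : ℝ≥0∞) := by
    have hdd : S.N k ≤ 2 * (S.N k - S.N (k-1)) := by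
      have := S.N_double (k-1)
      have hkk : k - 1 + 1 = k := by omega
      rw [hkk] at this
      omega
    calc (S.N k : ℝ≥0∞) ≤ ((2 * (S.N k - S.N (k-1)) : ℕ) : ℝ≥0∞) := by exact_mod_cast hdd
      _ = 2 * ((S.N k - S.N (k-1) : ℕ) : ℝ≥0∞) := by push_cast; ring
  have key : (2:ℝ≥0∞)⁻¹ ≤ ((S.N k - S.N (k-1) : ℕ) : ℝ≥0∞) * ((S.N k : ℝ≥0∞))⁻¹ := by
    calc (2:ℝ≥0∞)⁻¹ = 2⁻¹ * ((S.N k : ℝ≥0∞) * ((S.N k : ℝ≥0∞))⁻¹) := by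
          rw [ENNReal.mul_inv_cancel (S.Ncast_ne_zero k) (S.Ncast_ne_top k), mul_one]
      _ = (2⁻¹ * (S.N k : ℝ≥0∞)) * ((S.N k : ℝ≥0∞))⁻¹ := by ring
      _ ≤ (2⁻¹ * (2 * ((S.N k - S.N (k-1) : ℕ) : ℝ≥0∞))) * ((S.N k : ℝ≥0∞))⁻¹ := by
          gcongr
      _ = ((S.N k - S.N (k-1) : ℕ) : ℝ≥0∞) * ((S.N k : ℝ≥0∞))⁻¹ := by
          rw [← mul_assoc, ENNReal.inv_mul_cancel two_ne_zero ENNReal.ofNat_ne_top, one_mul]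
  calc X * 2⁻¹ ≤ X * (((S.N k - S.N (k-1) : ℕ) : ℝ≥0∞) * ((S.N k : ℝ≥0∞))⁻¹) := by
        exact mul_le_mul_right key X
    _ = ((S.N k - S.N (k-1) : ℕ) : ℝ≥0∞) * X * ((S.N k : ℝ≥0∞))⁻¹ := by ring
    _ = ((S.N k - S.N (k-1) : ℕ) : ℝ≥0∞) * (X * ((S.N k : ℝ≥0∞))⁻¹) := by ring

lemma t_rpow_neg (k : ℕ) (alpha : ℝ) : S.t k ^ (-alpha) = ((S.t k)⁻¹) ^ alpha := by
  rw [Real.inv_rpow (S.t_pos k).le, ← Real.rpow_neg (S.t_pos k).le]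

lemma c0_lt_one : S.c 0 < 1 := by
  have h0 := S.t_zero
  have h1 := S.t_eq 0
  have := S.t_pos 1
  linarith

lemma t_one : S.t 1 = 1 - S.c 0 := by
  have h0 := S.t_zero; have h1 := S.t_eq 0; linarith

lemma one_sub_t_ge {k : ℕ} (hk : 1 ≤ k) : S.c 0 ≤ 1 - S.t k := by
  have := S.t_anti hk
  have := S.t_one
  linarith

lemma upper_master (n : ℕ) (hn : 1 ≤ n) {alpha : ℝ} (ha : 0 < alpha) (ha1 : alpha < 1) :
    S.T alpha n ≤ ENNReal.ofReal (2 * (n:ℝ) ^ alpha / (1 - alpha)) := by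
  have hnR : (0:ℝ) < n := by exact_mod_cast hn
  have hbeta : (0:ℝ) < 1 - alpha := by linarith
  have hex : ∃ k, S.t k < 1 / n := by
    have h1 : (0:ℝ) < 1/n := by positivity
    exact (S.t_tendsto.eventually_lt_const h1).exists
  set K' := Nat.find hex with hK'def
  have hK' : S.t K' < 1 / n := Nat.find_spec hex
  have hmin : ∀ k < K', ¬(S.t k < 1 / n) := fun k hk => Nat.find_min hex hk
  set g1 : ℕ → ℝ≥0∞ := fun k => if k < K' then ENNReal.ofReal ((n:ℝ) ^ alpha) * S.W n k else 0
    with hg1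
  set g2 : ℕ → ℝ≥0∞ := fun k =>
      if K' ≤ k then ENNReal.ofReal ((n:ℝ) * (S.c k * S.t k ^ (-alpha))) else 0 with hg2
  have step1 : S.T alpha n ≤ ∑' k, (g1 k + g2 k) := by
    rw [S.T_eq n hn alpha]
    apply ENNReal.tsum_le_tsum
    intro k
    rcases Nat.eq_zero_or_pos k with rfl | hk1
    · rw [S.EE_zero ha, mul_zero]
      exact zero_le
    have hEE := S.EE_le ha k
    rcases lt_or_ge k K' with hk | hk
    · have htk : 1 / (n:ℝ) ≤ S.t k := le_of_not_gt (hmin k hk)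
      have h2 : S.t k ^ (-alpha) ≤ (n:ℝ) ^ alpha := by
        rw [S.t_rpow_neg]
        apply Real.rpow_le_rpow (inv_nonneg.2 (S.t_pos k).le) _ ha.le
        rw [inv_le_comm₀ (S.t_pos k) hnR]
        rwa [one_div] at htk
      calc S.W n k * S.EE alpha k ≤ S.W n k * ENNReal.ofReal (S.t k ^ (-alpha)) :=
            mul_le_mul_right hEE _
        _ ≤ S.W n k * ENNReal.ofReal ((n:ℝ) ^ alpha) :=
            mul_le_mul_right (ENNReal.ofReal_le_ofReal h2) _
        _ = ENNReal.ofReal ((n:ℝ) ^ alpha) * S.W n k := mul_comm _ _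
        _ ≤ g1 k + g2 k := by
            rw [hg1]; simp only [if_pos hk]; exact le_self_add
    · have hW : S.W n k ≤ ENNReal.ofReal ((n:ℝ) * S.c k) :=
        ENNReal.ofReal_le_ofReal (S.w_le n k)
      calc S.W n k * S.EE alpha k
          ≤ ENNReal.ofReal ((n:ℝ) * S.c k) * ENNReal.ofReal (S.t k ^ (-alpha)) :=
            mul_le_mul' hW hEE
        _ = ENNReal.ofReal ((n:ℝ) * (S.c k * S.t k ^ (-alpha))) := by
            rw [← ENNReal.ofReal_mul (mul_nonneg hnR.le (S.hc k).le)]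
            ring_nf
        _ ≤ g1 k + g2 k := by
            rw [hg2]; simp only [if_pos hk]; exact le_add_self
  have step2 : ∑' k, g1 k ≤ ENNReal.ofReal ((n:ℝ) ^ alpha) := by
    have hb : ∀ k, g1 k ≤ ENNReal.ofReal ((n:ℝ) ^ alpha) * S.W n k := by
      intro k
      by_cases h : k < K'
      · simp only [hg1, if_pos h]
        exact le_rfl
      · simp only [hg1, if_neg h]
        exact zero_le
    calc ∑' k, g1 k ≤ ∑' k, ENNReal.ofReal ((n:ℝ) ^ alpha) * S.W n k :=
          ENNReal.tsum_le_tsum hb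
      _ = ENNReal.ofReal ((n:ℝ) ^ alpha) * ∑' k, S.W n k := ENNReal.tsum_mul_left
      _ ≤ ENNReal.ofReal ((n:ℝ) ^ alpha) * 1 := mul_le_mul_right (S.tsum_W_le n) _
      _ = ENNReal.ofReal ((n:ℝ) ^ alpha) := mul_one _
  have step3 : ∑' k, g2 k ≤ ENNReal.ofReal ((n:ℝ) ^ alpha / (1 - alpha)) := by
    rw [ENNReal.tsum_eq_iSup_sum]
    apply iSup_le
    intro s
    set s' := s.filter (fun k => K' ≤ k) with hs'
    have h1 : ∑ k ∈ s, g2 k = ENNReal.ofReal (∑ k ∈ s', (n:ℝ) * (S.c k * S.t k ^ (-alpha))) := by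
      rw [ENNReal.ofReal_sum_of_nonneg (fun i _ =>
        mul_nonneg hnR.le (mul_nonneg (S.hc i).le (Real.rpow_nonneg (S.t_pos i).le _)))]
      rw [Finset.sum_filter]
    rw [h1]
    apply ENNReal.ofReal_le_ofReal
    have hterm : ∀ k, (1 - alpha) * (S.c k * S.t k ^ (-alpha)) ≤
        S.t k ^ (1 - alpha) - S.t (k+1) ^ (1 - alpha) := by
      intro k
      have htan := rpow_tangent_hi (S.t_pos (k+1)) (S.t_succ_lt k).le hbeta (by linarith)
      have hab : S.t k - S.t (k+1) = S.c k := by have := S.t_eq k; linarith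
      have hexp : (1 - alpha) - 1 = -alpha := by ring
      rw [hab, hexp] at htan
      exact htan
    have hgaps : ∑ k ∈ s', (S.t k ^ (1-alpha) - S.t (k+1) ^ (1-alpha)) ≤ S.t K' ^ (1-alpha) := by
      apply sum_gaps_le
      · intro i j hij
        exact Real.rpow_le_rpow (S.t_pos j).le (S.t_anti hij) hbeta.le
      · intro k; exact Real.rpow_nonneg (S.t_pos k).le _
      · intro k hk
        rw [hs'] at hk
        exact (Finset.mem_filter.1 hk).2
    have hKb : S.t K' ^ (1 - alpha) ≤ (n:ℝ) ^ (alpha - 1) := by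
      calc S.t K' ^ (1-alpha) ≤ (1/(n:ℝ)) ^ (1-alpha) :=
            Real.rpow_le_rpow (S.t_pos K').le hK'.le hbeta.le
        _ = (n:ℝ) ^ (alpha - 1) := by
            rw [one_div, Real.inv_rpow hnR.le, ← Real.rpow_neg hnR.le]
            congr 1; ring
    calc ∑ k ∈ s', (n:ℝ) * (S.c k * S.t k ^ (-alpha))
        = (n / (1 - alpha)) * ∑ k ∈ s', (1 - alpha) * (S.c k * S.t k ^ (-alpha)) := by
          rw [Finset.mul_sum]
          refine Finset.sum_congr rfl fun k _ => ?_
          field_simp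
      _ ≤ (n / (1 - alpha)) * ∑ k ∈ s', (S.t k ^ (1-alpha) - S.t (k+1) ^ (1-alpha)) := by
          apply mul_le_mul_of_nonneg_left _ (div_nonneg hnR.le hbeta.le)
          exact Finset.sum_le_sum (fun k _ => hterm k)
      _ ≤ (n / (1 - alpha)) * S.t K' ^ (1-alpha) := by
          apply mul_le_mul_of_nonneg_left hgaps (div_nonneg hnR.le hbeta.le)
      _ ≤ (n / (1 - alpha)) * (n:ℝ) ^ (alpha - 1) := by
          apply mul_le_mul_of_nonneg_left hKb (div_nonneg hnR.le hbeta.le)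
      _ = (n:ℝ) ^ alpha / (1 - alpha) := by
          rw [div_mul_eq_mul_div]
          congr 1
          calc (n:ℝ) * (n:ℝ) ^ (alpha - 1) = (n:ℝ) ^ (1:ℝ) * (n:ℝ) ^ (alpha - 1) := by
                rw [Real.rpow_one]
            _ = (n:ℝ) ^ alpha := by
                rw [← Real.rpow_add hnR]; congr 1; ring
  have hfinal : ENNReal.ofReal ((n:ℝ) ^ alpha) + ENNReal.ofReal ((n:ℝ) ^ alpha / (1-alpha)) ≤
      ENNReal.ofReal (2 * (n:ℝ) ^ alpha / (1 - alpha)) := by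
    rw [← ENNReal.ofReal_add (by positivity) (by positivity)]
    apply ENNReal.ofReal_le_ofReal
    have hna : (0:ℝ) ≤ (n:ℝ) ^ alpha := by positivity
    have h2 : (n:ℝ) ^ alpha ≤ (n:ℝ) ^ alpha / (1 - alpha) := by
      rw [le_div_iff₀ hbeta]; nlinarith
    have h3 : 2 * (n:ℝ) ^ alpha / (1 - alpha)
        = (n:ℝ) ^ alpha / (1 - alpha) + (n:ℝ) ^ alpha / (1 - alpha) := by ring
    rw [h3]
    exact add_le_add h2 le_rfl
  calc S.T alpha n ≤ ∑' k, (g1 k + g2 k) := step1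
    _ = ∑' k, g1 k + ∑' k, g2 k := ENNReal.tsum_add
    _ ≤ ENNReal.ofReal ((n:ℝ) ^ alpha) + ENNReal.ofReal ((n:ℝ) ^ alpha / (1-alpha)) :=
        add_le_add step2 step3
    _ ≤ ENNReal.ofReal (2 * (n:ℝ) ^ alpha / (1 - alpha)) := hfinal

lemma not_summable_ratio : ¬ Summable (fun k => S.c k / S.t k) := by
  intro hS
  have hnn : ∀ k, 0 ≤ S.c k / S.t k := fun k => div_nonneg (S.hc k).le (S.t_pos k).le
  have hten : Tendsto (fun k => S.c k / S.t k) atTop (nhds 0) := hS.tendsto_atTop_zero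
  obtain ⟨K, hK⟩ := (hten.eventually_lt_const (by norm_num : (0:ℝ) < 1/2)).exists_forall_of_atTop
  have hhalf : ∀ k, K ≤ k → S.t k ≤ 2 * S.t (k+1) := by
    intro k hk
    have h1 := hK k hk
    have h2 := S.t_pos k
    have h3 := S.t_eq k
    have : S.c k ≤ S.t k / 2 := by
      rw [div_lt_iff₀ h2] at h1
      linarith
    linarith
  have hlog : ∀ k, K ≤ k → Real.log (S.t k) - Real.log (S.t (k+1)) ≤ 2 * (S.c k / S.t k) := by
    intro k hk
    have h2 := S.t_pos k
    have h2' := S.t_pos (k+1)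
    have h3 := S.t_eq k
    rw [← Real.log_div h2.ne' h2'.ne']
    have h4 := Real.log_le_sub_one_of_pos (x := S.t k / S.t (k+1)) (by positivity)
    have h5 : S.t k / S.t (k+1) - 1 = S.c k / S.t (k+1) := by
      field_simp
      linarith
    have h6 : S.c k / S.t (k+1) ≤ 2 * (S.c k / S.t k) := by
      have hck := (S.hc k).le
      have hh := hhalf k hk
      rw [div_le_iff₀ h2', mul_comm]
      calc S.c k ≤ (S.c k / S.t k) * (2 * S.t (k+1)) * (S.t k / S.t k)⁻¹ := by
            rw [div_self h2.ne']
            rw [inv_one, mul_one, div_mul_eq_mul_div]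
            rw [le_div_iff₀ h2]
            nlinarith [hh, hck, h2.le]
        _ = S.t (k+1) * (2 * (S.c k / S.t k)) := by
            rw [div_self h2.ne', inv_one, mul_one]
            ring
    linarith
  set B := ∑' k, S.c k / S.t k with hB
  have hbound : ∀ Nb, K ≤ Nb → Real.log (S.t K) - 2 * B ≤ Real.log (S.t Nb) := by
    intro Nb hNb
    have htel : ∑ k ∈ Finset.Ico K Nb, (Real.log (S.t k) - Real.log (S.t (k+1)))
        = Real.log (S.t K) - Real.log (S.t Nb) := telescope_Ico hNb
    have hcomp : ∑ k ∈ Finset.Ico K Nb, (Real.log (S.t k) - Real.log (S.t (k+1)))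
        ≤ ∑ k ∈ Finset.Ico K Nb, 2 * (S.c k / S.t k) := by
      apply Finset.sum_le_sum
      intro i hi
      exact hlog i (Finset.mem_Ico.1 hi).1
    have hsum2 : ∑ k ∈ Finset.Ico K Nb, 2 * (S.c k / S.t k) ≤ 2 * B := by
      rw [← Finset.mul_sum]
      apply mul_le_mul_of_nonneg_left _ (by norm_num : (0:ℝ) ≤ 2)
      exact Summable.sum_le_tsum _ (fun i _ => hnn i) hS
    linarith [htel, hcomp, hsum2]
  have hbot : Tendsto (fun k => Real.log (S.t k)) atTop atBot := by
    have h1 : Tendsto S.t atTop (nhdsWithin 0 (Set.Ioi 0)) := by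
      apply tendsto_nhdsWithin_of_tendsto_nhds_of_eventually_within _ S.t_tendsto
      exact Filter.Eventually.of_forall (fun k => S.t_pos k)
    exact Real.tendsto_log_nhdsGT_zero.comp h1
  have hev := (hbot.eventually_lt_atBot (Real.log (S.t K) - 2 * B)).exists_forall_of_atTop
  obtain ⟨Nb0, hNb0⟩ := hev
  have hcontr := hNb0 (max Nb0 K) (le_max_left _ _)
  have := hbound (max Nb0 K) (le_max_right _ _)
  linarith

lemma T_top (n : ℕ) (hn : 1 ≤ n) {alpha : ℝ} (ha1 : 1 ≤ alpha) : S.T alpha n = ⊤ := by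
  have hc0 := S.hc 0
  have hc01 := S.c0_lt_one
  set gam := S.c 0 ^ (n-1) * (S.c 0 ^ alpha / 2) with hgam
  have hgam0 : 0 < gam := by
    apply mul_pos (pow_pos hc0 _)
    have := Real.rpow_pos_of_pos hc0 alpha
    linarith
  have hlow : ∀ k, 1 ≤ k →
      ENNReal.ofReal (gam * (S.c k / S.t k)) ≤ S.W n k * S.EE alpha k := by
    intro k hk
    have htk := S.t_pos k
    have hW : ENNReal.ofReal (S.c 0 ^ (n-1) * S.c k) ≤ S.W n k := by
      apply ENNReal.ofReal_le_ofReal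
      have h1 := S.w_ge n k hn
      have hQ : S.c 0 ≤ S.Q k := by
        have := S.Q_mono hk
        have hQ1 : S.Q 1 = S.c 0 := by unfold Q; rw [S.t_one]; ring
        linarith
      have h2 : S.c 0 ^ (n-1) ≤ S.Q k ^ (n-1) := pow_le_pow_left₀ hc0.le hQ _
      have h3 : (1:ℝ) * (S.c 0 ^ (n-1) * S.c k) ≤ (n:ℝ) * (S.Q k ^ (n-1) * S.c k) := by
        apply mul_le_mul (by exact_mod_cast hn)
          (mul_le_mul_of_nonneg_right h2 (S.hc k).le)
          (mul_nonneg (pow_nonneg hc0.le _) (S.hc k).le) (by positivity)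
      calc S.c 0 ^ (n-1) * S.c k = 1 * (S.c 0 ^ (n-1) * S.c k) := by ring
        _ ≤ (n:ℝ) * (S.Q k ^ (n-1) * S.c k) := h3
        _ = (n:ℝ) * S.Q k ^ (n-1) * S.c k := by ring
        _ ≤ S.w n k := h1
    have hEE : ENNReal.ofReal (S.c 0 ^ alpha * (S.t k)⁻¹ / 2) ≤ S.EE alpha k := by
      refine le_trans ?_ (S.EE_ge alpha k hk)
      have step : S.c 0 ^ alpha * (S.t k)⁻¹ ≤ ((S.t k)⁻¹ - 1) ^ alpha := by
        have h1 : S.c 0 / S.t k ≤ (S.t k)⁻¹ - 1 := by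
          have h2 := S.one_sub_t_ge hk
          rw [div_le_iff₀ htk]
          have : ((S.t k)⁻¹ - 1) * S.t k = 1 - S.t k := by
            field_simp
          rw [this]
          exact h2
        calc S.c 0 ^ alpha * (S.t k)⁻¹ ≤ (S.c 0 / S.t k) ^ alpha := by
              rw [Real.div_rpow hc0.le htk.le, div_eq_mul_inv]
              apply mul_le_mul_of_nonneg_left _ (Real.rpow_nonneg hc0.le _)
              have hinv1 : (1:ℝ) ≤ (S.t k)⁻¹ := one_le_inv_iff₀.2 ⟨htk, S.t_le_one k⟩
              have h5 := Real.rpow_le_rpow_of_exponent_le hinv1 ha1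
              rw [Real.rpow_one] at h5
              rw [← Real.inv_rpow htk.le]
              exact h5
          _ ≤ ((S.t k)⁻¹ - 1) ^ alpha := by
              apply Real.rpow_le_rpow (by positivity) h1 (by linarith)
      calc ENNReal.ofReal (S.c 0 ^ alpha * (S.t k)⁻¹ / 2)
          = ENNReal.ofReal (S.c 0 ^ alpha * (S.t k)⁻¹) * ENNReal.ofReal (1/2) := by
            rw [← ENNReal.ofReal_mul
              (mul_nonneg (Real.rpow_nonneg hc0.le _) (inv_nonneg.2 htk.le))]
            rw [mul_one_div]
        _ ≤ ENNReal.ofReal (((S.t k)⁻¹ - 1) ^ alpha) * ENNReal.ofReal (1/2) := by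
            apply mul_le_mul_left
            exact ENNReal.ofReal_le_ofReal step
        _ = ENNReal.ofReal (((S.t k)⁻¹ - 1) ^ alpha) * 2⁻¹ := by
            congr 1
            rw [one_div, ENNReal.ofReal_inv_of_pos two_pos]
            norm_num
    calc ENNReal.ofReal (gam * (S.c k / S.t k))
        = ENNReal.ofReal ((S.c 0 ^ (n-1) * S.c k) * (S.c 0 ^ alpha * (S.t k)⁻¹ / 2)) := by
          congr 1
          rw [hgam]
          field_simp
      _ = ENNReal.ofReal (S.c 0 ^ (n-1) * S.c k) *
          ENNReal.ofReal (S.c 0 ^ alpha * (S.t k)⁻¹ / 2) := by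
          apply ENNReal.ofReal_mul
          exact mul_nonneg (pow_nonneg hc0.le _) (S.hc k).le
      _ ≤ S.W n k * S.EE alpha k := mul_le_mul' hW hEE
  have htop : ∑' k, (if 1 ≤ k then ENNReal.ofReal (gam * (S.c k / S.t k)) else 0) = ⊤ := by
    by_contra hne
    have hsummable := ENNReal.summable_toReal hne
    have heq : ∀ k, ((if 1 ≤ k then ENNReal.ofReal (gam * (S.c k / S.t k)) else 0).toReal)
        = (if 1 ≤ k then gam * (S.c k / S.t k) else 0) := by
      intro k
      split
      · exact ENNReal.toReal_ofReal (mul_nonneg hgam0.le (div_nonneg (S.hc k).le (S.t_pos k).le))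
      · simp
    rw [show (fun k => ((if 1 ≤ k then ENNReal.ofReal (gam * (S.c k / S.t k)) else 0).toReal)) = _ from funext heq] at hsummable
    have h1 : Summable (fun k => gam * (S.c (k+1) / S.t (k+1))) := by
      have := (summable_nat_add_iff 1).2 hsummable
      exact this.congr (fun k => by rw [if_pos (by omega)])
    have h2 : Summable (fun k => S.c (k+1) / S.t (k+1)) := by
      have := h1.div_const gam
      exact this.congr (fun k => mul_div_cancel_left₀ _ hgam0.ne')
    exact S.not_summable_ratio ((summable_nat_add_iff 1).1 h2)
  rw [S.T_eq n hn alpha]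
  rw [eq_top_iff]
  rw [← htop]
  apply ENNReal.tsum_le_tsum
  intro k
  split
  · exact hlow k (by assumption)
  · exact zero_le

set_option maxHeartbeats 1000000 in
lemma lower_master (lam : ℝ) (hlam : 0 < lam) (hA : ∀ k, S.c k ≤ lam * S.t (k+1))
    (n : ℕ) (hn : 1 ≤ n) {alpha : ℝ} (ha : 0 < alpha) (ha1 : alpha < 1) :
    ENNReal.ofReal ((S.c 0 * (min (S.t 1) (1/(2*(1+lam)))) / (4*(1+lam)))
      * (n:ℝ) ^ alpha / (1-alpha)) ≤ S.T alpha n := by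
  have hc0 := S.hc 0
  have hc01 := S.c0_lt_one
  have hnR : (0:ℝ) < n := by exact_mod_cast hn
  have hn1R : (1:ℝ) ≤ (n:ℝ) := by exact_mod_cast hn
  have hbeta : (0:ℝ) < 1 - alpha := by linarith
  have hlam1 : (0:ℝ) < 1 + lam := by linarith
  set b0 := min (S.t 1) (1/(2*(1+lam))) with hb0def
  have hb0pos : 0 < b0 := lt_min (S.t_pos 1) (by positivity)
  have hb0le1 : b0 ≤ 1 := le_trans (min_le_left _ _) (S.t_le_one 1)
  have hb0half : b0 ≤ 1/(2*(1+lam)) := min_le_right _ _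
  set a1 := S.c 0 * b0 / (4*(1+lam)) with ha1def
  -- the t-comparison from condition (A)
  have htquot : ∀ k, S.t k ≤ (1+lam) * S.t (k+1) := by
    intro k
    have h1 := hA k
    have h2 := S.t_eq k
    have h3 := S.t_pos (k+1)
    nlinarith
  -- find the scale K
  have hex : ∃ k, 1 ≤ k ∧ S.t k ≤ 1/(2*n) := by
    have h1 : (0:ℝ) < 1/(2*n) := by positivity
    obtain ⟨k, hk1, hk2⟩ := ((S.t_tendsto.eventually_lt_const h1).and
      (eventually_ge_atTop 1)).exists
    exact ⟨k, hk2, hk1.le⟩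
  set K := Nat.find hex with hKdef
  have hK : 1 ≤ K ∧ S.t K ≤ 1/(2*n) := Nat.find_spec hex
  have hKlow : b0 / n ≤ S.t K := by
    rcases Nat.lt_or_ge K 2 with h2 | h2
    · have hK1 : K = 1 := by omega
      rw [hK1]
      calc b0 / n ≤ b0 / 1 := by
            apply div_le_div_of_nonneg_left hb0pos.le one_pos
            exact_mod_cast hn
        _ = b0 := by norm_num
        _ ≤ S.t 1 := min_le_left _ _
    · have hmin : ¬(1 ≤ K - 1 ∧ S.t (K-1) ≤ 1/(2*n)) := Nat.find_min hex (by omega)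
      have h3 : 1/(2*(n:ℝ)) < S.t (K-1) := by
        by_contra hcon
        exact hmin ⟨by omega, le_of_not_gt hcon⟩
      have h4 : S.t (K-1) ≤ (1+lam) * S.t K := by
        have := htquot (K-1)
        have hKK : K - 1 + 1 = K := by omega
        rwa [hKK] at this
      have h5 : 1/(2*(n:ℝ)*(1+lam)) ≤ S.t K := by
        rw [div_le_iff₀ (by positivity)]
        have h6 : 1/(2*(n:ℝ)) ≤ (1+lam) * S.t K := le_trans h3.le h4
        rw [div_le_iff₀ (by positivity)] at h6
        nlinarith
      calc b0 / n ≤ (1/(2*(1+lam))) / n := by gcongr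
        _ = 1/(2*(n:ℝ)*(1+lam)) := by field_simp
        _ ≤ S.t K := h5
  -- weight lower bound for k ≥ K
  have hWge : ∀ k, K ≤ k → ENNReal.ofReal ((n:ℝ)/2 * S.c k) ≤ S.W n k := by
    intro k hk
    apply ENNReal.ofReal_le_ofReal
    have htk : S.t k ≤ 1/(2*n) := le_trans (S.t_anti hk) hK.2
    have hhalf : (1:ℝ)/2 ≤ S.Q k ^ (n-1) := by
      have hq : 1 - 1/(2*(n:ℝ)) ≤ S.Q k := by unfold Q; linarith
      have h8 : 1/(2*(n:ℝ)) ≤ 1/2 := by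
        rw [div_le_div_iff₀ (by positivity) two_pos]
        nlinarith
      have hq0 : (0:ℝ) ≤ 1 - 1/(2*(n:ℝ)) := by linarith
      have hbern := one_add_mul_le_pow (a := -(1/(2*(n:ℝ)))) (by nlinarith) (n-1)
      have hbl : (1:ℝ)/2 ≤ 1 + (↑(n-1)) * (-(1/(2*(n:ℝ)))) := by
        have hcast : ((n-1 : ℕ):ℝ) = (n:ℝ) - 1 := by
          have : (1:ℕ) ≤ n := hn
          push_cast [this]
          ring
        rw [hcast]
        have h9 : ((n:ℝ)-1) * (1/(2*(n:ℝ))) ≤ 1/2 := by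
          rw [mul_one_div, div_le_div_iff₀ (by positivity) two_pos]
          nlinarith
        nlinarith [h9]
      calc (1:ℝ)/2 ≤ 1 + (↑(n-1)) * (-(1/(2*(n:ℝ)))) := hbl
        _ ≤ (1 + -(1/(2*(n:ℝ)))) ^ (n-1) := hbern
        _ = (1 - 1/(2*(n:ℝ))) ^ (n-1) := by ring_nf
        _ ≤ S.Q k ^ (n-1) := pow_le_pow_left₀ hq0 hq _
    calc (n:ℝ)/2 * S.c k = (n:ℝ) * (1/2) * S.c k := by ring
      _ ≤ (n:ℝ) * S.Q k ^ (n-1) * S.c k := by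
          apply mul_le_mul_of_nonneg_right _ (S.hc k).le
          apply mul_le_mul_of_nonneg_left hhalf hnR.le
      _ ≤ S.w n k := S.w_ge n k hn
  -- EE lower bound
  have hEEge : ∀ k, 1 ≤ k →
      ENNReal.ofReal (S.c 0/2 * S.t k ^ (-alpha)) ≤ S.EE alpha k := by
    intro k hk
    have htk := S.t_pos k
    refine le_trans ?_ (S.EE_ge alpha k hk)
    have step : S.c 0 * S.t k ^ (-alpha) ≤ ((S.t k)⁻¹ - 1) ^ alpha := by
      have h1 : S.c 0 / S.t k ≤ (S.t k)⁻¹ - 1 := by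
        have h2 := S.one_sub_t_ge hk
        rw [div_le_iff₀ htk]
        have h7 : ((S.t k)⁻¹ - 1) * S.t k = 1 - S.t k := by field_simp
        rw [h7]
        exact h2
      calc S.c 0 * S.t k ^ (-alpha) ≤ S.c 0 ^ alpha * S.t k ^ (-alpha) := by
            apply mul_le_mul_of_nonneg_right _ (Real.rpow_nonneg htk.le _)
            have := Real.rpow_le_rpow_of_exponent_ge hc0 hc01.le ha1.le
            rwa [Real.rpow_one] at this
        _ = (S.c 0 / S.t k) ^ alpha := by
            rw [Real.div_rpow hc0.le htk.le, Real.rpow_neg htk.le, div_eq_mul_inv]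
        _ ≤ ((S.t k)⁻¹ - 1) ^ alpha := by
            apply Real.rpow_le_rpow (by positivity) h1 ha.le
    calc ENNReal.ofReal (S.c 0/2 * S.t k ^ (-alpha))
        = ENNReal.ofReal (S.c 0 * S.t k ^ (-alpha)) * ENNReal.ofReal (1/2) := by
          rw [← ENNReal.ofReal_mul (mul_nonneg hc0.le (Real.rpow_nonneg htk.le _))]
          congr 1
          ring
      _ ≤ ENNReal.ofReal (((S.t k)⁻¹ - 1) ^ alpha) * ENNReal.ofReal (1/2) :=
          mul_le_mul_left (ENNReal.ofReal_le_ofReal step) _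
      _ = ENNReal.ofReal (((S.t k)⁻¹ - 1) ^ alpha) * 2⁻¹ := by
          congr 1
          rw [one_div, ENNReal.ofReal_inv_of_pos two_pos]
          norm_num
  -- the lower comparison sequence
  set L : ℕ → ℝ≥0∞ := fun k =>
    if K ≤ k then ENNReal.ofReal ((n:ℝ) * S.c 0 / 4 * (S.c k * S.t k ^ (-alpha))) else 0
    with hLdef
  have hTL : ∑' k, L k ≤ S.T alpha n := by
    rw [S.T_eq n hn alpha]
    apply ENNReal.tsum_le_tsum
    intro k
    by_cases h : K ≤ k
    · simp only [hLdef, if_pos h]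
      have hprod : ENNReal.ofReal ((n:ℝ) * S.c 0 / 4 * (S.c k * S.t k ^ (-alpha)))
          = ENNReal.ofReal ((n:ℝ)/2 * S.c k) * ENNReal.ofReal (S.c 0/2 * S.t k ^ (-alpha)) := by
        rw [← ENNReal.ofReal_mul (mul_nonneg (by positivity) (S.hc k).le)]
        congr 1
        ring
      rw [hprod]
      exact mul_le_mul' (hWge k h) (hEEge k (le_trans hK.1 h))
    · simp only [hLdef, if_neg h]
      exact zero_le
  -- partial-sum lower bounds
  set C1 : ℝ := ((n:ℝ) * S.c 0 / 4) / ((1-alpha) * (1+lam)) with hC1def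
  have hC1pos : 0 < C1 := by
    apply div_pos (by positivity)
    exact mul_pos hbeta hlam1
  have hpart : ∀ Nb, K ≤ Nb →
      ENNReal.ofReal (C1 * (S.t K ^ (1-alpha) - S.t Nb ^ (1-alpha))) ≤ ∑' k, L k := by
    intro Nb hNb
    have hsum : ∑ k ∈ Finset.Ico K Nb, L k ≤ ∑' k, L k := ENNReal.sum_le_tsum _
    refine le_trans ?_ hsum
    have hform : ∑ k ∈ Finset.Ico K Nb, L k
        = ENNReal.ofReal (∑ k ∈ Finset.Ico K Nb, (n:ℝ) * S.c 0 / 4 * (S.c k * S.t k ^ (-alpha))) := by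
      rw [ENNReal.ofReal_sum_of_nonneg (fun i _ =>
        mul_nonneg (by positivity) (mul_nonneg (S.hc i).le (Real.rpow_nonneg (S.t_pos i).le _)))]
      refine Finset.sum_congr rfl fun k hk => ?_
      simp only [hLdef, if_pos (Finset.mem_Ico.1 hk).1]
    rw [hform]
    apply ENNReal.ofReal_le_ofReal
    -- per-term tangent bound
    have hterm : ∀ k, (S.t k ^ (1-alpha) - S.t (k+1) ^ (1-alpha)) / ((1-alpha) * (1+lam))
        ≤ S.c k * S.t k ^ (-alpha) := by
      intro k
      have htk := S.t_pos k
      have htk1 := S.t_pos (k+1)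
      have htan := rpow_tangent_lo htk1 (S.t_succ_lt k).le hbeta (by linarith)
      have hab : S.t k - S.t (k+1) = S.c k := by have := S.t_eq k; linarith
      have hexp : (1 - alpha) - 1 = -alpha := by ring
      rw [hab, hexp] at htan
      -- htan : t k ^ (1-α) - t (k+1) ^ (1-α) ≤ (1-α) * (c k * t (k+1) ^ (-α))
      have hcomp : S.t (k+1) ^ (-alpha) ≤ (1+lam) * S.t k ^ (-alpha) := by
        have h1 : S.t k / (1+lam) ≤ S.t (k+1) := by
          rw [div_le_iff₀ hlam1]
          have := htquot k
          nlinarith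
        calc S.t (k+1) ^ (-alpha) = (S.t (k+1) ^ alpha)⁻¹ := Real.rpow_neg htk1.le _
          _ ≤ ((S.t k / (1+lam)) ^ alpha)⁻¹ := by
              apply inv_anti₀ (Real.rpow_pos_of_pos (by positivity) _)
              exact Real.rpow_le_rpow (by positivity) h1 ha.le
          _ = (1+lam) ^ alpha * (S.t k ^ alpha)⁻¹ := by
              rw [Real.div_rpow htk.le hlam1.le, inv_div, div_eq_mul_inv]
          _ ≤ (1+lam) * (S.t k ^ alpha)⁻¹ := by
              apply mul_le_mul_of_nonneg_right _ (by positivity)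
              have := Real.rpow_le_rpow_of_exponent_le (by linarith : (1:ℝ) ≤ 1+lam) ha1.le
              rwa [Real.rpow_one] at this
          _ = (1+lam) * S.t k ^ (-alpha) := by rw [← Real.rpow_neg htk.le]
      have hfin : S.t k ^ (1-alpha) - S.t (k+1) ^ (1-alpha)
          ≤ (1-alpha) * (1+lam) * (S.c k * S.t k ^ (-alpha)) := by
        calc S.t k ^ (1-alpha) - S.t (k+1) ^ (1-alpha)
            ≤ (1-alpha) * (S.c k * S.t (k+1) ^ (-alpha)) := htan
          _ ≤ (1-alpha) * (S.c k * ((1+lam) * S.t k ^ (-alpha))) := by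
              apply mul_le_mul_of_nonneg_left _ hbeta.le
              exact mul_le_mul_of_nonneg_left hcomp (S.hc k).le
          _ = (1-alpha) * (1+lam) * (S.c k * S.t k ^ (-alpha)) := by ring
      rw [div_le_iff₀ (mul_pos hbeta hlam1)]
      linarith [hfin]
    have htel : ∑ k ∈ Finset.Ico K Nb, (S.t k ^ (1-alpha) - S.t (k+1) ^ (1-alpha))
        = S.t K ^ (1-alpha) - S.t Nb ^ (1-alpha) := telescope_Ico hNb
    calc C1 * (S.t K ^ (1-alpha) - S.t Nb ^ (1-alpha))
        = ∑ k ∈ Finset.Ico K Nb, ((n:ℝ) * S.c 0 / 4) *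
            ((S.t k ^ (1-alpha) - S.t (k+1) ^ (1-alpha)) / ((1-alpha) * (1+lam))) := by
          rw [← Finset.mul_sum, ← Finset.sum_div, htel, hC1def]
          field_simp
      _ ≤ ∑ k ∈ Finset.Ico K Nb, (n:ℝ) * S.c 0 / 4 * (S.c k * S.t k ^ (-alpha)) := by
          apply Finset.sum_le_sum
          intro i _
          exact mul_le_mul_of_nonneg_left (hterm i) (by positivity)
  -- pass to the limit
  have hlimit : ENNReal.ofReal (C1 * S.t K ^ (1-alpha)) ≤ ∑' k, L k := by
    have htend0 : Tendsto (fun Nb => S.t Nb ^ (1-alpha)) atTop (nhds 0) := by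
      have hcont : ContinuousAt (fun x : ℝ => x ^ (1-alpha)) 0 :=
        Real.continuousAt_rpow_const 0 (1-alpha) (Or.inr hbeta.le)
      have := hcont.tendsto.comp S.t_tendsto
      simpa [Function.comp_def, Real.zero_rpow hbeta.ne'] using this
    have htendr : Tendsto (fun Nb => ENNReal.ofReal (C1 * (S.t K ^ (1-alpha) - S.t Nb ^ (1-alpha))))
        atTop (nhds (ENNReal.ofReal (C1 * S.t K ^ (1-alpha)))) := by
      apply (ENNReal.continuous_ofReal.tendsto _).comp
      have h1 : Tendsto (fun Nb => S.t K ^ (1-alpha) - S.t Nb ^ (1-alpha)) atTop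
          (nhds (S.t K ^ (1-alpha) - 0)) := tendsto_const_nhds.sub htend0
      have := h1.const_mul C1
      simpa using this
    apply le_of_tendsto htendr
    filter_upwards [eventually_ge_atTop K] with Nb hNb
    exact hpart Nb hNb
  -- conclude
  refine le_trans ?_ (le_trans hlimit hTL)
  apply ENNReal.ofReal_le_ofReal
  have htKb : b0 * (n:ℝ) ^ (alpha - 1) ≤ S.t K ^ (1-alpha) := by
    calc b0 * (n:ℝ) ^ (alpha - 1) ≤ b0 ^ (1-alpha) * (n:ℝ) ^ (alpha-1) := by
          apply mul_le_mul_of_nonneg_right _ (Real.rpow_nonneg hnR.le _)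
          have := Real.rpow_le_rpow_of_exponent_ge hb0pos hb0le1 (by linarith : 1 - alpha ≤ 1)
          rwa [Real.rpow_one] at this
      _ = (b0 / n) ^ (1-alpha) := by
          rw [Real.div_rpow hb0pos.le hnR.le]
          rw [div_eq_mul_inv]
          congr 1
          rw [← Real.rpow_neg hnR.le]
          congr 1
          ring
      _ ≤ S.t K ^ (1-alpha) := Real.rpow_le_rpow (by positivity) hKlow hbeta.le
  calc a1 * (n:ℝ) ^ alpha / (1-alpha)
      = C1 * (b0 * (n:ℝ) ^ (alpha - 1)) := by
        have hnn : (n:ℝ) * (n:ℝ) ^ (alpha - 1) = (n:ℝ) ^ alpha := by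
          calc (n:ℝ) * (n:ℝ) ^ (alpha-1) = (n:ℝ) ^ (1:ℝ) * (n:ℝ) ^ (alpha-1) := by
                rw [Real.rpow_one]
            _ = (n:ℝ) ^ alpha := by rw [← Real.rpow_add hnR]; congr 1; ring
        rw [ha1def, hC1def, ← hnn]
        field_simp
      _ ≤ C1 * S.t K ^ (1-alpha) := mul_le_mul_of_nonneg_left htKb hC1pos.le

end Setup

/-- Proposition 8.3 (rate of escape): with `|x|_σ = 1/σ(n-1) - 1` where `n` is
minimal with `x ∈ G_n` (and `σ(-1) = 1`), the mean `α`-displacement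
`M_X(α,n) = ∑_y |y|_σ^α μ^{*n}(y)` is finite iff `α < 1`, and under Condition
(A) it satisfies `M_X(α,n) ≍ n^α/(1-α)` uniformly in `n ≥ 1`, `0 < α < 1`. -/
theorem stmt_18 {G : Type*} [Group G]
    (H : ℕ → Subgroup G) (hfin : ∀ k, (H k : Set G).Finite)
    (hlt : ∀ k, H k < H (k + 1)) (hunion : ∀ x : G, ∃ k, x ∈ H k)
    (c : ℕ → ℝ) (hc : ∀ k, 0 < c k) (hcsum : ∑' k : ℕ, c k = 1)
    (m : ℕ → G → ℝ)
    (hm : ∀ (k : ℕ) (x : G),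
      m k x = if x ∈ H k then ((Nat.card (H k) : ℝ))⁻¹ else 0)
    (μ : G → ℝ) (hμ : ∀ x : G, μ x = ∑' k : ℕ, c k * m k x)
    (σ : ℕ → ℝ) (hσ : ∀ k, σ k = ∑' i : ℕ, c (k + 1 + i))
    (absσ : G → ℝ)
    (habs : ∀ (x : G) (n : ℕ), x ∈ H n → (∀ j < n, x ∉ H j) →
      absσ x = if n = 0 then 0 else (σ (n - 1))⁻¹ - 1) :
    (∀ n : ℕ, 1 ≤ n → ∀ α : ℝ, 0 < α →
      (Summable (fun y : G => absσ y ^ α * gconvPow μ n y) ↔ α < 1)) ∧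
    ((∃ lam > (0 : ℝ), ∀ k, c k ≤ lam * σ k) →
      ∃ a₁ > (0 : ℝ), ∃ a₂ > (0 : ℝ), ∀ n : ℕ, 1 ≤ n → ∀ α : ℝ, 0 < α → α < 1 →
        a₁ * (n : ℝ) ^ α / (1 - α) ≤ ∑' y : G, absσ y ^ α * gconvPow μ n y ∧
        ∑' y : G, absσ y ^ α * gconvPow μ n y ≤ a₂ * (n : ℝ) ^ α / (1 - α)) := by
  classical
  let S : Setup G := ⟨H, hfin, hlt, hunion, c, hc, hcsum, m, hm, μ, hμ, σ, hσ, absσ, habs⟩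
  constructor
  · intro n hn α hα
    have hiff : Summable (fun y : G => absσ y ^ α * gconvPow μ n y) ↔ S.T α n ≠ ⊤ :=
      S.summable_iff n α
    rw [hiff]
    constructor
    · intro hT
      by_contra hcon
      push_neg at hcon
      exact hT (S.T_top n hn hcon)
    · intro hα1
      exact ne_top_of_le_ne_top ENNReal.ofReal_ne_top (S.upper_master n hn hα hα1)
  · rintro ⟨lam, hlam, hcond⟩
    have hA : ∀ k, S.c k ≤ lam * S.t (k+1) := by
      intro k
      rw [S.t_succ]
      exact hcond k
    have hb0pos : 0 < min (S.t 1) (1/(2*(1+lam))) :=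
      lt_min (S.t_pos 1) (by positivity)
    refine ⟨S.c 0 * (min (S.t 1) (1/(2*(1+lam)))) / (4*(1+lam)), ?_, 2, two_pos, ?_⟩
    · apply div_pos (mul_pos (S.hc 0) hb0pos) (by linarith)
    · intro n hn α hα hα1
      have hub := S.upper_master n hn hα hα1
      have hTne : S.T α n ≠ ⊤ := ne_top_of_le_ne_top ENNReal.ofReal_ne_top hub
      have hval : ∑' y : G, absσ y ^ α * gconvPow μ n y = (S.T α n).toReal :=
        S.tsum_eq_toReal n α
      constructor
      · rw [hval]
        have hlb := S.lower_master lam hlam hA n hn hα hα1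
        exact (ENNReal.ofReal_le_iff_le_toReal hTne).1 hlb
      · rw [hval]
        calc (S.T α n).toReal ≤ (ENNReal.ofReal (2 * (n:ℝ) ^ α / (1 - α))).toReal :=
              ENNReal.toReal_mono ENNReal.ofReal_ne_top hub
          _ = 2 * (n:ℝ) ^ α / (1 - α) :=
              ENNReal.toReal_ofReal (div_nonneg (by positivity) (by linarith))
end

section
/- For every t > 0 and every z ∈ G, if z ∈ G_k \ G_{k−1} (with the convention G_{−1} := ∅), then μ_t(z) = t · ∫₀^{σ(k−1)} N(λ) (1−λ)^{t−1} dλ. Equivalently, writing ρ := |z|_σ, the heat kernel h(t; x, y) := μ_t(x⁻¹y) satisfies h(t; x, y) = t · ∫₀^{1/(1+ρ(x,y))} N(λ)(1−λ)^{t−1} dλ. -/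
open MeasureTheory intervalIntegral
open scoped BigOperators Classical

/-- Proposition 8.5 (exact heat kernel formula): for `t > 0` and
`z ∈ G_k \ G_{k-1}` (with `G_{-1} = ∅`, `σ(-1) = 1`),
`μ_t(z) = t ∫₀^{σ(k-1)} N(λ)(1-λ)^{t-1} dλ`. -/
theorem stmt_19 {G : Type*} [Group G]
    (H : ℕ → Subgroup G) (hfin : ∀ k, (H k : Set G).Finite)
    (hlt : ∀ k, H k < H (k + 1)) (hunion : ∀ x : G, ∃ k, x ∈ H k)
    (c : ℕ → ℝ) (hc : ∀ k, 0 < c k) (hcsum : ∑' k : ℕ, c k = 1)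
    (m : ℕ → G → ℝ)
    (hm : ∀ (k : ℕ) (x : G),
      m k x = if x ∈ H k then ((Nat.card (H k) : ℝ))⁻¹ else 0)
    (σ : ℕ → ℝ) (hσ : ∀ k, σ k = ∑' i : ℕ, c (k + 1 + i))
    (S : ℕ → ℝ) (hS : ∀ k, S k = ∑ i ∈ Finset.range (k + 1), c i)
    (C : ℝ → ℕ → ℝ) (hC0 : ∀ t : ℝ, C t 0 = c 0 ^ t)
    (hCk : ∀ (t : ℝ) (k : ℕ), C t (k + 1) = S (k + 1) ^ t - S k ^ t)
    (μt : ℝ → G → ℝ) (hμt : ∀ (t : ℝ) (x : G), μt t x = ∑' k : ℕ, C t k * m k x)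
    (N : ℝ → ℝ)
    (hN1 : ∀ (k : ℕ) (u : ℝ), σ (k + 1) ≤ u → u < σ k →
      N u = ((Nat.card (H (k + 1)) : ℝ))⁻¹)
    (hN2 : ∀ u : ℝ, σ 0 ≤ u → N u = ((Nat.card (H 0) : ℝ))⁻¹) :
    ∀ t : ℝ, 0 < t → ∀ (k : ℕ) (z : G), z ∈ H k → (k = 0 ∨ z ∉ H (k - 1)) →
      μt t z = t * ∫ l in (0 : ℝ)..(if k = 0 then 1 else σ (k - 1)),
        N l * (1 - l) ^ (t - 1) := by
  intro t ht k z hzk hzk'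
  set D : ℕ → ℝ := fun j => ((Nat.card (H j) : ℝ))⁻¹ with hD
  -- basic summability facts
  have hsc : Summable c := by
    by_contra h
    rw [tsum_eq_zero_of_not_summable h] at hcsum
    norm_num at hcsum
  have hSsucc : ∀ j, S (j + 1) = S j + c (j + 1) := by
    intro j; rw [hS, hS, Finset.sum_range_succ]
  have hS1 : ∀ j, S j ≤ 1 := by
    intro j; rw [hS, ← hcsum]
    exact Summable.sum_le_tsum _ (fun i _ => (hc i).le) hsc
  have hS0 : ∀ j, 0 < S j := by
    intro j; rw [hS]
    exact Finset.sum_pos (fun i _ => hc i) (Finset.nonempty_range_iff.2 (Nat.succ_ne_zero j))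
  have hσS : ∀ j, σ j = 1 - S j := by
    intro j
    have h2 := Summable.sum_add_tsum_nat_add (f := c) (j + 1) hsc
    rw [hcsum] at h2
    have h3 : σ j = ∑' i, c (i + (j + 1)) := by
      rw [hσ]; exact tsum_congr fun i => by rw [add_comm i (j + 1)]
    rw [h3, hS]; linarith
  have hσdec : ∀ j, σ (j + 1) < σ j := by
    intro j; rw [hσS, hσS, hSsucc]; linarith [hc (j + 1)]
  have hσpos : ∀ j, 0 < σ j := by
    intro j
    have h1 := hS1 (j + 1); have h2 := hSsucc j; have h3 := hc (j + 1)
    rw [hσS]; linarith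
  have hσlt1 : ∀ j, σ j < 1 := fun j => by rw [hσS]; linarith [hS0 j]
  have hσle1 : ∀ j, σ j ≤ 1 := fun j => (hσlt1 j).le
  have hσmem : ∀ j, σ j ∈ Set.Icc (0 : ℝ) 1 := fun j => ⟨(hσpos j).le, hσle1 j⟩
  have hStend : Filter.Tendsto S Filter.atTop (nhds 1) := by
    have h1 : Filter.Tendsto (fun n => ∑ i ∈ Finset.range n, c i) Filter.atTop (nhds 1) := by
      have h := hsc.hasSum.tendsto_sum_nat
      rwa [hcsum] at h
    have h2 := h1.comp (Filter.tendsto_add_atTop_nat 1)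
    convert h2 using 1
    funext j; rw [hS]; rfl
  have hσtend : Filter.Tendsto σ Filter.atTop (nhds 0) := by
    have h := Filter.Tendsto.const_sub 1 hStend
    simp only [sub_self] at h
    convert h using 1
    funext j; exact hσS j
  have hex : ∀ u : ℝ, ∃ n, σ n ≤ u ∨ u ≤ 0 := by
    intro u
    rcases le_or_gt u 0 with h | h
    · exact ⟨0, Or.inr h⟩
    · obtain ⟨n, hn⟩ := (hσtend.eventually_lt_const h).exists
      exact ⟨n, Or.inl hn.le⟩
  set g : ℝ → ℝ := fun u => D (Nat.find (hex u)) with hgdef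
  have hgmeas : Measurable g :=
    Measurable.find (f := fun n (_ : ℝ) => D n) (p := fun n u => σ n ≤ u ∨ u ≤ 0)
      (fun _ => measurable_const)
      (fun _ => MeasurableSet.union measurableSet_Ici measurableSet_Iic) hex
  have hD01 : ∀ j, D j ∈ Set.Icc (0 : ℝ) 1 := by
    intro j
    constructor
    · rw [hD]; positivity
    · rcases Nat.eq_zero_or_pos (Nat.card (H j)) with h | h
      · simp [hD, h]
      · rw [hD]
        have h1 : (1 : ℝ) ≤ (Nat.card (H j) : ℝ) := by exact_mod_cast h
        exact inv_le_one_of_one_le₀ h1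
  have hg01 : ∀ u, g u ∈ Set.Icc (0 : ℝ) 1 := fun u => hD01 _
  have hNg : ∀ u : ℝ, 0 < u → N u = g u := by
    intro u hu
    have hspec := Nat.find_spec (hex u)
    rcases hn : Nat.find (hex u) with _ | mm
    · rw [hn] at hspec
      have hσu : σ 0 ≤ u := hspec.resolve_right (not_le.2 hu)
      rw [hN2 u hσu, hgdef]; simp only [hn]; rfl
    · have hmin := Nat.find_min (hex u) (show mm < Nat.find (hex u) by omega)
      push_neg at hmin
      rw [hn] at hspec
      have hσu : σ (mm + 1) ≤ u := hspec.resolve_right (not_le.2 hu)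
      rw [hN1 mm u hσu hmin.1, hgdef]; simp only [hn]; rfl
  -- the basic rpow integral
  have hbase : ∀ a b : ℝ, ∫ l in a..b, (1 - l) ^ (t - 1) = ((1 - a) ^ t - (1 - b) ^ t) / t := by
    intro a b
    have h1 := integral_comp_sub_left (a := a) (b := b) (fun x : ℝ => x ^ (t - 1)) 1
    rw [h1, integral_rpow (Or.inl (by linarith)), sub_add_cancel]
  have hbndInt : ∀ a b : ℝ, IntervalIntegrable (fun l : ℝ => (1 - l) ^ (t - 1)) volume a b := by
    intro a b
    have h := (intervalIntegrable_rpow' (a := 1 - a) (b := 1 - b)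
      (show (-1 : ℝ) < t - 1 by linarith)).comp_sub_left 1
    simpa using h
  have hfmInt : IntegrableOn (fun l : ℝ => g l * (1 - l) ^ (t - 1)) (Set.Ioc 0 1) volume := by
    have hb : IntegrableOn (fun l : ℝ => (1 - l) ^ (t - 1)) (Set.Ioc 0 1) volume :=
      (intervalIntegrable_iff_integrableOn_Ioc_of_le zero_le_one).1 (hbndInt 0 1)
    refine Integrable.mono hb ?_ ?_
    · exact ((hgmeas.mul ((measurable_const.sub measurable_id).pow
        measurable_const)).aestronglyMeasurable)
    · rw [ae_restrict_iff' measurableSet_Ioc]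
      refine Filter.Eventually.of_forall fun l hl => ?_
      have h1 : 0 ≤ (1 - l) ^ (t - 1) := Real.rpow_nonneg (by linarith [hl.2]) _
      rw [Real.norm_eq_abs, Real.norm_eq_abs, abs_mul, abs_of_nonneg (hg01 l).1,
        abs_of_nonneg h1]
      exact mul_le_of_le_one_left h1 (hg01 l).2
  have hfInt01 : IntervalIntegrable (fun l : ℝ => N l * (1 - l) ^ (t - 1)) volume 0 1 := by
    rw [intervalIntegrable_iff_integrableOn_Ioc_of_le zero_le_one]
    exact hfmInt.congr_fun (fun l hl => by rw [hNg l hl.1]) measurableSet_Ioc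
  have hfIntab : ∀ a b : ℝ, a ∈ Set.Icc (0 : ℝ) 1 → b ∈ Set.Icc (0 : ℝ) 1 →
      IntervalIntegrable (fun l : ℝ => N l * (1 - l) ^ (t - 1)) volume a b := by
    intro a b ha hb
    refine hfInt01.mono_set (Set.uIcc_subset_uIcc ?_ ?_) <;>
      rw [Set.uIcc_of_le zero_le_one]
    exacts [ha, hb]
  -- piecewise value of the integral
  have hpiece : ∀ a b d : ℝ, 0 < a → a ≤ b → (∀ u, a ≤ u → u < b → N u = d) →
      ∫ l in a..b, N l * (1 - l) ^ (t - 1) = d * (((1 - a) ^ t - (1 - b) ^ t) / t) := by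
    intro a b d ha hab hNc
    have hb0 : ∀ᵐ l : ℝ ∂volume, l ≠ b := by
      have hset : {l : ℝ | ¬l ≠ b} = {b} := by ext; simp
      rw [ae_iff, hset]; exact measure_singleton b
    have hcg : (∫ l in a..b, N l * (1 - l) ^ (t - 1))
        = ∫ l in a..b, d * (1 - l) ^ (t - 1) := by
      apply intervalIntegral.integral_congr_ae
      filter_upwards [hb0] with l hlb hl
      rw [Set.uIoc_of_le hab] at hl
      rw [hNc l hl.1.le (lt_of_le_of_ne hl.2 hlb)]
    rw [hcg, intervalIntegral.integral_const_mul, hbase]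
  have hC_formula : ∀ j : ℕ,
      t * ∫ l in σ j..(if j = 0 then 1 else σ (j - 1)), N l * (1 - l) ^ (t - 1)
        = C t j * D j := by
    intro j
    rcases j with _ | j'
    · have hup0 : (if (0 : ℕ) = 0 then (1 : ℝ) else σ (0 - 1)) = 1 := by simp
      rw [hup0, hpiece (σ 0) 1 (D 0) (hσpos 0) (hσle1 0) (fun u hu _ => hN2 u hu)]
      have h1 : 1 - σ 0 = S 0 := by rw [hσS]; ring
      have h2 : (1 - (1 : ℝ)) = 0 := by ring
      have hS0c : S 0 = c 0 := by rw [hS]; simp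
      rw [h1, h2, Real.zero_rpow (ne_of_gt ht), hC0, hS0c]
      field_simp
      ring
    · simp only [Nat.succ_ne_zero, if_false, Nat.succ_sub_one]
      rw [hpiece _ _ (D (j' + 1)) (hσpos _) (hσdec j').le (fun u h1 h2 => hN1 j' u h1 h2)]
      rw [show 1 - σ (j' + 1) = S (j' + 1) by rw [hσS]; ring,
        show 1 - σ j' = S j' by rw [hσS]; ring, hCk]
      field_simp
  -- nonnegativity and summability of the coefficients
  have hCnn : ∀ j, 0 ≤ C t j := by
    intro j
    rcases j with _ | j'
    · rw [hC0]; exact Real.rpow_nonneg (hc 0).le t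
    · rw [hCk]
      have h1 : S j' ≤ S (j' + 1) := by rw [hSsucc]; linarith [hc (j' + 1)]
      have := Real.rpow_le_rpow (hS0 j').le h1 ht.le
      linarith
  have hsum_range : ∀ n, ∑ j ∈ Finset.range (n + 1), C t j = S n ^ t := by
    intro n
    induction n with
    | zero => rw [Finset.sum_range_one, hC0]; rw [hS]; simp [Finset.sum_range_one]
    | succ n ih => rw [Finset.sum_range_succ, ih, hCk]; ring
  have hCsummable : Summable (C t) := by
    refine summable_of_sum_range_le (c := 1) hCnn fun n => ?_
    rcases n with _ | n'
    · simp
    · rw [hsum_range]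
      exact Real.rpow_le_one (hS0 n').le (hS1 n') ht.le
  -- membership facts
  have hmono : Monotone H := (strictMono_nat_of_lt_succ hlt).monotone
  have hzin : ∀ j, k ≤ j → z ∈ H j := fun j hj => hmono hj hzk
  have hznot : ∀ j, j < k → z ∉ H j := by
    intro j hj hmem
    rcases hzk' with h0 | hnot
    · omega
    · exact hnot (hmono (by omega : j ≤ k - 1) hmem)
  set F : ℕ → ℝ := fun j => if k ≤ j then C t j * D j else 0 with hF
  have hFm : ∀ j, C t j * m j z = F j := by
    intro j
    rw [hm]
    by_cases hkj : k ≤ j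
    · simp only [hF, hD, if_pos (hzin j hkj), if_pos hkj]
    · simp only [hF, if_neg (hznot j (not_le.1 hkj)), if_neg hkj, mul_zero]
  have hFsummable : Summable F := by
    refine Summable.of_nonneg_of_le (fun j => ?_) (fun j => ?_) hCsummable <;>
      simp only [hF]
    · split
      · exact mul_nonneg (hCnn j) (hD01 j).1
      · exact le_rfl
    · split
      · exact mul_le_of_le_one_right (hCnn j) (hD01 j).2
      · exact hCnn j
  have hμ2 : μt t z = ∑' j : ℕ, C t (j + k) * D (j + k) := by
    rw [hμt]
    have h1 : (∑' j : ℕ, C t j * m j z) = ∑' j : ℕ, F j := tsum_congr hFm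
    have hshift := Summable.sum_add_tsum_nat_add (f := F) k hFsummable
    have hzero : ∑ i ∈ Finset.range k, F i = 0 :=
      Finset.sum_eq_zero fun i hi => by
        simp only [hF]; exact if_neg (by simp only [Finset.mem_range] at hi; omega)
    rw [h1, ← hshift, hzero, zero_add]
    exact tsum_congr fun j => by simp only [hF]; exact if_pos (Nat.le_add_left k j)
  have hasum : Summable (fun j : ℕ => C t (j + k) * D (j + k)) := by
    refine ((summable_nat_add_iff k).2 hFsummable).congr fun j => ?_
    simp only [hF]; exact if_pos (Nat.le_add_left k j)
  have hb₀mem : (if k = 0 then (1 : ℝ) else σ (k - 1)) ∈ Set.Icc (0 : ℝ) 1 := by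
    split
    · exact ⟨zero_le_one, le_rfl⟩
    · exact hσmem _
  -- telescoping identity
  have hTel : ∀ n : ℕ,
      t * ∫ l in σ (k + n)..(if k = 0 then 1 else σ (k - 1)), N l * (1 - l) ^ (t - 1)
        = ∑ j ∈ Finset.range (n + 1), C t (j + k) * D (j + k) := by
    intro n
    induction n with
    | zero =>
      rw [Finset.sum_range_one]
      simpa using hC_formula k
    | succ n ih =>
      have hadd := intervalIntegral.integral_add_adjacent_intervals
        (hfIntab (σ (k + n + 1)) (σ (k + n)) (hσmem _) (hσmem _))
        (hfIntab (σ (k + n)) (if k = 0 then 1 else σ (k - 1)) (hσmem _) hb₀mem)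
      have hpv := hC_formula (k + n + 1)
      have hup : (if k + n + 1 = 0 then (1 : ℝ) else σ (k + n + 1 - 1)) = σ (k + n) := by
        simp
      rw [hup] at hpv
      have hidx : n + 1 + k = k + n + 1 := by omega
      calc t * ∫ l in σ (k + (n + 1))..(if k = 0 then 1 else σ (k - 1)),
            N l * (1 - l) ^ (t - 1)
          = t * ((∫ l in σ (k + n + 1)..σ (k + n), N l * (1 - l) ^ (t - 1))
            + ∫ l in σ (k + n)..(if k = 0 then 1 else σ (k - 1)),
                N l * (1 - l) ^ (t - 1)) := by
            rw [show k + (n + 1) = k + n + 1 from rfl, ← hadd]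
        _ = C t (k + n + 1) * D (k + n + 1)
            + ∑ j ∈ Finset.range (n + 1), C t (j + k) * D (j + k) := by
            rw [mul_add, hpv, ih]
        _ = ∑ j ∈ Finset.range (n + 1 + 1), C t (j + k) * D (j + k) := by
            rw [show (∑ j ∈ Finset.range (n + 1 + 1), C t (j + k) * D (j + k))
              = (∑ j ∈ Finset.range (n + 1), C t (j + k) * D (j + k))
                + C t (n + 1 + k) * D (n + 1 + k) from Finset.sum_range_succ _ _, hidx]
            ring
  -- the tail integral tends to zero
  have hswap : ∀ a b : ℝ, 0 ≤ a → 0 ≤ b →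
      (∫ l in a..b, N l * (1 - l) ^ (t - 1)) = ∫ l in a..b, g l * (1 - l) ^ (t - 1) := by
    intro a b ha hb
    apply intervalIntegral.integral_congr_ae
    refine Filter.Eventually.of_forall fun l hl => ?_
    have h0 : 0 < l := lt_of_le_of_lt (le_min ha hb) hl.1
    rw [hNg l h0]
  have hTail : Filter.Tendsto (fun n : ℕ => ∫ l in (0 : ℝ)..σ (k + n),
      N l * (1 - l) ^ (t - 1)) Filter.atTop (nhds 0) := by
    have hgnn : ∀ n : ℕ, 0 ≤ ∫ l in (0 : ℝ)..σ (k + n), g l * (1 - l) ^ (t - 1) := by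
      intro n
      apply intervalIntegral.integral_nonneg (hσpos _).le
      intro u hu
      exact mul_nonneg (hg01 u).1 (Real.rpow_nonneg (by linarith [hu.2, hσle1 (k + n)]) _)
    have hub : ∀ n : ℕ, (∫ l in (0 : ℝ)..σ (k + n), g l * (1 - l) ^ (t - 1))
        ≤ (1 - S (k + n) ^ t) / t := by
      intro n
      have hfmint : IntervalIntegrable (fun l : ℝ => g l * (1 - l) ^ (t - 1)) volume 0
          (σ (k + n)) := by
        rw [intervalIntegrable_iff_integrableOn_Ioc_of_le (hσpos _).le]
        exact hfmInt.mono_set (Set.Ioc_subset_Ioc_right (hσle1 _))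
      have hmono' : (∫ l in (0 : ℝ)..σ (k + n), g l * (1 - l) ^ (t - 1))
          ≤ ∫ l in (0 : ℝ)..σ (k + n), (1 - l) ^ (t - 1) := by
        apply intervalIntegral.integral_mono_on (hσpos _).le hfmint (hbndInt 0 _)
        intro u hu
        have h1 : 0 ≤ (1 - u) ^ (t - 1) :=
          Real.rpow_nonneg (by linarith [hu.2, hσle1 (k + n)]) _
        exact mul_le_of_le_one_left h1 (hg01 u).2
      calc (∫ l in (0 : ℝ)..σ (k + n), g l * (1 - l) ^ (t - 1))
          ≤ ∫ l in (0 : ℝ)..σ (k + n), (1 - l) ^ (t - 1) := hmono'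
        _ = ((1 - 0) ^ t - (1 - σ (k + n)) ^ t) / t := hbase 0 _
        _ = (1 - S (k + n) ^ t) / t := by
            rw [sub_zero, Real.one_rpow, show 1 - σ (k + n) = S (k + n) by rw [hσS]; ring]
    have hlim : Filter.Tendsto (fun n : ℕ => (1 - S (k + n) ^ t) / t)
        Filter.atTop (nhds 0) := by
      have h1 : Filter.Tendsto (fun n : ℕ => S (k + n)) Filter.atTop (nhds 1) := by
        have h := hStend.comp (Filter.tendsto_add_atTop_nat k)
        convert h using 1
        funext n; simp [Nat.add_comm]
      have h2 := h1.rpow_const (p := t) (Or.inl one_ne_zero)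
      rw [Real.one_rpow] at h2
      have h3 := ((tendsto_const_nhds (x := (1 : ℝ))).sub h2).div_const t
      simpa using h3
    have heq : ∀ n : ℕ, (∫ l in (0 : ℝ)..σ (k + n), N l * (1 - l) ^ (t - 1))
        = ∫ l in (0 : ℝ)..σ (k + n), g l * (1 - l) ^ (t - 1) :=
      fun n => hswap _ _ le_rfl (hσpos _).le
    simp only [heq]
    exact tendsto_of_tendsto_of_tendsto_of_le_of_le tendsto_const_nhds hlim hgnn hub
  set T := ∫ l in (0 : ℝ)..(if k = 0 then 1 else σ (k - 1)), N l * (1 - l) ^ (t - 1) with hT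
  have hsplit : ∀ n : ℕ,
      (∫ l in σ (k + n)..(if k = 0 then 1 else σ (k - 1)), N l * (1 - l) ^ (t - 1))
        = T - ∫ l in (0 : ℝ)..σ (k + n), N l * (1 - l) ^ (t - 1) := by
    intro n
    have h := intervalIntegral.integral_add_adjacent_intervals
      (hfIntab 0 (σ (k + n)) ⟨le_rfl, zero_le_one⟩ (hσmem _))
      (hfIntab (σ (k + n)) (if k = 0 then 1 else σ (k - 1)) (hσmem _) hb₀mem)
    rw [hT]; linarith
  have hpartial : Filter.Tendsto
      (fun n : ℕ => ∑ j ∈ Finset.range (n + 1), C t (j + k) * D (j + k))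
      Filter.atTop (nhds (t * T)) := by
    have h1 : (fun n : ℕ => ∑ j ∈ Finset.range (n + 1), C t (j + k) * D (j + k))
        = fun n : ℕ => t * (T - ∫ l in (0 : ℝ)..σ (k + n), N l * (1 - l) ^ (t - 1)) := by
      funext n; rw [← hTel n, hsplit n]
    rw [h1]
    have h2 := ((tendsto_const_nhds (x := T)).sub hTail).const_mul t
    simpa using h2
  have h3 : Filter.Tendsto
      (fun n : ℕ => ∑ j ∈ Finset.range (n + 1), C t (j + k) * D (j + k))
      Filter.atTop (nhds (∑' j : ℕ, C t (j + k) * D (j + k))) :=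
    hasum.hasSum.tendsto_sum_nat.comp (Filter.tendsto_add_atTop_nat 1)
  have hfinal : (∑' j : ℕ, C t (j + k) * D (j + k)) = t * T :=
    tendsto_nhds_unique h3 hpartial
  rw [hμ2, hfinal]
end
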